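/- arXiv:math/0203235 — 5 statements merged into one kernel-verified Lean document; each statement's English description precedes it below -/
import Mathlib

section
/- Let I ⊆ R = K[X_1,…,X_n] be an ideal supported at the origin and > a monomial order. Then e(in_>(I)) ≥ e(I). -/
open Filter MvPolynomial
open scoped Pointwise

/-- An ideal of `K[X_1,…,X_n]` is supported at the origin if it contains a power
of the maximal ideal `(X_1,…,X_n)`. -/
def SupportedAtOrigin {K : Type*} [Field K] {n : ℕ}
    (a : Ideal (MvPolynomial (Fin n) K)) : Prop :=
  ∃ k : ℕ, (Ideal.span (Set.range (X : Fin n → MvPolynomial (Fin n) K))) ^ k ≤ a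

/-- The multiplicity `e(a) = limsup_k n!·dim_K(R/a^k)/k^n` of an ideal of
`K[X_1,…,X_n]` supported at the origin. -/
noncomputable def polyMult {K : Type*} [Field K] {n : ℕ}
    (a : Ideal (MvPolynomial (Fin n) K)) : ℝ :=
  limsup (fun k : ℕ =>
    (Nat.factorial n * Module.finrank K (MvPolynomial (Fin n) K ⧸ a ^ k) : ℝ) / (k : ℝ) ^ n) atTop

/-- The multiplicity `e(a_•) = limsup_m e(a_m)/m^n` of a sequence of ideals. -/
noncomputable def polyMultSeq {K : Type*} [Field K] {n : ℕ}
    (a : ℕ → Ideal (MvPolynomial (Fin n) K)) : ℝ :=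
  limsup (fun m : ℕ => polyMult (a m) / (m : ℝ) ^ n) atTop

/-- The volume `vol(a_•) = limsup_m n!·dim_K(R/a_m)/m^n` of a sequence of ideals. -/
noncomputable def polyVolSeq {K : Type*} [Field K] {n : ℕ}
    (a : ℕ → Ideal (MvPolynomial (Fin n) K)) : ℝ :=
  limsup (fun m : ℕ =>
    (Nat.factorial n * Module.finrank K (MvPolynomial (Fin n) K ⧸ a m) : ℝ) / (m : ℝ) ^ n) atTop

/-- A monomial ideal: an ideal generated by the monomials it contains. -/
def IsMonomialIdeal {K : Type*} [Field K] {n : ℕ}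
    (a : Ideal (MvPolynomial (Fin n) K)) : Prop :=
  a = Ideal.span ((fun v : Fin n →₀ ℕ => (monomial v (1 : K) : MvPolynomial (Fin n) K)) ''
        {v : Fin n →₀ ℕ | monomial v (1 : K) ∈ a})

/-- The Newton polyhedron of a (monomial) ideal: the convex hull in `ℝ^n` of the
exponents of the monomials lying in the ideal. -/
def newton {K : Type*} [Field K] {n : ℕ} (a : Ideal (MvPolynomial (Fin n) K)) :
    Set (Fin n → ℝ) :=
  convexHull ℝ ((fun v : Fin n →₀ ℕ => fun i => (v i : ℝ)) ''
    {v : Fin n →₀ ℕ | monomial v (1 : K) ∈ a})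

/-- The multiplier ideal `I(λ·a)` of a monomial ideal `a`: it is generated by the
monomials `X^u` with `u + e ∈ Int(λ·P_a)`, where `e = (1,…,1)`. -/
noncomputable def multiplierIdeal {K : Type*} [Field K] {n : ℕ} (lam : ℝ)
    (a : Ideal (MvPolynomial (Fin n) K)) : Ideal (MvPolynomial (Fin n) K) :=
  Ideal.span ((fun v : Fin n →₀ ℕ => (monomial v (1 : K) : MvPolynomial (Fin n) K)) ''
    {v : Fin n →₀ ℕ | (fun i => (v i : ℝ) + 1) ∈ interior (lam • newton a)})

/-- The asymptotic multiplier ideal `b_m = I(m·‖a_•‖)` of a graded sequence of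
monomial ideals: it is generated by the monomials `X^u` with
`u + e ∈ Int((m/p)·P_{a_p})` for some `p ≥ 1`. -/
noncomputable def asympMultiplierIdeal {K : Type*} [Field K] {n : ℕ}
    (a : ℕ → Ideal (MvPolynomial (Fin n) K)) (m : ℕ) : Ideal (MvPolynomial (Fin n) K) :=
  Ideal.span ((fun v : Fin n →₀ ℕ => (monomial v (1 : K) : MvPolynomial (Fin n) K)) ''
    {v : Fin n →₀ ℕ | ∃ p : ℕ, 1 ≤ p ∧
      (fun i => (v i : ℝ) + 1) ∈ interior (((m : ℝ) / (p : ℝ)) • newton (a p))})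

/-- The exponent of the leading monomial of `f` with respect to a monomial order. -/
noncomputable def leadExp {K : Type*} [Field K] {n : ℕ} (mo : MonomialOrder (Fin n))
    (f : MvPolynomial (Fin n) K) : Fin n →₀ ℕ :=
  mo.toSyn.symm (f.support.sup mo.toSyn)

/-- The initial ideal `in_>(a)`: the monomial ideal generated by the leading
monomials of the nonzero elements of `a`. -/
noncomputable def initialIdeal {K : Type*} [Field K] {n : ℕ} (mo : MonomialOrder (Fin n))
    (a : Ideal (MvPolynomial (Fin n) K)) : Ideal (MvPolynomial (Fin n) K) :=
  Ideal.span ((fun f : MvPolynomial (Fin n) K =>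
      (monomial (leadExp mo f) (1 : K) : MvPolynomial (Fin n) K)) ''
    {f : MvPolynomial (Fin n) K | f ∈ a ∧ f ≠ 0})


set_option maxHeartbeats 1600000
set_option synthInstance.maxHeartbeats 400000

namespace PolyMultAux

open Module

variable {K : Type*} [Field K] {n : ℕ} (mo : MonomialOrder (Fin n))

lemma leadExp_mem_support {f : MvPolynomial (Fin n) K} (hf : f ≠ 0) :
    leadExp mo f ∈ f.support := by
  obtain ⟨b, hb, he⟩ := Finset.exists_mem_eq_sup f.support
    (MvPolynomial.support_nonempty.mpr hf) mo.toSyn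
  rw [leadExp, he, AddEquiv.symm_apply_apply]
  exact hb

lemma coeff_leadExp_ne_zero {f : MvPolynomial (Fin n) K} (hf : f ≠ 0) :
    coeff (leadExp mo f) f ≠ 0 := MvPolynomial.mem_support_iff.mp (leadExp_mem_support mo hf)

lemma toSyn_le_leadExp {f : MvPolynomial (Fin n) K} {v : Fin n →₀ ℕ} (hv : v ∈ f.support) :
    mo.toSyn v ≤ mo.toSyn (leadExp mo f) := by
  rw [leadExp, AddEquiv.apply_symm_apply]
  exact Finset.le_sup hv

lemma leadExp_monomial {v : Fin n →₀ ℕ} {c : K} (hc : c ≠ 0) :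
    leadExp mo (monomial v c) = v := by
  classical
  rw [leadExp, support_monomial, if_neg hc, Finset.sup_singleton, AddEquiv.symm_apply_apply]

lemma leadExp_eq_of {f : MvPolynomial (Fin n) K} {v : Fin n →₀ ℕ}
    (h1 : v ∈ f.support) (h2 : ∀ w ∈ f.support, mo.toSyn w ≤ mo.toSyn v) :
    leadExp mo f = v := by
  have hf : f ≠ 0 := by rintro rfl; simp at h1
  have := h2 _ (leadExp_mem_support mo hf)
  have := toSyn_le_leadExp mo h1
  exact mo.toSyn.injective (le_antisymm ‹_› ‹_›)

lemma leadExp_mul {f g : MvPolynomial (Fin n) K} (hf : f ≠ 0) (hg : g ≠ 0) :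
    leadExp mo (f * g) = leadExp mo f + leadExp mo g := by
  set a := leadExp mo f
  set b := leadExp mo g
  have key : ∀ u v : Fin n →₀ ℕ, u ∈ f.support → v ∈ g.support → u + v = a + b →
      u = a ∧ v = b := by
    intro u v hu hv huv
    have h1 := toSyn_le_leadExp mo hu
    have h2 := toSyn_le_leadExp mo hv
    have hsum : mo.toSyn u + mo.toSyn v = mo.toSyn a + mo.toSyn b := by
      rw [← map_add, ← map_add, huv]
    have hu' : mo.toSyn u = mo.toSyn a := by
      by_contra h
      exact absurd hsum (ne_of_lt (add_lt_add_of_lt_of_le (lt_of_le_of_ne h1 h) h2))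
    constructor
    · exact mo.toSyn.injective hu'
    · exact mo.toSyn.injective (by
        have := hsum; rw [hu'] at this; exact add_left_cancel this)
  have hcoeff : coeff (a + b) (f * g) = coeff a f * coeff b g := by
    classical
    rw [coeff_mul]
    rw [Finset.sum_eq_single (a, b)]
    · intro p hp hne
      rw [Finset.HasAntidiagonal.mem_antidiagonal] at hp
      by_contra hcne
      have h1 : p.1 ∈ f.support := by
        rw [MvPolynomial.mem_support_iff]; intro h; apply hcne; rw [h, zero_mul]
      have h2 : p.2 ∈ g.support := by
        rw [MvPolynomial.mem_support_iff]; intro h; apply hcne; rw [h, mul_zero]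
      obtain ⟨e1, e2⟩ := key _ _ h1 h2 hp
      exact hne (Prod.ext e1 e2)
    · intro h
      rw [Finset.HasAntidiagonal.mem_antidiagonal] at h
      exact absurd rfl h
  have hne : coeff (a + b) (f * g) ≠ 0 := by
    rw [hcoeff]
    exact mul_ne_zero (coeff_leadExp_ne_zero mo hf) (coeff_leadExp_ne_zero mo hg)
  apply leadExp_eq_of mo (MvPolynomial.mem_support_iff.mpr hne)
  intro w hw
  classical
  have := support_mul f g hw
  rw [Finset.mem_add] at this
  obtain ⟨u, hu, v, hv, rfl⟩ := this
  rw [map_add, map_add]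
  exact add_le_add (toSyn_le_leadExp mo hu) (toSyn_le_leadExp mo hv)


lemma initialIdeal_eq_span (a : Ideal (MvPolynomial (Fin n) K)) :
    initialIdeal mo a = Ideal.span ((fun v => (monomial v (1:K) : MvPolynomial (Fin n) K)) ''
      (leadExp mo '' {f | f ∈ a ∧ f ≠ 0})) := by
  rw [initialIdeal, Set.image_image]

lemma mem_initialIdeal_monomial {a : Ideal (MvPolynomial (Fin n) K)}
    {f : MvPolynomial (Fin n) K} (hf : f ∈ a) (h0 : f ≠ 0) :
    monomial (leadExp mo f) (1:K) ∈ initialIdeal mo a :=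
  Ideal.subset_span ⟨f, ⟨hf, h0⟩, rfl⟩

lemma monomial_mem_of_le {J : Ideal (MvPolynomial (Fin n) K)} {s t : Fin n →₀ ℕ}
    (h : monomial s (1:K) ∈ J) (hst : s ≤ t) : monomial t (1:K) ∈ J := by
  have e : monomial t (1:K) = monomial (t-s) 1 * monomial s 1 := by
    rw [monomial_mul, one_mul, tsub_add_cancel_of_le hst]
  rw [e]; exact Ideal.mul_mem_left _ _ h

lemma initialIdeal_mul_le (a b : Ideal (MvPolynomial (Fin n) K)) :
    initialIdeal mo a * initialIdeal mo b ≤ initialIdeal mo (a * b) := by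
  rw [initialIdeal, initialIdeal, Ideal.span_mul_span', Ideal.span_le]
  rintro x hx
  rw [Set.mem_mul] at hx
  obtain ⟨y, ⟨f, ⟨hfa, hf0⟩, rfl⟩, z, ⟨g, ⟨hgb, hg0⟩, rfl⟩, rfl⟩ := hx
  have e : (monomial (leadExp mo f) (1:K)) * monomial (leadExp mo g) 1
      = monomial (leadExp mo (f*g)) 1 := by
    rw [monomial_mul, one_mul, leadExp_mul mo hf0 hg0]
  rw [e]
  exact mem_initialIdeal_monomial mo (Ideal.mul_mem_mul hfa hgb) (mul_ne_zero hf0 hg0)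

lemma initialIdeal_top : (1 : MvPolynomial (Fin n) K) ∈ initialIdeal mo ⊤ := by
  have h0 : (monomial 0 (1:K) : MvPolynomial (Fin n) K) = 1 := by simp
  have h1 : leadExp mo (1 : MvPolynomial (Fin n) K) = 0 := by
    rw [← h0, leadExp_monomial mo one_ne_zero]
  have := mem_initialIdeal_monomial mo (Submodule.mem_top (x := (1 : MvPolynomial (Fin n) K)))
    one_ne_zero
  rwa [h1, h0] at this

lemma initialIdeal_pow_le (a : Ideal (MvPolynomial (Fin n) K)) (k : ℕ) :
    (initialIdeal mo a) ^ k ≤ initialIdeal mo (a ^ k) := by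
  induction k with
  | zero =>
    simp only [pow_zero, Ideal.one_eq_top]
    exact le_of_eq ((Ideal.eq_top_iff_one _).mpr (initialIdeal_top mo)).symm
  | succ k ih =>
    rw [pow_succ, pow_succ]
    exact le_trans (Ideal.mul_mono ih le_rfl) (initialIdeal_mul_le mo _ _)

-- the maximal ideal powers
lemma monomial_mem_mpow {v : Fin n →₀ ℕ} {c : K} {k : ℕ} (h : k ≤ ∑ i, v i) :
    monomial v c ∈ (Ideal.span (Set.range (X : Fin n → MvPolynomial (Fin n) K))) ^ k := by
  have key : ∀ t : Finset (Fin n), (∏ i ∈ t, (X i : MvPolynomial (Fin n) K) ^ v i) ∈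
      (Ideal.span (Set.range (X : Fin n → MvPolynomial (Fin n) K))) ^ (∑ i ∈ t, v i) := by
    intro t
    induction t using Finset.induction with
    | empty => simp [Ideal.one_eq_top]
    | @insert j s hj ih =>
      rw [Finset.prod_insert hj, Finset.sum_insert hj, pow_add]
      exact Ideal.mul_mem_mul (Ideal.pow_mem_pow (Ideal.subset_span (Set.mem_range_self j)) _) ih
  have e : monomial v c = C c * ∏ i, (X i : MvPolynomial (Fin n) K) ^ v i := by
    rw [monomial_eq, Finsupp.prod_pow]
  rw [e]
  exact Ideal.mul_mem_left _ _ (Ideal.pow_le_pow_right h (key Finset.univ))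

lemma mpow_le_span (k : ℕ) :
    (Ideal.span (Set.range (X : Fin n → MvPolynomial (Fin n) K))) ^ k ≤
      Ideal.span ((fun v => (monomial v (1:K) : MvPolynomial (Fin n) K)) ''
        {v : Fin n →₀ ℕ | k ≤ ∑ i, v i}) := by
  induction k with
  | zero =>
    rw [pow_zero, Ideal.one_eq_top]
    have h1 : (1 : MvPolynomial (Fin n) K) ∈ Ideal.span ((fun v => (monomial v (1:K) :
        MvPolynomial (Fin n) K)) '' {v : Fin n →₀ ℕ | 0 ≤ ∑ i, v i}) :=
      Ideal.subset_span ⟨0, by simp, by simp⟩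
    exact le_of_eq ((Ideal.eq_top_iff_one _).mpr h1).symm
  | succ k ih =>
    rw [pow_succ]
    refine le_trans (Ideal.mul_mono ih le_rfl) ?_
    rw [Ideal.span_mul_span', Ideal.span_le]
    rintro x hx
    rw [Set.mem_mul] at hx
    obtain ⟨y, ⟨v, hv, rfl⟩, z, ⟨i, rfl⟩, rfl⟩ := hx
    have e : (monomial v (1:K) : MvPolynomial (Fin n) K) * X i
        = monomial (v + Finsupp.single i 1) 1 := by
      rw [show (X i : MvPolynomial (Fin n) K) = monomial (Finsupp.single i 1) 1 from rfl,
        monomial_mul, one_mul]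
    rw [e]
    refine Ideal.subset_span ⟨v + Finsupp.single i 1, ?_, rfl⟩
    have hs : ∑ j, (v + Finsupp.single i 1 : Fin n →₀ ℕ) j = (∑ j, v j) + 1 := by
      simp [Finsupp.add_apply, Finset.sum_add_distrib, Finsupp.single_apply]
    simp only [Set.mem_setOf_eq] at hv ⊢
    rw [hs]
    omega


-- helper: mk of smul
lemma mpow_le_initialIdeal {I : Ideal (MvPolynomial (Fin n) K)} {k : ℕ}
    (h : (Ideal.span (Set.range (X : Fin n → MvPolynomial (Fin n) K))) ^ k ≤ I) :
    (Ideal.span (Set.range (X : Fin n → MvPolynomial (Fin n) K))) ^ k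
      ≤ initialIdeal mo I := by
  refine le_trans (mpow_le_span k) (Ideal.span_le.mpr ?_)
  rintro x ⟨v, hv, rfl⟩
  have hmem : monomial v (1:K) ∈ I := h (monomial_mem_mpow hv)
  have h2 := mem_initialIdeal_monomial mo hmem (by
    rw [Ne, monomial_eq_zero]; exact one_ne_zero)
  rwa [leadExp_monomial mo one_ne_zero] at h2

lemma mk_smul (J : Ideal (MvPolynomial (Fin n) K)) (c : K) (g : MvPolynomial (Fin n) K) :
    Ideal.Quotient.mk J (c • g) = c • Ideal.Quotient.mk J g := by
  rw [← Ideal.Quotient.mkₐ_eq_mk (R₁ := K), map_smul]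

lemma mk_monomial_smul (J : Ideal (MvPolynomial (Fin n) K)) (c : K) (v : Fin n →₀ ℕ) :
    Ideal.Quotient.mk J (monomial v c) = c • Ideal.Quotient.mk J (monomial v (1:K)) := by
  rw [← mk_smul, smul_eq_C_mul, C_mul_monomial, mul_one]

/-- Division algorithm: residues of monomials outside the initial ideal span the quotient. -/
lemma mk_mem_span_basis (J : Ideal (MvPolynomial (Fin n) K)) (f : MvPolynomial (Fin n) K) :
    Ideal.Quotient.mk J f ∈ Submodule.span K
      ((fun v => (Ideal.Quotient.mk J (monomial v (1:K)))) ''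
        {v : Fin n →₀ ℕ | monomial v (1:K) ∉ initialIdeal mo J}) := by
  classical
  set S := ((fun v => (Ideal.Quotient.mk J (monomial v (1:K)))) ''
        {v : Fin n →₀ ℕ | monomial v (1:K) ∉ initialIdeal mo J}) with hS
  have main : ∀ d : mo.syn, ∀ f : MvPolynomial (Fin n) K, mo.toSyn (leadExp mo f) ≤ d →
      Ideal.Quotient.mk J f ∈ Submodule.span K S := by
    intro d
    induction d using WellFoundedLT.induction with
    | _ d IH =>
      intro f hfd
      by_cases hf0 : f = 0
      · rw [hf0, map_zero]; exact Submodule.zero_mem _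
      set v := leadExp mo f with hv
      set c := coeff v f with hc
      have hcne : c ≠ 0 := coeff_leadExp_ne_zero mo hf0
      by_cases hmem : monomial v (1:K) ∈ initialIdeal mo J
      · -- reduce by an element of J
        rw [initialIdeal_eq_span, mem_ideal_span_monomial_image] at hmem
        obtain ⟨s, hs, hsv⟩ := hmem v (by
          rw [support_monomial, if_neg (one_ne_zero)]; exact Finset.mem_singleton_self v)
        obtain ⟨g, ⟨hgJ, hg0⟩, rfl⟩ := hs
        set b := coeff (leadExp mo g) g with hb
        have hbne : b ≠ 0 := coeff_leadExp_ne_zero mo hg0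
        set h := monomial (v - leadExp mo g) (c * b⁻¹) * g with hh
        have hhJ : h ∈ J := Ideal.mul_mem_left _ _ hgJ
        have hvsum : v - leadExp mo g + leadExp mo g = v := tsub_add_cancel_of_le hsv
        have hcoeffh : coeff v h = c := by
          have h1 := coeff_monomial_mul (leadExp mo g) (v - leadExp mo g) (c * b⁻¹) g
          rw [hvsum] at h1
          rw [hh, h1, ← hb, mul_assoc, inv_mul_cancel₀ hbne, mul_one]
        have hsupph : ∀ w ∈ h.support, mo.toSyn w ≤ mo.toSyn v := by
          intro w hw
          have := support_mul _ _ hw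
          rw [Finset.mem_add] at this
          obtain ⟨u, hu, x, hx, rfl⟩ := this
          have hu' : u = v - leadExp mo g := by
            have := support_monomial_subset hu
            rwa [Finset.mem_singleton] at this
          subst hu'
          calc mo.toSyn (v - leadExp mo g + x)
              = mo.toSyn (v - leadExp mo g) + mo.toSyn x := map_add _ _ _
            _ ≤ mo.toSyn (v - leadExp mo g) + mo.toSyn (leadExp mo g) :=
                add_le_add (le_refl _) (toSyn_le_leadExp mo hx)
            _ = mo.toSyn v := by rw [← map_add, hvsum]
        set f' := f - h with hf'
        have hmkeq : Ideal.Quotient.mk J f = Ideal.Quotient.mk J f' := by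
          rw [hf', map_sub, Ideal.Quotient.eq_zero_iff_mem.mpr hhJ, sub_zero]
        by_cases hf'0 : f' = 0
        · rw [hmkeq, hf'0, map_zero]; exact Submodule.zero_mem _
        have hlt : mo.toSyn (leadExp mo f') < mo.toSyn v := by
          have hmem' := leadExp_mem_support mo hf'0
          set w := leadExp mo f' with hw
          have hwv : w ≠ v := by
            intro hwv
            have : coeff w f' ≠ 0 := coeff_leadExp_ne_zero mo hf'0
            rw [hf', coeff_sub, hwv, ← hc, hcoeffh, sub_self] at this
            exact this rfl
          have hle : mo.toSyn w ≤ mo.toSyn v := by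
            have : coeff w f' ≠ 0 := coeff_leadExp_ne_zero mo hf'0
            rw [hf', coeff_sub] at this
            by_cases hwf : w ∈ f.support
            · exact toSyn_le_leadExp mo hwf
            · have h1 : coeff w f = 0 := notMem_support_iff.mp hwf
              have h2 : coeff w h ≠ 0 := by
                intro h2; rw [h1, h2, sub_self] at this; exact this rfl
              exact hsupph w (MvPolynomial.mem_support_iff.mpr h2)
          exact lt_of_le_of_ne hle (fun hcon => hwv (mo.toSyn.injective hcon))
        rw [hmkeq]
        exact IH _ (lt_of_lt_of_le hlt hfd) f' le_rfl
      · -- v survives: subtract its monomial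
        set f' := f - monomial v c with hf'
        have hmkeq : Ideal.Quotient.mk J f =
            Ideal.Quotient.mk J f' + c • Ideal.Quotient.mk J (monomial v (1:K)) := by
          rw [hf', map_sub, mk_monomial_smul, sub_add_cancel]
        have hbase : c • Ideal.Quotient.mk J (monomial v (1:K)) ∈ Submodule.span K S :=
          Submodule.smul_mem _ _ (Submodule.subset_span ⟨v, hmem, rfl⟩)
        by_cases hf'0 : f' = 0
        · rw [hmkeq, hf'0, map_zero, zero_add]; exact hbase
        have hlt : mo.toSyn (leadExp mo f') < mo.toSyn v := by
          have hmem' := leadExp_mem_support mo hf'0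
          set w := leadExp mo f' with hw
          have hco : coeff w f' ≠ 0 := coeff_leadExp_ne_zero mo hf'0
          have hwv : w ≠ v := by
            intro hwv
            rw [hf', coeff_sub, hwv, coeff_monomial, if_pos rfl, ← hc, sub_self] at hco
            exact hco rfl
          have hwf : w ∈ f.support := by
            rw [hf', coeff_sub, coeff_monomial, if_neg (fun h => hwv h.symm), sub_zero] at hco
            exact MvPolynomial.mem_support_iff.mpr hco
          exact lt_of_le_of_ne (toSyn_le_leadExp mo hwf)
            (fun hcon => hwv (mo.toSyn.injective hcon))
        rw [hmkeq]
        exact Submodule.add_mem _ (IH _ (lt_of_lt_of_le hlt hfd) f' le_rfl) hbase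
  exact main _ f le_rfl


lemma span_small_monomials (J : Ideal (MvPolynomial (Fin n) K)) (m : ℕ)
    (hm : (Ideal.span (Set.range (X : Fin n → MvPolynomial (Fin n) K))) ^ m ≤ J)
    (w : Fin n →₀ ℕ) (hw : ∀ i, m ≤ w i) :
    Submodule.span K ((fun v => Ideal.Quotient.mk J (monomial v (1:K))) '' ↑(Finset.Iic w))
      = ⊤ := by
  rw [eq_top_iff]
  rintro x -
  obtain ⟨f, rfl⟩ := Ideal.Quotient.mk_surjective x
  rw [as_sum f, map_sum]
  apply Submodule.sum_mem
  intro v hv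
  by_cases hd : m ≤ ∑ i, v i
  · rw [Ideal.Quotient.eq_zero_iff_mem.mpr (hm (monomial_mem_mpow hd))]
    exact Submodule.zero_mem _
  · push_neg at hd
    have hvw : v ≤ w := by
      intro i
      have h1 : v i ≤ ∑ j, v j :=
        Finset.single_le_sum (fun j _ => Nat.zero_le (v j)) (Finset.mem_univ i)
      exact le_trans (le_of_lt (lt_of_le_of_lt h1 hd)) (hw i)
    rw [mk_monomial_smul]
    exact Submodule.smul_mem _ _ (Submodule.subset_span
      ⟨v, Finset.mem_coe.mpr (Finset.mem_Iic.mpr hvw), rfl⟩)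

lemma quot_finite (J : Ideal (MvPolynomial (Fin n) K)) (m : ℕ)
    (hm : (Ideal.span (Set.range (X : Fin n → MvPolynomial (Fin n) K))) ^ m ≤ J) :
    Module.Finite K (MvPolynomial (Fin n) K ⧸ J) := by
  classical
  set w : Fin n →₀ ℕ := Finsupp.equivFunOnFinite.symm (fun _ : Fin n => m) with hwdef
  have hw : ∀ i, m ≤ w i := fun i => le_of_eq rfl
  refine ⟨⟨(Finset.Iic w).image (fun v => Ideal.Quotient.mk J (monomial v (1:K))), ?_⟩⟩
  rw [Finset.coe_image]
  exact span_small_monomials J m hm w hw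

lemma finrank_le_of_span (J : Ideal (MvPolynomial (Fin n) K)) (s : Finset (Fin n →₀ ℕ))
    (h : Submodule.span K ((fun v => Ideal.Quotient.mk J (monomial v (1:K))) '' ↑s) = ⊤) :
    finrank K (MvPolynomial (Fin n) K ⧸ J) ≤ s.card := by
  classical
  have h2 : Set.finrank K ((↑(s.image (fun v => Ideal.Quotient.mk J (monomial v (1:K))))) :
      Set (MvPolynomial (Fin n) K ⧸ J)) ≤
      (s.image (fun v => Ideal.Quotient.mk J (monomial v (1:K)))).card :=
    finrank_span_finset_le_card _
  rw [Set.finrank, Finset.coe_image, h, finrank_top] at h2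
  exact le_trans h2 (Finset.card_image_le)

lemma card_Iic_le (m : ℕ) :
    (Finset.Iic (Finsupp.equivFunOnFinite.symm (fun _ : Fin n => m))).card ≤ (m+1)^n := by
  classical
  set w : Fin n →₀ ℕ := Finsupp.equivFunOnFinite.symm (fun _ : Fin n => m) with hwdef
  rw [Finsupp.card_Iic]
  have h1 : ∀ i ∈ w.support, (Finset.Iic (w i)).card = m + 1 := by
    intro i _
    rw [Nat.card_Iic]
    rfl
  rw [Finset.prod_congr rfl h1, Finset.prod_const]
  exact Nat.pow_le_pow_right (Nat.succ_le_succ (Nat.zero_le m))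
    (le_trans (Finset.card_le_univ _) (by simp))

lemma finrank_quot_le_pow (J : Ideal (MvPolynomial (Fin n) K)) (m : ℕ)
    (hm : (Ideal.span (Set.range (X : Fin n → MvPolynomial (Fin n) K))) ^ m ≤ J) :
    finrank K (MvPolynomial (Fin n) K ⧸ J) ≤ (m+1)^n := by
  classical
  set w : Fin n →₀ ℕ := Finsupp.equivFunOnFinite.symm (fun _ : Fin n => m) with hwdef
  exact le_trans (finrank_le_of_span J (Finset.Iic w)
    (span_small_monomials J m hm w (fun i => le_of_eq rfl))) (card_Iic_le m)

lemma finrank_le_finrank_initialIdeal (J : Ideal (MvPolynomial (Fin n) K)) (m : ℕ)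
    (hm : (Ideal.span (Set.range (X : Fin n → MvPolynomial (Fin n) K))) ^ m
      ≤ initialIdeal mo J) :
    finrank K (MvPolynomial (Fin n) K ⧸ J)
      ≤ finrank K (MvPolynomial (Fin n) K ⧸ initialIdeal mo J) := by
  classical
  set N := initialIdeal mo J with hN
  set w : Fin n →₀ ℕ := Finsupp.equivFunOnFinite.symm (fun _ : Fin n => m) with hwdef
  set Bf : Finset (Fin n →₀ ℕ) := (Finset.Iic w).filter (fun v => monomial v (1:K) ∉ N)
    with hBf
  have hBset : {v : Fin n →₀ ℕ | monomial v (1:K) ∉ N} = ↑Bf := by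
    ext v
    simp only [Set.mem_setOf_eq, hBf, Finset.coe_filter, Finset.mem_Iic]
    constructor
    · intro hvN
      refine ⟨?_, hvN⟩
      by_contra hvw
      apply hvN
      have : ∃ i, m < v i := by
        by_contra hall
        push_neg at hall
        exact hvw (fun i => le_trans (hall i) (le_of_eq rfl))
      obtain ⟨i, hi⟩ := this
      have hsum : m ≤ ∑ j, v j :=
        le_trans (le_of_lt hi) (Finset.single_le_sum (fun j _ => Nat.zero_le (v j))
          (Finset.mem_univ i))
      exact hm (monomial_mem_mpow hsum)
    · exact fun h => h.2
  have h1 : finrank K (MvPolynomial (Fin n) K ⧸ J) ≤ Bf.card := by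
    apply finrank_le_of_span
    rw [eq_top_iff]
    rintro x -
    obtain ⟨f, rfl⟩ := Ideal.Quotient.mk_surjective x
    have h3 := mk_mem_span_basis mo J f
    rwa [← hN, hBset] at h3
  have hfin : Module.Finite K (MvPolynomial (Fin n) K ⧸ N) := quot_finite N m hm
  have h2 : Bf.card ≤ finrank K (MvPolynomial (Fin n) K ⧸ N) := by
    have hli : LinearIndependent K
        (fun v : ↥Bf => Ideal.Quotient.mk N (monomial (v : Fin n →₀ ℕ) (1:K))) := by
      rw [Fintype.linearIndependent_iff]
      intro c hc i
      set f := ∑ j : ↥Bf, c j • (monomial (j : Fin n →₀ ℕ) (1:K) : MvPolynomial (Fin n) K)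
        with hfdef
      have hfN : f ∈ N := by
        rw [← Ideal.Quotient.eq_zero_iff_mem, hfdef, map_sum]
        simp_rw [mk_smul]
        exact hc
      have hcoeff : coeff (i : Fin n →₀ ℕ) f = c i := by
        rw [hfdef, coeff_sum]
        rw [Finset.sum_eq_single i]
        · rw [coeff_smul, coeff_monomial, if_pos rfl, smul_eq_mul, mul_one]
        · intro j _ hji
          rw [coeff_smul, coeff_monomial, if_neg (fun h => hji (Subtype.ext h)),
            smul_eq_mul, mul_zero]
        · intro h; exact absurd (Finset.mem_univ i) h
      by_contra hci
      have hisupp : (i : Fin n →₀ ℕ) ∈ f.support :=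
        MvPolynomial.mem_support_iff.mpr (by rw [hcoeff]; exact hci)
      rw [hN, initialIdeal_eq_span, mem_ideal_span_monomial_image] at hfN
      obtain ⟨s, hs, hsi⟩ := hfN _ hisupp
      obtain ⟨g, hg, rfl⟩ := hs
      have hmono : monomial (i : Fin n →₀ ℕ) (1:K) ∈ N :=
        monomial_mem_of_le (mem_initialIdeal_monomial mo hg.1 hg.2) hsi
      exact (Finset.mem_filter.mp i.2).2 hmono
    have h4 := hli.fintype_card_le_finrank
    rwa [Fintype.card_coe] at h4
  exact le_trans h1 h2

lemma finrank_quot_mono (p q : Ideal (MvPolynomial (Fin n) K)) (h : p ≤ q)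
    (hfin : Module.Finite K (MvPolynomial (Fin n) K ⧸ p)) :
    finrank K (MvPolynomial (Fin n) K ⧸ q) ≤ finrank K (MvPolynomial (Fin n) K ⧸ p) := by
  let φ : (MvPolynomial (Fin n) K ⧸ p) →ₐ[K] (MvPolynomial (Fin n) K ⧸ q) :=
    Ideal.Quotient.liftₐ p (Ideal.Quotient.mkₐ K q)
      (fun a ha => by
        rw [Ideal.Quotient.mkₐ_eq_mk, Ideal.Quotient.eq_zero_iff_mem]; exact h ha)
  have hsurj : Function.Surjective φ := by
    intro y
    obtain ⟨r, rfl⟩ := Ideal.Quotient.mk_surjective y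
    exact ⟨Ideal.Quotient.mk p r, by
      simp [φ, Ideal.Quotient.liftₐ_apply, Ideal.Quotient.lift_mk, Ideal.Quotient.mkₐ_eq_mk]; rfl⟩
  have h2 := φ.toLinearMap.finrank_range_le
  rwa [LinearMap.range_eq_top.mpr (by exact hsurj), finrank_top] at h2


end PolyMultAux

open PolyMultAux Module

/-- For an ideal `I ⊆ K[X_1,…,X_n]` supported at the origin and a monomial
order `>`, one has `e(in_>(I)) ≥ e(I)`. -/
theorem polyMult_le_polyMult_initialIdeal
    {K : Type*} [Field K] {n : ℕ} (hn : 1 ≤ n)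
    (mo : MonomialOrder (Fin n))
    (I : Ideal (MvPolynomial (Fin n) K))
    (hsupp : SupportedAtOrigin I) :
    polyMult I ≤ polyMult (initialIdeal mo I) := by
  classical

  obtain ⟨k0, hk0⟩ := hsupp
  have hNk : ∀ k : ℕ, (Ideal.span (Set.range (X : Fin n → MvPolynomial (Fin n) K))) ^ (k0*k)
      ≤ (initialIdeal mo I) ^ k := fun k => by
    rw [pow_mul]
    exact Ideal.pow_right_mono (mpow_le_initialIdeal mo hk0) k
  have key : ∀ k : ℕ,
      finrank K (MvPolynomial (Fin n) K ⧸ I ^ k)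
        ≤ finrank K (MvPolynomial (Fin n) K ⧸ (initialIdeal mo I) ^ k) := by
    intro k
    have hIk : (Ideal.span (Set.range (X : Fin n → MvPolynomial (Fin n) K))) ^ (k0*k)
        ≤ I ^ k := by
      rw [pow_mul]
      exact Ideal.pow_right_mono hk0 k
    have r1 := finrank_le_finrank_initialIdeal mo (I^k) (k0*k) (mpow_le_initialIdeal mo hIk)
    have r2 := finrank_quot_mono ((initialIdeal mo I)^k) (initialIdeal mo (I^k))
      (initialIdeal_pow_le mo I k) (quot_finite _ _ (hNk k))
    exact le_trans r1 r2
  set g : ℕ → ℝ := fun k =>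
    (Nat.factorial n * finrank K (MvPolynomial (Fin n) K ⧸ (initialIdeal mo I) ^ k) : ℝ)
      / (k : ℝ) ^ n with hg
  set f : ℕ → ℝ := fun k =>
    (Nat.factorial n * finrank K (MvPolynomial (Fin n) K ⧸ I ^ k) : ℝ) / (k : ℝ) ^ n with hf
  have hfnonneg : ∀ k, 0 ≤ f k := fun k => by
    apply div_nonneg
    · positivity
    · positivity
  have hle : ∀ k, f k ≤ g k := fun k => by
    rw [hf, hg]
    simp only
    rw [div_eq_mul_inv, div_eq_mul_inv]
    apply mul_le_mul_of_nonneg_right ?_ (by positivity)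
    apply mul_le_mul_of_nonneg_left ?_ (by positivity)
    exact_mod_cast key k
  have hbdd : ∀ k, g k ≤ (Nat.factorial n : ℝ) * ((k0:ℝ)+1)^n := fun k => by
    rcases Nat.eq_zero_or_pos k with rfl | hk1
    · simp only [hg]
      rw [Nat.cast_zero, zero_pow (by omega : n ≠ 0), div_zero]
      positivity
    · have hkR : (1:ℝ) ≤ (k:ℝ) := by exact_mod_cast hk1
      have hb := finrank_quot_le_pow _ _ (hNk k)
      have hb' : (finrank K (MvPolynomial (Fin n) K ⧸ (initialIdeal mo I) ^ k) : ℝ)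
          ≤ ((k0*k+1 : ℕ) : ℝ)^n := by
        exact_mod_cast hb
      have step2 : ((k0*k+1 : ℕ) : ℝ) ≤ ((k0:ℝ)+1) * (k:ℝ) := by
        push_cast
        nlinarith
      have step3 : ((k0*k+1 : ℕ) : ℝ)^n ≤ (((k0:ℝ)+1) * (k:ℝ))^n :=
        pow_le_pow_left₀ (by positivity) step2 n
      have hkpow : (0:ℝ) < (k:ℝ)^n := by positivity
      rw [hg]
      rw [div_le_iff₀ hkpow]
      calc (Nat.factorial n : ℝ) *
            (finrank K (MvPolynomial (Fin n) K ⧸ (initialIdeal mo I) ^ k) : ℝ)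
          ≤ (Nat.factorial n : ℝ) * ((((k0:ℝ)+1) * (k:ℝ))^n) := by
            apply mul_le_mul_of_nonneg_left (le_trans hb' step3) (by positivity)
        _ = (Nat.factorial n : ℝ) * ((k0:ℝ)+1)^n * (k:ℝ)^n := by rw [mul_pow]; ring
  refine Filter.limsup_le_limsup (Filter.Eventually.of_forall hle) ?_ ?_
  · have h1 : Filter.IsBoundedUnder (· ≥ ·) Filter.atTop f :=
      Filter.isBoundedUnder_of ⟨0, fun k => hfnonneg k⟩
    exact h1.isCoboundedUnder_le
  · exact Filter.isBoundedUnder_of ⟨(Nat.factorial n : ℝ) * ((k0:ℝ)+1)^n, fun k => hbdd k⟩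
end

section
/- Let a_• be a graded sequence of zero-dimensional ideals in R and let b_• be a reverse-graded sequence of zero-dimensional ideals dominating a_•. Then e(b_•) ≤ vol(b_•) ≤ vol(a_•) ≤ e(a_•). -/
open Filter IsLocalRing

/-- The length of the `R`-module `R ⧸ I` (the longest chain of submodules),
as a natural number. -/
noncomputable def colength (R : Type*) [CommRing R] (I : Ideal R) : ℕ :=
  ((Order.krullDim (Submodule R (R ⧸ I))).unbotD 0).toNat

/-- The multiplicity `e(I) = limsup_k n!·length(R/I^k)/k^n` of a zero-dimensional
ideal `I` in an `n`-dimensional ring. -/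
noncomputable def mult (R : Type*) [CommRing R] (n : ℕ) (I : Ideal R) : ℝ :=
  limsup (fun k : ℕ => (Nat.factorial n * colength R (I ^ k) : ℝ) / (k : ℝ) ^ n) atTop

/-- The volume `vol(a_•) = limsup_m n!·length(R/a_m)/m^n` of a graded sequence. -/
noncomputable def volSeq (R : Type*) [CommRing R] (n : ℕ) (a : ℕ → Ideal R) : ℝ :=
  limsup (fun m : ℕ => (Nat.factorial n * colength R (a m) : ℝ) / (m : ℝ) ^ n) atTop

/-- The multiplicity `e(a_•) = limsup_m e(a_m)/m^n` of a graded sequence. -/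
noncomputable def multSeq (R : Type*) [CommRing R] (n : ℕ) (a : ℕ → Ideal R) : ℝ :=
  limsup (fun m : ℕ => mult R n (a m) / (m : ℝ) ^ n) atTop

section OrderLemmas

variable {α β : Type*} [Preorder α] [Preorder β]

private lemma height_add_one_le_of_lt {x y : α} (h : x < y) :
    Order.height x + 1 ≤ Order.height y := by
  rcases eq_or_ne (Order.height x) ⊤ with hx | hx
  · have : Order.height y = ⊤ := top_le_iff.mp (hx ▸ Order.height_mono h.le)
    simp [this]
  · rw [ENat.add_one_le_iff hx]
    exact Order.height_strictMono h (lt_top_iff_ne_top.mpr hx)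

private lemma length_le_height_prod (p : LTSeries (α × β)) :
    (p.length : ℕ∞) ≤ Order.height p.last.1 + Order.height p.last.2 := by
  suffices H : ∀ (L : ℕ) (p : LTSeries (α × β)), p.length = L →
      (p.length : ℕ∞) ≤ Order.height p.last.1 + Order.height p.last.2 from H p.length p rfl
  intro L
  induction L with
  | zero => intro p hL; simp [hL]
  | succ L ih =>
    intro p hL
    have hq : p.eraseLast.length = L := by simp [hL]
    have hlt : p.eraseLast.last < p.last := p.eraseLast_last_rel_last (by omega)
    have IH := ih p.eraseLast hq
    rw [hq] at IH
    have : (L : ℕ∞) + 1 ≤ Order.height p.last.1 + Order.height p.last.2 := by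
      rcases Prod.lt_iff.mp hlt with ⟨h1, h2⟩ | ⟨h1, h2⟩
      · calc (L : ℕ∞) + 1 ≤ (Order.height p.eraseLast.last.1 +
              Order.height p.eraseLast.last.2) + 1 := by gcongr
          _ = (Order.height p.eraseLast.last.1 + 1) + Order.height p.eraseLast.last.2 := by
              rw [add_right_comm]
          _ ≤ Order.height p.last.1 + Order.height p.last.2 :=
              add_le_add (height_add_one_le_of_lt h1) (Order.height_mono h2)
      · calc (L : ℕ∞) + 1 ≤ (Order.height p.eraseLast.last.1 +
              Order.height p.eraseLast.last.2) + 1 := by gcongr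
          _ = Order.height p.eraseLast.last.1 + (Order.height p.eraseLast.last.2 + 1) := by
              rw [add_assoc]
          _ ≤ Order.height p.last.1 + Order.height p.last.2 :=
              add_le_add (Order.height_mono h1) (height_add_one_le_of_lt h2)
    simpa [hL] using this

private lemma height_prod_le (x : α × β) :
    Order.height x ≤ Order.height x.1 + Order.height x.2 := by
  apply Order.height_le
  intro p hp
  simpa [hp] using length_le_height_prod p

private lemma height_le_height_of_strictMono (f : α → β) (hf : StrictMono f) (x : α) :
    Order.height x ≤ Order.height (f x) := by
  apply Order.height_le
  intro p hp
  simpa [hp] using Order.length_le_height_last (p := p.map f hf)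

end OrderLemmas

section MyLen

variable (R : Type*) [CommRing R]

/-- length of a module, as the height of `⊤` in its submodule lattice -/
private noncomputable def mylen (M : Type*) [AddCommGroup M] [Module R M] : ℕ∞ :=
  Order.height (⊤ : Submodule R M)

variable {R}
variable {M M₂ : Type*} [AddCommGroup M] [Module R M] [AddCommGroup M₂] [Module R M₂]

private lemma length_le_mylen (p : LTSeries (Submodule R M)) :
    (p.length : ℕ∞) ≤ mylen R M :=
  Order.length_le_height (le_top)

private lemma mylen_le_of_strictMono (g : Submodule R M₂ → Submodule R M)
    (hg : StrictMono g) : mylen R M₂ ≤ mylen R M := by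
  apply Order.height_le
  intro p _
  simpa using length_le_mylen (p.map g hg)

private lemma mylen_le_of_surjective (f : M →ₗ[R] M₂) (hf : Function.Surjective f) :
    mylen R M₂ ≤ mylen R M :=
  mylen_le_of_strictMono (Submodule.comap f)
    (Monotone.strictMono_of_injective (fun _ _ h => Submodule.comap_mono h)
      (Submodule.comap_injective_of_surjective hf))

private lemma mylen_le_of_injective (f : M →ₗ[R] M₂) (hf : Function.Injective f) :
    mylen R M ≤ mylen R M₂ :=
  mylen_le_of_strictMono (Submodule.map f)
    (Monotone.strictMono_of_injective (fun _ _ h => Submodule.map_mono h)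
      (Submodule.map_injective_of_injective hf))

private lemma mylen_congr (e : M ≃ₗ[R] M₂) : mylen R M = mylen R M₂ :=
  le_antisymm (mylen_le_of_injective e.toLinearMap e.injective)
    (mylen_le_of_surjective e.toLinearMap e.surjective)

private lemma mylen_subadd (N : Submodule R M) :
    mylen R M ≤ mylen R N + mylen R (M ⧸ N) := by
  apply Order.height_le
  intro p _
  set g : Submodule R M → {q : Submodule R M // q ≤ N} × {q : Submodule R M // N ≤ q} :=
    fun W => (⟨W ⊓ N, inf_le_right⟩, ⟨W ⊔ N, le_sup_right⟩) with hgdef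
  have hg : StrictMono g := by
    intro W W' hWW'
    have := strictMono_inf_prod_sup (z := N) hWW'
    rcases Prod.lt_iff.mp this with ⟨h1, h2⟩ | ⟨h1, h2⟩
    · exact Prod.lt_iff.mpr (Or.inl ⟨Subtype.mk_lt_mk.mpr h1, Subtype.mk_le_mk.mpr h2⟩)
    · exact Prod.lt_iff.mpr (Or.inr ⟨Subtype.mk_le_mk.mpr h1, Subtype.mk_lt_mk.mpr h2⟩)
  have hlen : (p.length : ℕ∞) ≤ Order.height (g p.last).1 + Order.height (g p.last).2 := by
    have h1 := Order.length_le_height_last (p := p.map g hg)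
    have h2 := height_prod_le (g p.last)
    simpa using h1.trans h2
  have hA : Order.height (g p.last).1 ≤ mylen R N := by
    calc Order.height (g p.last).1
        ≤ Order.height ((Submodule.MapSubtype.orderIso N).symm (g p.last).1) :=
          height_le_height_of_strictMono _ (Submodule.MapSubtype.orderIso N).symm.strictMono _
      _ ≤ mylen R N := Order.height_mono le_top
  have hB : Order.height (g p.last).2 ≤ mylen R (M ⧸ N) := by
    calc Order.height (g p.last).2
        ≤ Order.height ((Submodule.comapMkQRelIso N).symm (g p.last).2) :=
          height_le_height_of_strictMono _ (Submodule.comapMkQRelIso N).symm.strictMono _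
      _ ≤ mylen R (M ⧸ N) := Order.height_mono le_top
  exact hlen.trans (add_le_add hA hB)

private lemma mylen_le_one (h : ∀ W : Submodule R M, W = ⊥ ∨ W = ⊤) :
    mylen R M ≤ 1 := by
  apply Order.height_le
  intro p _
  suffices h2 : p.length ≤ 1 by exact_mod_cast h2
  by_contra hc
  push_neg at hc
  have l0 := p.strictMono (show (⟨0, by omega⟩ : Fin (p.length + 1)) < ⟨1, by omega⟩ from
    Fin.mk_lt_mk.mpr (by omega))
  have l1 := p.strictMono (show (⟨1, by omega⟩ : Fin (p.length + 1)) < ⟨2, by omega⟩ from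
    Fin.mk_lt_mk.mpr (by omega))
  rcases h (p ⟨1, by omega⟩) with h' | h'
  · rw [h'] at l0; exact not_lt_bot l0
  · rw [h'] at l1; exact absurd l1 (not_top_lt)

private lemma mylen_subsingleton (h : Subsingleton M) : mylen R M ≤ 0 := by
  haveI : Subsingleton (Submodule R M) := by
    constructor
    intro a b
    ext x
    rw [Subsingleton.elim x 0]
    simp
  apply Order.height_le
  intro p _
  suffices h2 : p.length ≤ 0 by exact_mod_cast h2
  by_contra hc
  have hlt := p.strictMono (show (⟨0, by omega⟩ : Fin (p.length + 1)) < ⟨1, by omega⟩ from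
    Fin.mk_lt_mk.mpr (by omega))
  exact hlt.ne (Subsingleton.elim _ _)

end MyLen
section Gen

variable {R : Type u_r} [CommRing R] [IsLocalRing R]

private lemma simple_of_cyclic_killed {M : Type u_m} [AddCommGroup M] [Module R M]
    (x : M) (hspan : Submodule.span R {x} = ⊤)
    (hk : ∀ r ∈ maximalIdeal R, ∀ y : M, r • y = 0) (W : Submodule R M) :
    W = ⊥ ∨ W = ⊤ := by
  rcases eq_or_ne W ⊥ with h | h
  · exact Or.inl h
  right
  obtain ⟨w, hwW, hw0⟩ := Submodule.exists_mem_ne_zero_of_ne_bot h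
  have hw : w ∈ Submodule.span R {x} := hspan ▸ Submodule.mem_top
  obtain ⟨r, rfl⟩ := Submodule.mem_span_singleton.mp hw
  have hr : r ∉ maximalIdeal R := fun hr => hw0 (hk r hr x)
  have hu : IsUnit r := by
    by_contra hu
    exact hr ((IsLocalRing.mem_maximalIdeal r).mpr hu)
  obtain ⟨u, rfl⟩ := hu
  have hx : x ∈ W := by
    have := W.smul_mem (↑u⁻¹ : R) hwW
    rwa [smul_smul, Units.inv_mul, one_smul] at this
  rw [eq_top_iff, ← hspan, Submodule.span_le, Set.singleton_subset_iff]
  exact hx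

private lemma mylen_le_card_span_aux : ∀ (d : ℕ) (M : Type u_m) [AddCommGroup M] [Module R M]
    (s : Finset M), s.card = d → Submodule.span R (s : Set M) = ⊤ →
    (∀ r ∈ maximalIdeal R, ∀ y : M, r • y = 0) → mylen R M ≤ d := by
  intro d
  induction d with
  | zero =>
    intro M _ _ s hcard hspan hk
    have hs : s = ∅ := Finset.card_eq_zero.mp hcard
    rw [hs] at hspan
    simp only [Finset.coe_empty, Submodule.span_empty] at hspan
    haveI : Subsingleton M := by
      constructor
      intro a b
      have ha : a ∈ (⊥ : Submodule R M) := hspan ▸ Submodule.mem_top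
      have hb : b ∈ (⊥ : Submodule R M) := hspan ▸ Submodule.mem_top
      simp only [Submodule.mem_bot] at ha hb
      rw [ha, hb]
    simpa using mylen_subsingleton ‹Subsingleton M›
  | succ d ih =>
    intro M _ _ s hcard hspan hk
    classical
    have hne : s.Nonempty := Finset.card_pos.mp (by omega)
    obtain ⟨x, hx⟩ := hne
    set t := s.erase x with ht
    have htcard : t.card = d := by rw [ht, Finset.card_erase_of_mem hx, hcard]; rfl
    set N := Submodule.span R (t : Set M) with hN
    -- length of N
    have hNlen : mylen R N ≤ d := by
      set t' : Finset N := t.attach.image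
        (fun y => (⟨y.1, Submodule.subset_span y.2⟩ : N)) with ht'
      have ht'card : t'.card = d := by
        rw [ht', Finset.card_image_of_injective _ (fun a b hab => Subtype.ext (by
          simpa using congrArg Subtype.val hab)), Finset.card_attach, htcard]
      have hval : (N.subtype : N → M) '' (t' : Set N) = (t : Set M) := by
        ext y
        constructor
        · rintro ⟨⟨z, hz⟩, hmem, rfl⟩
          simp only [ht', Finset.coe_image, Set.mem_image, Finset.mem_coe,
            Finset.mem_attach] at hmem
          obtain ⟨⟨w, hw⟩, _, h⟩ := hmem
          have : w = z := congrArg Subtype.val h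
          show z ∈ (t : Set M)
          rw [← this]; exact hw
        · intro hy
          exact ⟨⟨y, Submodule.subset_span hy⟩, by
            simp only [ht', Finset.coe_image, Set.mem_image, Finset.mem_coe,
              Finset.mem_attach]
            exact ⟨⟨y, hy⟩, trivial, rfl⟩, rfl⟩
      have hspan' : Submodule.span R (t' : Set N) = ⊤ := by
        apply Submodule.map_injective_of_injective N.injective_subtype
        rw [← Submodule.span_image, hval, Submodule.map_top, Submodule.range_subtype]
      have hk' : ∀ r ∈ maximalIdeal R, ∀ y : N, r • y = 0 := by
        intro r hr y
        exact Subtype.ext (by simpa using hk r hr y.1)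
      have := ih N t' ht'card hspan' hk'
      exact this
    -- length of M ⧸ N
    have hQlen : mylen R (M ⧸ N) ≤ 1 := by
      apply mylen_le_one
      apply simple_of_cyclic_killed (N.mkQ x)
      · rw [eq_top_iff]
        intro y _
        obtain ⟨z, rfl⟩ := N.mkQ_surjective y
        have hz : z ∈ Submodule.span R (s : Set M) := hspan ▸ Submodule.mem_top
        have hsub : (s : Set M) ⊆ (N : Set M) ∪ {x} := by
          intro w hw
          rcases eq_or_ne w x with rfl | hwx
          · exact Or.inr rfl
          · exact Or.inl (Submodule.subset_span (Finset.mem_erase.mpr ⟨hwx, hw⟩))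
        have hz2 : z ∈ Submodule.span R ((N : Set M) ∪ {x}) :=
          Submodule.span_mono hsub hz
        rw [Submodule.span_union, Submodule.span_eq] at hz2
        obtain ⟨u, hu, v, hv, rfl⟩ := Submodule.mem_sup.mp hz2
        obtain ⟨r, rfl⟩ := Submodule.mem_span_singleton.mp hv
        have hu0 : N.mkQ u = 0 := by
          rw [Submodule.mkQ_apply]
          exact (Submodule.Quotient.mk_eq_zero N).mpr hu
        have : N.mkQ (u + r • x) = r • N.mkQ x := by
          rw [map_add, hu0, map_smul, zero_add]
        rw [this]
        exact Submodule.smul_mem _ _ (Submodule.mem_span_singleton_self _)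
      · intro r hr y
        obtain ⟨z, rfl⟩ := N.mkQ_surjective y
        rw [← map_smul, hk r hr z, map_zero]
    calc mylen R M ≤ mylen R N + mylen R (M ⧸ N) := mylen_subadd N
      _ ≤ (d : ℕ∞) + 1 := add_le_add hNlen hQlen
      _ = ((d + 1 : ℕ) : ℕ∞) := by push_cast; ring

/-- key: a submodule spanned by a finset `s` and killed by the maximal ideal has
length at most `s.card` -/
private lemma mylen_submodule_le {M : Type u_m} [AddCommGroup M] [Module R M]
    (N : Submodule R M) (s : Finset M) (hs : Submodule.span R (s : Set M) = N)
    (hk : ∀ r ∈ maximalIdeal R, ∀ y ∈ N, r • y = (0 : M)) :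
    mylen R N ≤ s.card := by
  classical
  have hsub : ∀ y ∈ s, y ∈ N := fun y hy => hs ▸ Submodule.subset_span hy
  set s' : Finset N := s.attach.image (fun y => (⟨y.1, hsub y.1 y.2⟩ : N)) with hs'
  have hcard : s'.card ≤ s.card := le_trans (Finset.card_image_le) (by rw [Finset.card_attach])
  have hval : (N.subtype : N → M) '' (s' : Set N) = (s : Set M) := by
    ext y
    constructor
    · rintro ⟨⟨z, hz⟩, hmem, rfl⟩
      simp only [hs', Finset.coe_image, Set.mem_image, Finset.mem_coe,
        Finset.mem_attach] at hmem
      obtain ⟨⟨w, hw⟩, _, h⟩ := hmem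
      have : w = z := congrArg Subtype.val h
      show z ∈ (s : Set M)
      rw [← this]; exact hw
    · intro hy
      exact ⟨⟨y, hsub y hy⟩, by
        simp only [hs', Finset.coe_image, Set.mem_image, Finset.mem_coe, Finset.mem_attach]
        exact ⟨⟨y, hy⟩, trivial, rfl⟩, rfl⟩
  have hspan' : Submodule.span R (s' : Set N) = ⊤ := by
    apply Submodule.map_injective_of_injective N.injective_subtype
    rw [← Submodule.span_image, hval, Submodule.map_top, Submodule.range_subtype, hs]
  have hk' : ∀ r ∈ maximalIdeal R, ∀ y : N, r • y = 0 := by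
    intro r hr y
    exact Subtype.ext (by simpa using hk r hr y.1 y.2)
  calc mylen R N ≤ (s'.card : ℕ∞) := mylen_le_card_span_aux s'.card N s' rfl hspan' hk'
    _ ≤ (s.card : ℕ∞) := by exact_mod_cast hcard

end Gen
section Monomials

open scoped Pointwise

variable {R : Type u_r} [CommRing R]

private lemma prod_pow_mem_pow (I : Ideal R) {ι : Type*} (t : Finset ι) (f : ι → R)
    (e : ι → ℕ) (h : ∀ x ∈ t, f x ∈ I) :
    (∏ x ∈ t, f x ^ e x) ∈ I ^ (∑ x ∈ t, e x) := by
  classical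
  induction t using Finset.induction with
  | empty => simp
  | @insert x t' hx ih =>
    rw [Finset.prod_insert hx, Finset.sum_insert hx, pow_add]
    exact Ideal.mul_mem_mul (Ideal.pow_mem_pow (h x (Finset.mem_insert_self x t')) _)
      (ih (fun y hy => h y (Finset.mem_insert_of_mem hy)))

variable [IsLocalRing R]

private noncomputable def expSet (s : Finset R) (i : ℕ) :
    Finset ({x // x ∈ s} → ℕ) := by
  classical
  exact Finset.filter (fun e => ∑ x, e x = i)
    (Fintype.piFinset (fun _ : {x // x ∈ s} => Finset.range (i + 1)))

private noncomputable def monSet (s : Finset R) (i : ℕ) : Finset R := by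
  classical
  exact (expSet s i).image (fun e => ∏ x : {x // x ∈ s}, (x : R) ^ (e x))

private lemma mem_pow_set (s : Finset R) (i : ℕ) :
    ∀ z ∈ ((s : Set R)) ^ i, ∃ e ∈ expSet s i, z = ∏ x : {x // x ∈ s}, (x : R) ^ (e x) := by
  classical
  induction i with
  | zero =>
    intro z hz
    rw [pow_zero] at hz
    obtain rfl : z = 1 := Set.mem_one.mp hz
    refine ⟨fun _ => 0, ?_, by simp⟩
    simp [expSet, Fintype.mem_piFinset]
  | succ i ih =>
    intro z hz
    rw [pow_succ] at hz
    obtain ⟨w, hw, x0, hx0, rfl⟩ := Set.mem_mul.mp hz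
    obtain ⟨e, he, rfl⟩ := ih w hw
    have hx0' : x0 ∈ s := hx0
    set e' : {x // x ∈ s} → ℕ := fun x => e x + (if x = ⟨x0, hx0'⟩ then 1 else 0) with he'
    have hbound : ∀ x, e x ≤ i := by
      intro x
      have := (Finset.mem_filter.mp he).1
      have := Fintype.mem_piFinset.mp this x
      simp only [Finset.mem_range] at this
      omega
    have hsum : ∑ x, e x = i := (Finset.mem_filter.mp he).2
    refine ⟨e', ?_, ?_⟩
    · rw [expSet, Finset.mem_filter]
      constructor
      · rw [Fintype.mem_piFinset]
        intro x
        simp only [Finset.mem_range, he']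
        have := hbound x
        split <;> omega
      · rw [he']
        rw [Finset.sum_add_distrib, hsum]
        simp
    · rw [he']
      have : ∀ x : {x // x ∈ s}, (x : R) ^ (e x + if x = ⟨x0, hx0'⟩ then 1 else 0) =
          (x : R) ^ (e x) * (x : R) ^ (if x = ⟨x0, hx0'⟩ then 1 else 0) := by
        intro x; rw [pow_add]
      rw [Finset.prod_congr rfl (fun x _ => this x), Finset.prod_mul_distrib]
      congr 1
      have : ∀ x : {x // x ∈ s}, (x : R) ^ (if x = ⟨x0, hx0'⟩ then 1 else 0) =
          (if x = ⟨x0, hx0'⟩ then (x0 : R) else 1) := by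
        intro x
        split
        · rename_i hh; rw [hh]; simp
        · simp
      rw [Finset.prod_congr rfl (fun x _ => this x), Finset.prod_ite_eq' Finset.univ]
      simp

private lemma span_monSet (s : Finset R) (hs : Ideal.span (s : Set R) = maximalIdeal R)
    (i : ℕ) : Ideal.span ((monSet s i : Finset R) : Set R) = (maximalIdeal R) ^ i := by
  classical
  apply le_antisymm
  · rw [Ideal.span_le]
    intro z hz
    rw [monSet] at hz
    simp only [Finset.coe_image, Set.mem_image, Finset.mem_coe] at hz
    obtain ⟨e, he, rfl⟩ := hz
    have hsum : ∑ x, e x = i := by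
      have := (Finset.mem_filter.mp he).2
      exact this
    rw [← hsum]
    apply prod_pow_mem_pow
    intro x _
    rw [← hs]
    exact Ideal.subset_span x.2
  · have hpow : (maximalIdeal R) ^ i = Ideal.span ((s : Set R) ^ i) := by
      induction i with
      | zero => rw [pow_zero, pow_zero, ← Set.singleton_one, Ideal.span_singleton_one]; exact Ideal.one_eq_top
      | succ i ih =>
        rw [pow_succ, ih, ← hs, Ideal.span_mul_span', ← pow_succ]
    rw [hpow, Ideal.span_le]
    intro z hz
    obtain ⟨e, he, rfl⟩ := mem_pow_set s i z hz
    apply Ideal.subset_span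
    rw [monSet]
    simp only [Finset.coe_image, Set.mem_image, Finset.mem_coe]
    exact ⟨e, he, rfl⟩

private lemma sum_card_monSet_le (s : Finset R) (j : ℕ) :
    ∑ i ∈ Finset.range j, (monSet s i).card ≤ j ^ s.card := by
  classical
  calc ∑ i ∈ Finset.range j, (monSet s i).card
      ≤ ∑ i ∈ Finset.range j, (expSet s i).card := by
        apply Finset.sum_le_sum
        intro i _
        exact Finset.card_image_le
    _ = ((Finset.range j).biUnion (fun i => expSet s i)).card := by
        rw [Finset.card_biUnion]
        intro i _ k _ hik
        apply Finset.disjoint_left.mpr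
        intro e hei hek
        have h1 := (Finset.mem_filter.mp hei).2
        have h2 := (Finset.mem_filter.mp hek).2
        omega
    _ ≤ (Fintype.piFinset (fun _ : {x // x ∈ s} => Finset.range j)).card := by
        apply Finset.card_le_card
        intro e he
        simp only [Finset.mem_biUnion] at he
        obtain ⟨i, hi, hei⟩ := he
        have hirange : i < j := Finset.mem_range.mp hi
        rw [Fintype.mem_piFinset]
        intro x
        have h1 := Fintype.mem_piFinset.mp (Finset.mem_filter.mp hei).1 x
        simp only [Finset.mem_range] at h1 ⊢
        have h2 := (Finset.mem_filter.mp hei).2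
        have : e x ≤ ∑ y, e y := Finset.single_le_sum (fun y _ => Nat.zero_le _)
          (Finset.mem_univ x)
        omega
    _ = j ^ s.card := by
        rw [Fintype.card_piFinset]
        simp [Finset.card_range, Fintype.card_coe]

end Monomials
section IdealLen

variable {R : Type u_r} [CommRing R] [IsLocalRing R]

private noncomputable def ilen (I : Ideal R) : ℕ∞ := mylen R (R ⧸ I)

private lemma ilen_mono {I J : Ideal R} (h : I ≤ J) : ilen J ≤ ilen I := by
  apply mylen_le_of_surjective (Submodule.mapQ I J LinearMap.id h)
  intro y
  obtain ⟨x, rfl⟩ := Submodule.mkQ_surjective J y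
  exact ⟨Submodule.mkQ I x, Submodule.mapQ_apply I J LinearMap.id x⟩

private lemma ilen_top : ilen (⊤ : Ideal R) ≤ 0 := by
  apply mylen_subsingleton
  exact (Submodule.Quotient.subsingleton_iff).mpr rfl

/-- The key filtration bound: `len(R/𝔪^j) ≤ j^n`. -/
private lemma ilen_maxpow_le (s : Finset R) (hs : Ideal.span (s : Set R) = maximalIdeal R)
    (j : ℕ) : ilen ((maximalIdeal R) ^ j) ≤ ((j ^ s.card : ℕ) : ℕ∞) := by
  classical
  -- first: ilen (𝔪^j) ≤ ∑_{i<j} card (monSet s i)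
  have key : ∀ j : ℕ, ilen ((maximalIdeal R) ^ j) ≤
      ((∑ i ∈ Finset.range j, (monSet s i).card : ℕ) : ℕ∞) := by
    intro j
    induction j with
    | zero => simpa using ilen_top
    | succ j ih =>
      set Ij : Submodule R R := ((maximalIdeal R) ^ (j + 1) : Ideal R) with hIj
      set Jj : Submodule R R := ((maximalIdeal R) ^ j : Ideal R) with hJj
      have hle : Ij ≤ Jj := Ideal.pow_le_pow_right (by omega)
      set N : Submodule R (R ⧸ Ij) := Submodule.map Ij.mkQ Jj with hN
      -- quotient iso
      have e := Submodule.quotientQuotientEquivQuotient Ij Jj hle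
      have hquot : mylen R ((R ⧸ Ij) ⧸ N) = ilen ((maximalIdeal R) ^ j) :=
        mylen_congr e
      -- N is spanned by the images of the monomials of degree j and killed by 𝔪
      have hNspan : Submodule.span R (((monSet s j).image Ij.mkQ : Finset (R ⧸ Ij)) :
          Set (R ⧸ Ij)) = N := by
        rw [Finset.coe_image, Submodule.span_image]
        congr 1
        have := span_monSet s hs j
        exact_mod_cast this
      have hNkill : ∀ r ∈ maximalIdeal R, ∀ y ∈ N, r • y = (0 : R ⧸ Ij) := by
        intro r hr y hy
        obtain ⟨z, hz, rfl⟩ := hy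
        rw [← map_smul]
        rw [Submodule.mkQ_apply]
        rw [Submodule.Quotient.mk_eq_zero]
        have : r • z = r * z := rfl
        rw [this, hIj]
        have : (maximalIdeal R) ^ (j + 1) = maximalIdeal R * (maximalIdeal R) ^ j :=
          pow_succ' _ _
        rw [this]
        exact Ideal.mul_mem_mul hr hz
      have hNlen : mylen R N ≤ ((monSet s j).image Ij.mkQ).card :=
        mylen_submodule_le N _ hNspan hNkill
      calc ilen ((maximalIdeal R) ^ (j+1))
          ≤ mylen R N + mylen R ((R ⧸ Ij) ⧸ N) := mylen_subadd N
        _ ≤ (((monSet s j).image Ij.mkQ).card : ℕ∞) +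
            ((∑ i ∈ Finset.range j, (monSet s i).card : ℕ) : ℕ∞) := by
            rw [hquot]; exact add_le_add hNlen ih
        _ ≤ ((monSet s j).card : ℕ∞) +
            ((∑ i ∈ Finset.range j, (monSet s i).card : ℕ) : ℕ∞) := by
            gcongr
            exact_mod_cast Finset.card_image_le
        _ = ((∑ i ∈ Finset.range (j+1), (monSet s i).card : ℕ) : ℕ∞) := by
            rw [Finset.sum_range_succ]
            push_cast
            ring
  calc ilen ((maximalIdeal R) ^ j) ≤ _ := key j
    _ ≤ ((j ^ s.card : ℕ) : ℕ∞) := by exact_mod_cast sum_card_monSet_le s j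

variable [IsNoetherianRing R]

private lemma exists_maxpow_le {I : Ideal R} (h : IsFiniteLength R (R ⧸ I)) :
    ∃ N : ℕ, 1 ≤ N ∧ (maximalIdeal R) ^ N ≤ I := by
  obtain ⟨hnoeth, hart⟩ := isFiniteLength_iff_isNoetherian_isArtinian.mp h
  haveI := hnoeth
  haveI := hart
  set f : ℕ →o (Submodule R (R ⧸ I))ᵒᵈ :=
    ⟨fun k => Submodule.map (Submodule.mkQ I) (((maximalIdeal R) ^ k : Ideal R)),
      fun k l hkl => Submodule.map_mono (Ideal.pow_le_pow_right hkl)⟩ with hf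
  obtain ⟨N₀, hN₀⟩ := IsArtinian.monotone_stabilizes f
  set N := N₀ + 1 with hNdef
  refine ⟨N, by omega, ?_⟩
  have hstab : f N = f (N + 1) := (hN₀ N (by omega)).symm.trans (hN₀ (N + 1) (by omega))
  set M' : Submodule R (R ⧸ I) := f N with hM'
  have h1 : ((maximalIdeal R) ^ (N + 1) : Ideal R) =
      (maximalIdeal R) • ((maximalIdeal R) ^ N : Ideal R) := by
    rw [Ideal.smul_eq_mul]
    exact pow_succ' _ _
  have h2 : f (N + 1) = (maximalIdeal R) • M' := by
    show Submodule.map (Submodule.mkQ I) _ = _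
    rw [h1, Submodule.map_smul'']
    rfl
  have hsmul : M' ≤ (maximalIdeal R) • M' := le_of_eq (hstab.trans h2)
  have hfg : M'.FG := IsNoetherian.noetherian M'
  have hjac : maximalIdeal R ≤ (⊥ : Ideal R).jacobson := by
    rw [IsLocalRing.jacobson_eq_maximalIdeal ⊥ bot_ne_top]
  have hbot : M' = ⊥ := Submodule.eq_bot_of_le_smul_of_le_jacobson_bot _ _ hfg hsmul hjac
  intro x hx
  have : Submodule.mkQ I x ∈ M' := ⟨x, hx, rfl⟩
  rw [hbot, Submodule.mem_bot, Submodule.mkQ_apply, Submodule.Quotient.mk_eq_zero] at this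
  exact this

-- bridge to colength
private lemma krullDim_eq_height_top {α : Type*} [Preorder α] [OrderTop α] :
    Order.krullDim α = (Order.height (⊤ : α) : WithBot ℕ∞) := by
  haveI : Nonempty α := ⟨⊤⟩
  rw [Order.krullDim_eq_iSup_height_of_nonempty]
  congr 1
  apply le_antisymm
  · exact iSup_le (fun a => Order.height_mono le_top)
  · exact le_iSup (fun a : α => Order.height a) ⊤

private lemma colength_toNat (I : Ideal R) : colength R I = (ilen I).toNat := by
  rw [colength, krullDim_eq_height_top]
  rfl

private lemma colength_le_of_ilen_le {I : Ideal R} {c : ℕ} (h : ilen I ≤ (c : ℕ∞)) :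
    colength R I ≤ c := by
  rw [colength_toNat]
  exact_mod_cast ENat.toNat_le_of_le_coe h

private lemma colength_mono {I J : Ideal R} (h : I ≤ J) {c : ℕ} (hfin : ilen I ≤ (c : ℕ∞)) :
    colength R J ≤ colength R I := by
  rw [colength_toNat, colength_toNat]
  have h1 : ilen J ≤ ilen I := ilen_mono h
  have h2 : ilen I ≠ ⊤ := by
    intro hc
    rw [hc] at hfin
    exact absurd (top_le_iff.mp hfin) (by simp)
  exact ENat.toNat_le_toNat h1 (lt_top_iff_ne_top.mpr h2).ne
section RealLimsup

private lemma cobdd {u : ℕ → ℝ} (h : ∀ k, 0 ≤ u k) :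
    Filter.IsCoboundedUnder (· ≤ ·) Filter.atTop u :=
  Filter.IsBoundedUnder.isCoboundedUnder_le
    ⟨0, Filter.eventually_map.mpr (Filter.Eventually.of_forall h)⟩

private lemma limsup_nonneg {u : ℕ → ℝ} (h : ∀ k, 0 ≤ u k) :
    0 ≤ limsup u atTop := by
  rw [Filter.limsup_eq]
  apply Real.sInf_nonneg
  intro x hx
  simp only [Set.mem_setOf_eq] at hx
  obtain ⟨k, hk⟩ := (Filter.eventually_atTop).mp hx
  exact le_trans (h k) (hk k le_rfl)

private lemma limsup_const_mul_le {u : ℕ → ℝ} {c L B : ℝ} (hc : 0 ≤ c)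
    (hu : ∀ k, 0 ≤ u k) (hbdd : ∀ k, u k ≤ B) (hL : limsup u atTop ≤ L) :
    limsup (fun k => c * u k) atTop ≤ c * L := by
  rcases eq_or_lt_of_le hc with rfl | hc
  · simp only [zero_mul]
    simpa using limsup_const (α := ℝ) (f := Filter.atTop (α := ℕ)) 0
  have hbdd' : Filter.IsBoundedUnder (· ≤ ·) Filter.atTop u :=
    ⟨B, Filter.eventually_map.mpr (Filter.Eventually.of_forall hbdd)⟩
  apply le_of_forall_pos_le_add
  intro ε hε
  have hlt : limsup u atTop < L + ε / c := by
    have : 0 < ε / c := div_pos hε hc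
    linarith
  have hev := Filter.eventually_lt_of_limsup_lt hlt hbdd'
  apply Filter.limsup_le_of_le (cobdd (fun k => mul_nonneg hc.le (hu k)))
  filter_upwards [hev] with k hk
  calc c * u k ≤ c * (L + ε / c) := mul_le_mul_of_nonneg_left hk.le hc.le
    _ = c * L + ε := by rw [mul_add, mul_div_cancel₀ _ (ne_of_gt hc)]

private lemma limsup_comp_le {u : ℕ → ℝ} {B : ℝ} (φ : ℕ → ℕ)
    (hφ : Filter.Tendsto φ Filter.atTop Filter.atTop)
    (hu : ∀ k, 0 ≤ u k) (hbdd : ∀ k, u k ≤ B) :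
    limsup (fun k => u (φ k)) atTop ≤ limsup u atTop := by
  have hbdd' : Filter.IsBoundedUnder (· ≤ ·) Filter.atTop u :=
    ⟨B, Filter.eventually_map.mpr (Filter.Eventually.of_forall hbdd)⟩
  apply le_of_forall_pos_le_add
  intro ε hε
  have hlt : limsup u atTop < limsup u atTop + ε := by linarith
  have hev := Filter.eventually_lt_of_limsup_lt hlt hbdd'
  have hev2 : ∀ᶠ k in Filter.atTop, u (φ k) < limsup u atTop + ε := hφ.eventually hev
  apply Filter.limsup_le_of_le (cobdd (fun k => hu (φ k)))
  filter_upwards [hev2] with k hk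
  exact hk.le

end RealLimsup
/-- If `b_•` is a reverse-graded sequence of zero-dimensional ideals dominating the
graded sequence `a_•`, then `e(b_•) ≤ vol(b_•) ≤ vol(a_•) ≤ e(a_•)`. -/
theorem multSeq_le_volSeq_le_volSeq_le_multSeq
    {R : Type*} [CommRing R] [IsLocalRing R] [IsNoetherianRing R]
    {K : Type*} [Field K] [Algebra K R]
    (n : ℕ) (hn : 1 ≤ n) (hdim : ringKrullDim R = n)
    (hreg : ∃ s : Finset R, s.card = n ∧ Ideal.span (s : Set R) = maximalIdeal R)
    (a b : ℕ → Ideal R)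
    (hgraded : ∀ p q : ℕ, a p * a q ≤ a (p + q))
    (hzerodima : ∀ m : ℕ, IsFiniteLength R (R ⧸ a m))
    (hmono : ∀ p q : ℕ, 1 ≤ q → q < p → b p ≤ b q)
    (hrev : ∀ p q : ℕ, 1 ≤ p → 1 ≤ q → b (p + q) ≤ b p * b q)
    (hzerodimb : ∀ m : ℕ, 1 ≤ m → IsFiniteLength R (R ⧸ b m))
    (hdom : ∀ m : ℕ, 1 ≤ m → a m ≤ b m) :
    multSeq R n b ≤ volSeq R n b ∧ volSeq R n b ≤ volSeq R n a ∧
      volSeq R n a ≤ multSeq R n a := by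
  obtain ⟨s, hscard, hs⟩ := hreg
  obtain ⟨N₁, hN₁pos, hN₁⟩ := exists_maxpow_le (hzerodima 1)
  set 𝔪 := maximalIdeal R with h𝔪
  set F : ℝ := (Nat.factorial n : ℝ) with hF
  have hF0 : 0 ≤ F := by positivity
  set C : ℝ := ((N₁ : ℝ)) ^ n with hC
  have hC0 : 0 ≤ C := by positivity
  -- ideal-power facts
  have pa : ∀ m k : ℕ, 1 ≤ k → (a m) ^ k ≤ a (m * k) := by
    intro m k hk
    induction k with
    | zero => omega
    | succ k ih =>
      rcases Nat.eq_or_lt_of_le hk with h1 | h1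
      · rw [← h1]; simpa using le_rfl
      · have hk' : 1 ≤ k := by omega
        calc (a m) ^ (k + 1) = (a m) ^ k * a m := pow_succ _ _
          _ ≤ a (m * k) * a m := Ideal.mul_mono (ih hk') le_rfl
          _ ≤ a (m * k + m) := hgraded _ _
          _ = a (m * (k + 1)) := by ring_nf
  have pb : ∀ m : ℕ, 1 ≤ m → 𝔪 ^ (N₁ * m) ≤ a m := by
    intro m hm
    calc 𝔪 ^ (N₁ * m) = (𝔪 ^ N₁) ^ m := by rw [← pow_mul]
      _ ≤ (a 1) ^ m := Ideal.pow_right_mono hN₁ m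
      _ ≤ a (1 * m) := pa 1 m hm
      _ = a m := by rw [one_mul]
  have pbk : ∀ m k : ℕ, 1 ≤ m → 𝔪 ^ (N₁ * m * k) ≤ (a m) ^ k := by
    intro m k hm
    calc 𝔪 ^ (N₁ * m * k) = (𝔪 ^ (N₁ * m)) ^ k := by rw [← pow_mul]
      _ ≤ (a m) ^ k := Ideal.pow_right_mono (pb m hm) k
  have pd : ∀ m k : ℕ, 1 ≤ m → 1 ≤ k → b (m * k) ≤ (b m) ^ k := by
    intro m k hm hk
    induction k with
    | zero => omega
    | succ k ih =>
      rcases Nat.eq_or_lt_of_le hk with h1 | h1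
      · rw [← h1]; simpa using le_rfl
      · have hk' : 1 ≤ k := by omega
        calc b (m * (k + 1)) = b (m * k + m) := by ring_nf
          _ ≤ b (m * k) * b m := hrev _ _ (Nat.mul_pos hm hk') hm
          _ ≤ (b m) ^ k * b m := Ideal.mul_mono (ih hk') le_rfl
          _ = (b m) ^ (k + 1) := (pow_succ _ _).symm
  -- real colength bounds
  have c1 : ∀ (I : Ideal R) (N : ℕ), 𝔪 ^ N ≤ I → (colength R I : ℝ) ≤ ((N : ℝ)) ^ n := by
    intro I N hNI
    have h1 : ilen I ≤ ((N ^ s.card : ℕ) : ℕ∞) :=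
      le_trans (ilen_mono hNI) (ilen_maxpow_le s hs N)
    have h2 : colength R I ≤ N ^ s.card := colength_le_of_ilen_le h1
    calc (colength R I : ℝ) ≤ ((N ^ s.card : ℕ) : ℝ) := by exact_mod_cast h2
      _ = ((N : ℝ)) ^ n := by rw [hscard]; push_cast; ring
  have c2 : ∀ (I J : Ideal R) (N : ℕ), 𝔪 ^ N ≤ I → I ≤ J →
      (colength R J : ℝ) ≤ (colength R I : ℝ) := by
    intro I J N hNI hIJ
    have h1 : ilen I ≤ ((N ^ s.card : ℕ) : ℕ∞) :=
      le_trans (ilen_mono hNI) (ilen_maxpow_le s hs N)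
    exact_mod_cast colength_mono hIJ h1
  -- sequences
  set va : ℕ → ℝ := fun m : ℕ =>
    (Nat.factorial n * colength R (a m) : ℝ) / (m : ℝ) ^ n with hva
  set vb : ℕ → ℝ := fun m : ℕ =>
    (Nat.factorial n * colength R (b m) : ℝ) / (m : ℝ) ^ n with hvb
  have hvolb : volSeq R n b = limsup vb atTop := rfl
  have hvola : volSeq R n a = limsup va atTop := rfl
  have hva_nonneg : ∀ m, 0 ≤ va m := fun m => by positivity
  have hvb_nonneg : ∀ m, 0 ≤ vb m := fun m => by positivity
  -- uniform bounds
  have hcol_a : ∀ m : ℕ, 1 ≤ m → (colength R (a m) : ℝ) ≤ C * (m : ℝ) ^ n := by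
    intro m hm
    calc (colength R (a m) : ℝ) ≤ ((N₁ * m : ℕ) : ℝ) ^ n := c1 (a m) (N₁ * m) (pb m hm)
      _ = C * (m : ℝ) ^ n := by push_cast; rw [mul_pow]
  have hva_bdd : ∀ m : ℕ, 1 ≤ m → va m ≤ F * C := by
    intro m hm
    have hm0 : (0 : ℝ) < (m : ℝ) ^ n := by positivity
    rw [hva]
    rw [div_le_iff₀ hm0]
    calc (Nat.factorial n : ℝ) * (colength R (a m) : ℝ)
        ≤ F * (C * (m : ℝ) ^ n) := by
          apply mul_le_mul_of_nonneg_left (hcol_a m hm) hF0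
      _ = F * C * (m : ℝ) ^ n := by ring
  have hvb_le_va : ∀ m : ℕ, 1 ≤ m → vb m ≤ va m := by
    intro m hm
    have hcol : (colength R (b m) : ℝ) ≤ (colength R (a m) : ℝ) :=
      c2 (a m) (b m) (N₁ * m) (pb m hm) (hdom m hm)
    simp only [hva, hvb]
    gcongr
  have hvb_bdd : ∀ m : ℕ, vb m ≤ F * C := by
    intro m
    rcases Nat.eq_zero_or_pos m with rfl | hm
    · have : vb 0 = 0 := by
        rw [hvb]
        simp [zero_pow (by omega : n ≠ 0)]
      rw [this]; positivity
    · exact le_trans (hvb_le_va m hm) (hva_bdd m hm)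
  have hmult_nonneg : ∀ I : Ideal R, 0 ≤ mult R n I := by
    intro I
    exact limsup_nonneg (fun k => by positivity)
  -- uniform bound for multiplicities of `a m`
  have hamult_bdd : ∀ m : ℕ, 1 ≤ m → mult R n (a m) ≤ F * C * (m : ℝ) ^ n := by
    intro m hm
    have ht_bdd : ∀ k : ℕ,
        (Nat.factorial n * colength R ((a m) ^ k) : ℝ) / (k : ℝ) ^ n
          ≤ F * C * (m : ℝ) ^ n := by
      intro k
      rcases Nat.eq_zero_or_pos k with rfl | hk
      · rw [Nat.cast_zero, zero_pow (by omega : n ≠ 0), div_zero]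
        positivity
      · have hcol : (colength R ((a m) ^ k) : ℝ) ≤ ((N₁ * m * k : ℕ) : ℝ) ^ n :=
          c1 ((a m) ^ k) (N₁ * m * k) (pbk m k hm)
        have hk0 : (0:ℝ) < ((k:ℝ)) ^ n := by positivity
        rw [div_le_iff₀ hk0]
        calc (Nat.factorial n : ℝ) * (colength R ((a m) ^ k) : ℝ)
            ≤ F * (((N₁ * m * k : ℕ) : ℝ) ^ n) := mul_le_mul_of_nonneg_left hcol hF0
          _ = F * C * (m : ℝ) ^ n * (k : ℝ) ^ n := by push_cast; ring
    exact Filter.limsup_le_of_le (cobdd (fun k => by positivity))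
      (Filter.Eventually.of_forall ht_bdd)
  -- ===== (I) volSeq b ≤ volSeq a =====
  have ineqI : volSeq R n b ≤ volSeq R n a := by
    rw [hvolb, hvola]
    apply Filter.limsup_le_limsup
    · filter_upwards [Filter.eventually_ge_atTop 1] with m hm
      exact hvb_le_va m hm
    · exact cobdd hvb_nonneg
    · exact ⟨F * C, Filter.eventually_map.mpr (by
        filter_upwards [Filter.eventually_ge_atTop 1] with m hm
        exact hva_bdd m hm)⟩
  -- ===== (II) multSeq b ≤ volSeq b =====
  have ineqII : multSeq R n b ≤ volSeq R n b := by
    have claim2 : ∀ m : ℕ, 1 ≤ m → mult R n (b m) ≤ (m : ℝ) ^ n * volSeq R n b := by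
      intro m hm
      set t : ℕ → ℝ := fun k : ℕ =>
        (Nat.factorial n * colength R ((b m) ^ k) : ℝ) / (k : ℝ) ^ n with htdef
      have hmult : mult R n (b m) = limsup t atTop := rfl
      have ht_nonneg : ∀ k, 0 ≤ t k := fun k => by positivity
      have hpoint : ∀ k : ℕ, 1 ≤ k → t k ≤ (m : ℝ) ^ n * vb (m * k) := by
        intro k hk
        have hsub : b (m * k) ≤ (b m) ^ k := pd m k hm hk
        have hmk : 1 ≤ m * k := Nat.mul_pos hm hk
        have hmax : 𝔪 ^ (N₁ * (m * k)) ≤ b (m * k) :=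
          le_trans (pb (m * k) hmk) (hdom (m * k) hmk)
        have hcol : (colength R ((b m) ^ k) : ℝ) ≤ (colength R (b (m * k)) : ℝ) :=
          c2 (b (m * k)) ((b m) ^ k) (N₁ * (m * k)) hmax hsub
        have hk0 : ((k : ℝ)) ^ n ≠ 0 := by positivity
        have hm0 : ((m : ℝ)) ^ n ≠ 0 := by positivity
        calc t k ≤ (Nat.factorial n * colength R (b (m * k)) : ℝ) / (k : ℝ) ^ n := by
              simp only [htdef]; gcongr
          _ = (m : ℝ) ^ n * vb (m * k) := by
              rw [hvb]
              push_cast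
              rw [mul_pow]
              field_simp
      calc mult R n (b m) = limsup t atTop := hmult
        _ ≤ limsup (fun k => (m : ℝ) ^ n * vb (m * k)) atTop := by
            apply Filter.limsup_le_limsup
            · filter_upwards [Filter.eventually_ge_atTop 1] with k hk
              exact hpoint k hk
            · exact cobdd ht_nonneg
            · exact ⟨(m : ℝ) ^ n * (F * C), Filter.eventually_map.mpr
                (Filter.Eventually.of_forall (fun k => by
                  have := hvb_bdd (m * k)
                  have hmn : (0:ℝ) ≤ (m:ℝ)^n := by positivity
                  calc (m : ℝ) ^ n * vb (m * k) ≤ (m : ℝ) ^ n * (F * C) :=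
                    mul_le_mul_of_nonneg_left this hmn))⟩
        _ ≤ (m : ℝ) ^ n * limsup (fun k => vb (m * k)) atTop := by
            apply limsup_const_mul_le (by positivity)
              (fun k => hvb_nonneg (m * k)) (fun k => hvb_bdd (m * k)) le_rfl
        _ ≤ (m : ℝ) ^ n * volSeq R n b := by
            apply mul_le_mul_of_nonneg_left _ (by positivity)
            rw [hvolb]
            apply limsup_comp_le (fun k => m * k) _ hvb_nonneg hvb_bdd
            apply Filter.tendsto_atTop_mono (fun k => Nat.le_mul_of_pos_left k hm)
            exact Filter.tendsto_id
    rw [show multSeq R n b = limsup (fun m : ℕ => mult R n (b m) / (m : ℝ) ^ n) atTop from rfl]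
    apply Filter.limsup_le_of_le
    · exact cobdd (fun m => by
        have := hmult_nonneg (b m)
        positivity)
    · filter_upwards [Filter.eventually_ge_atTop 1] with m hm
      have hm0 : (0 : ℝ) < (m : ℝ) ^ n := by positivity
      rw [div_le_iff₀ hm0]
      calc mult R n (b m) ≤ (m : ℝ) ^ n * volSeq R n b := claim2 m hm
        _ = volSeq R n b * (m : ℝ) ^ n := by ring
  -- ===== (III) volSeq a ≤ multSeq a =====
  have ineqIII : volSeq R n a ≤ multSeq R n a := by
    have hmultSeq_nonneg : 0 ≤ multSeq R n a := by
      apply limsup_nonneg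
      intro m
      have := hmult_nonneg (a m)
      positivity
    by_cases hcase : ∀ m : ℕ, 1 ≤ m → a m ≠ ⊤
    · -- Case A : all ideals proper
      have perm : ∀ m : ℕ, 1 ≤ m → volSeq R n a ≤ mult R n (a m) / (m : ℝ) ^ n := by
        intro m hm
        set c : ℕ := N₁ * m with hcdef
        have hc1 : 1 ≤ c := Nat.mul_pos hN₁pos hm
        set t : ℕ → ℝ := fun k : ℕ =>
          (Nat.factorial n * colength R ((a m) ^ k) : ℝ) / (k : ℝ) ^ n with htdef
        have hmult : mult R n (a m) = limsup t atTop := rfl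
        have ht_nonneg : ∀ k, 0 ≤ t k := fun k => by positivity
        set T : ℝ := F * C * (m : ℝ) ^ n with hTdef
        have hT0 : 0 ≤ T := by positivity
        have ht_bdd : ∀ k, t k ≤ T := by
          intro k
          rcases Nat.eq_zero_or_pos k with rfl | hk
          · have : t 0 = 0 := by
              rw [htdef]; simp [zero_pow (by omega : n ≠ 0)]
            rw [this]; exact hT0
          · have hcol : (colength R ((a m) ^ k) : ℝ) ≤ ((N₁ * m * k : ℕ) : ℝ) ^ n :=
              c1 ((a m) ^ k) (N₁ * m * k) (pbk m k hm)
            have hk0 : (0:ℝ) < ((k:ℝ)) ^ n := by positivity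
            rw [htdef, div_le_iff₀ hk0]
            calc (Nat.factorial n : ℝ) * (colength R ((a m) ^ k) : ℝ)
                ≤ F * (((N₁ * m * k : ℕ) : ℝ) ^ n) :=
                  mul_le_mul_of_nonneg_left hcol hF0
              _ = T * (k : ℝ) ^ n := by rw [hTdef]; push_cast; ring
        have hsubr : ∀ r : ℕ, 1 ≤ r → r ≤ m → (a m) ^ c ≤ a r := by
          intro r hr1 hrm
          have ham : a m ≤ 𝔪 := IsLocalRing.le_maximalIdeal (hcase m hm)
          calc (a m) ^ c ≤ 𝔪 ^ c := Ideal.pow_right_mono ham c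
            _ ≤ 𝔪 ^ (N₁ * r) := Ideal.pow_le_pow_right (by
                rw [hcdef]; exact Nat.mul_le_mul_left N₁ hrm)
            _ ≤ a r := pb r hr1
        set Kf : ℕ → ℕ := fun j => (j - 1) / m + c with hKdef
        have hkey : ∀ j : ℕ, 1 ≤ j → (a m) ^ (Kf j) ≤ a j := by
          intro j hj
          set k : ℕ := (j - 1) / m with hkdef2
          set r : ℕ := j - m * k with hrdef
          have hmod := Nat.div_add_mod (j - 1) m
          rw [← hkdef2] at hmod
          have hmodlt : (j - 1) % m < m := Nat.mod_lt _ (by omega)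
          have hr1 : 1 ≤ r := by omega
          have hrm : r ≤ m := by omega
          have hjeq : j = m * k + r := by omega
          have hKj : Kf j = k + c := by rw [hKdef]
          rcases Nat.eq_zero_or_pos k with hk0 | hk1
          · have hmk0 : m * k = 0 := by rw [hk0, Nat.mul_zero]
            have hjr : j = r := by omega
            rw [hKj, hk0, zero_add, hjr]
            exact hsubr r hr1 hrm
          · rw [hKj, pow_add]
            calc (a m) ^ k * (a m) ^ c ≤ a (m * k) * a r :=
                Ideal.mul_mono (pa m k hk1) (hsubr r hr1 hrm)
              _ ≤ a (m * k + r) := hgraded _ _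
              _ = a j := by rw [← hjeq]
        have hKtend : Filter.Tendsto Kf Filter.atTop Filter.atTop := by
          apply Filter.tendsto_atTop_atTop.mpr
          intro bb
          refine ⟨m * bb + 1, fun j hj => ?_⟩
          have h2 : bb ≤ (j - 1) / m := by
            rw [Nat.le_div_iff_mul_le (show 0 < m by omega)]
            have hcomm : bb * m = m * bb := Nat.mul_comm bb m
            omega
          calc bb ≤ (j - 1) / m := h2
            _ ≤ Kf j := by simp only [hKdef]; exact Nat.le_add_right _ _
        have hδ : ∀ δ : ℝ, 0 < δ →
            volSeq R n a ≤ (1 / (m : ℝ) + δ) ^ n * mult R n (a m) := by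
          intro δ hδ0
          have hcoef0 : (0:ℝ) ≤ (1 / (m : ℝ) + δ) ^ n := by positivity
          have hev : ∀ᶠ j in Filter.atTop,
              va j ≤ (1 / (m : ℝ) + δ) ^ n * t (Kf j) := by
            filter_upwards [Filter.eventually_ge_atTop (max 1 (Nat.ceil ((c : ℝ) / δ)))]
              with j hj
            have hj1 : 1 ≤ j := le_trans (le_max_left _ _) hj
            have hjc : Nat.ceil ((c : ℝ) / δ) ≤ j := le_trans (le_max_right _ _) hj
            have hj0 : (0:ℝ) < (j : ℝ) := by exact_mod_cast hj1
            have hcj : (c : ℝ) / (j : ℝ) ≤ δ := by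
              rw [div_le_iff₀ hj0]
              have h1 : ((c : ℝ) / δ) ≤ (j : ℝ) :=
                le_trans (Nat.le_ceil _) (by exact_mod_cast hjc)
              calc (c : ℝ) = ((c : ℝ) / δ) * δ := by field_simp
                _ ≤ (j : ℝ) * δ := mul_le_mul_of_nonneg_right h1 hδ0.le
                _ = δ * (j : ℝ) := by ring
            have hK1 : 1 ≤ Kf j := le_trans hc1 (by
              simp only [hKdef]; exact Nat.le_add_left c _)
            have hK0 : (0:ℝ) < ((Kf j : ℝ)) := by exact_mod_cast hK1
            have hcol : (colength R (a j) : ℝ) ≤ (colength R ((a m) ^ (Kf j)) : ℝ) :=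
              c2 ((a m) ^ (Kf j)) (a j) (N₁ * m * (Kf j)) (pbk m (Kf j) hm) (hkey j hj1)
            have hKj : ((Kf j : ℝ)) / (j : ℝ) ≤ 1 / (m : ℝ) + δ := by
              have hm0 : (0:ℝ) < (m : ℝ) := by exact_mod_cast hm
              have hstep : ((Kf j : ℝ)) ≤ (j : ℝ) / (m : ℝ) + (c : ℝ) := by
                rw [hKdef]
                push_cast
                have h1 : (((j - 1) / m : ℕ) : ℝ) ≤ ((j - 1 : ℕ) : ℝ) / (m : ℝ) :=
                  Nat.cast_div_le
                have h2 : ((j - 1 : ℕ) : ℝ) ≤ (j : ℝ) := by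
                  have : (j - 1 : ℕ) ≤ j := by omega
                  exact_mod_cast this
                calc (((j - 1) / m : ℕ) : ℝ) + (c : ℝ)
                    ≤ ((j - 1 : ℕ) : ℝ) / (m : ℝ) + (c : ℝ) := by gcongr
                  _ ≤ (j : ℝ) / (m : ℝ) + (c : ℝ) := by gcongr
              calc ((Kf j : ℝ)) / (j : ℝ) ≤ ((j : ℝ) / (m : ℝ) + (c : ℝ)) / (j : ℝ) :=
                  div_le_div_of_nonneg_right hstep hj0.le
                _ = 1 / (m : ℝ) + (c : ℝ) / (j : ℝ) := by field_simp
                _ ≤ 1 / (m : ℝ) + δ := by gcongr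
            have hKne : ((Kf j : ℝ)) ≠ 0 := ne_of_gt hK0
            have hjne : ((j : ℝ)) ≠ 0 := ne_of_gt hj0
            have heq : t (Kf j) * (((Kf j : ℝ)) / (j : ℝ)) ^ n =
                (Nat.factorial n * colength R ((a m) ^ (Kf j)) : ℝ) / (j : ℝ) ^ n := by
              simp only [htdef]
              field_simp
              rw [div_pow, mul_assoc, div_mul_cancel₀ _ (pow_ne_zero _ hjne)]
            have hratio : (((Kf j : ℝ)) / (j : ℝ)) ^ n ≤ (1 / (m : ℝ) + δ) ^ n := by
              exact pow_le_pow_left₀ (div_nonneg hK0.le hj0.le) hKj n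
            calc va j = (Nat.factorial n * colength R (a j) : ℝ) / (j : ℝ) ^ n := by
                  rw [hva]
              _ ≤ (Nat.factorial n * colength R ((a m) ^ (Kf j)) : ℝ) / (j : ℝ) ^ n :=
                  div_le_div_of_nonneg_right (mul_le_mul_of_nonneg_left hcol hF0)
                    (by positivity)
              _ = t (Kf j) * (((Kf j : ℝ)) / (j : ℝ)) ^ n := heq.symm
              _ ≤ t (Kf j) * (1 / (m : ℝ) + δ) ^ n :=
                  mul_le_mul_of_nonneg_left hratio (ht_nonneg _)
              _ = (1 / (m : ℝ) + δ) ^ n * t (Kf j) := by ring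
          calc volSeq R n a = limsup va atTop := hvola
            _ ≤ limsup (fun j => (1 / (m : ℝ) + δ) ^ n * t (Kf j)) atTop :=
                Filter.limsup_le_limsup hev (cobdd hva_nonneg)
                  ⟨(1 / (m : ℝ) + δ) ^ n * T, Filter.eventually_map.mpr
                  (Filter.Eventually.of_forall (fun j =>
                    mul_le_mul_of_nonneg_left (ht_bdd _) hcoef0))⟩
            _ ≤ (1 / (m : ℝ) + δ) ^ n * limsup (fun j => t (Kf j)) atTop :=
                limsup_const_mul_le hcoef0 (fun j => ht_nonneg _) (fun j => ht_bdd _) le_rfl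
            _ ≤ (1 / (m : ℝ) + δ) ^ n * mult R n (a m) := by
                apply mul_le_mul_of_nonneg_left _ hcoef0
                rw [hmult]
                exact limsup_comp_le Kf hKtend ht_nonneg ht_bdd
        -- let δ → 0
        have hlim : Filter.Tendsto (fun δ : ℝ => (1 / (m : ℝ) + δ) ^ n * mult R n (a m))
            (nhdsWithin 0 (Set.Ioi 0)) (nhds ((1 / (m : ℝ) + 0) ^ n * mult R n (a m))) := by
          apply Filter.Tendsto.mono_left _ nhdsWithin_le_nhds
          exact Continuous.tendsto (((continuous_const.add continuous_id).pow n).mul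
            continuous_const) 0
        have hfin : volSeq R n a ≤ (1 / (m : ℝ) + 0) ^ n * mult R n (a m) := by
          apply ge_of_tendsto hlim
          filter_upwards [self_mem_nhdsWithin] with δ hδ'
          exact hδ δ hδ'
        have hm0 : ((m : ℝ)) ^ n ≠ 0 := by positivity
        calc volSeq R n a ≤ (1 / (m : ℝ) + 0) ^ n * mult R n (a m) := hfin
          _ = mult R n (a m) / (m : ℝ) ^ n := by
              rw [add_zero, div_pow, one_pow, div_mul_eq_mul_div, one_mul]
      rw [show multSeq R n a = limsup (fun m : ℕ => mult R n (a m) / (m : ℝ) ^ n) atTop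
        from rfl]
      apply Filter.le_limsup_of_frequently_le
      · apply Filter.Eventually.frequently
        filter_upwards [Filter.eventually_ge_atTop 1] with m hm
        exact perm m hm
      · refine ⟨F * C, Filter.eventually_map.mpr ?_⟩
        filter_upwards [Filter.eventually_ge_atTop 1] with m hm
        have hm0 : (0 : ℝ) < (m : ℝ) ^ n := by positivity
        rw [div_le_iff₀ hm0]
        calc mult R n (a m) ≤ F * C * (m : ℝ) ^ n := hamult_bdd m hm
          _ = F * C * ((m : ℝ) ^ n) := by ring
    · -- Case B : some `a m₀ = ⊤`, so the volume vanishes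
      push_neg at hcase
      obtain ⟨m0, hm0, htop⟩ := hcase
      set D : ℝ := ∑ r ∈ Finset.range (m0 + 1), (colength R (a r) : ℝ) with hD
      have hD0 : 0 ≤ D := Finset.sum_nonneg (fun r _ => by positivity)
      have hDbound : ∀ j : ℕ, 1 ≤ j → (colength R (a j) : ℝ) ≤ D := by
        intro j hj
        set k : ℕ := (j - 1) / m0 with hkdef2
        set r : ℕ := j - m0 * k with hrdef
        have hmod := Nat.div_add_mod (j - 1) m0
        rw [← hkdef2] at hmod
        have hmodlt : (j - 1) % m0 < m0 := Nat.mod_lt _ (by omega)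
        have hr1 : 1 ≤ r := by omega
        have hrm : r ≤ m0 := by omega
        have hjeq : j = m0 * k + r := by omega
        have har : a r ≤ a j := by
          rcases Nat.eq_zero_or_pos k with hk0 | hk1
          · have hmk0 : m0 * k = 0 := by rw [hk0, Nat.mul_zero]
            have : j = r := by omega
            rw [this]
          · have h1 : (⊤ : Ideal R) = (a m0) ^ k := by rw [htop, Ideal.top_pow]
            have h2 : (⊤ : Ideal R) ≤ a (m0 * k) := h1 ▸ pa m0 k hk1
            have h3 : a (m0 * k) = ⊤ := top_le_iff.mp h2
            calc a r = ⊤ * a r := (Ideal.top_mul _).symm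
              _ = a (m0 * k) * a r := by rw [h3]
              _ ≤ a (m0 * k + r) := hgraded _ _
              _ = a j := by rw [← hjeq]
        have hcol : (colength R (a j) : ℝ) ≤ (colength R (a r) : ℝ) :=
          c2 (a r) (a j) (N₁ * r) (pb r hr1) har
        calc (colength R (a j) : ℝ) ≤ (colength R (a r) : ℝ) := hcol
          _ ≤ D := Finset.single_le_sum (f := fun r => (colength R (a r) : ℝ))
              (fun i _ => by positivity) (Finset.mem_range.mpr (by omega))
      set w : ℕ → ℝ := fun j => (F * D) / (j : ℝ) ^ n with hw
      have hwlim : Filter.Tendsto w Filter.atTop (nhds 0) := by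
        apply Filter.Tendsto.div_atTop tendsto_const_nhds
        exact (tendsto_pow_atTop (by omega : n ≠ 0)).comp tendsto_natCast_atTop_atTop
      have h1 : limsup va atTop ≤ limsup w atTop := by
        apply Filter.limsup_le_limsup _ (cobdd hva_nonneg) hwlim.isBoundedUnder_le
        filter_upwards [Filter.eventually_ge_atTop 1] with j hj
        simp only [hva, hw]
        gcongr
        exact hDbound j hj
      calc volSeq R n a = limsup va atTop := hvola
        _ ≤ limsup w atTop := h1
        _ = 0 := hwlim.limsup_eq
        _ ≤ multSeq R n a := hmultSeq_nonneg
  exact ⟨ineqII, ineqI, ineqIII⟩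
end IdealLen
end

section
/- Let a and a' be monomial ideals in R = K[X_1,…,X_n] and let λ ∈ ℚ_{>0}. Then I(λ·(a·a')) ⊆ I(λ·a)·I(λ·a'). -/
open Filter MvPolynomial
open scoped Pointwise

section Aux
variable {K : Type*} [Field K] {n : ℕ}

lemma coe_mem_newton {a : Ideal (MvPolynomial (Fin n) K)} {v : Fin n →₀ ℕ}
    (hv : monomial v (1:K) ∈ a) : (fun i => (v i : ℝ)) ∈ newton a :=
  subset_convexHull ℝ _ ⟨v, hv, rfl⟩

lemma newton_nonneg {a : Ideal (MvPolynomial (Fin n) K)} {p : Fin n → ℝ}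
    (hp : p ∈ newton a) (i : Fin n) : 0 ≤ p i := by
  have h : newton a ⊆ {f : Fin n → ℝ | ∀ i, 0 ≤ f i} := by
    apply convexHull_min
    · rintro _ ⟨v, hv, rfl⟩ i; positivity
    · intro x hx y hy s t hs ht hst i
      have h1 := hx i
      have h2 := hy i
      have : (s • x + t • y) i = s * x i + t * y i := by simp [smul_eq_mul]
      rw [Set.mem_setOf_eq] at *
      simp only [Pi.add_apply, Pi.smul_apply, smul_eq_mul]
      nlinarith
  exact h hp i

lemma newton_add_single {a : Ideal (MvPolynomial (Fin n) K)} {p : Fin n → ℝ}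
    (hp : p ∈ newton a) (j : Fin n) :
    (p + fun i => (((Finsupp.single j 1 : Fin n →₀ ℕ)) i : ℝ)) ∈ newton a := by
  set d : Fin n → ℝ := fun i => (((Finsupp.single j 1 : Fin n →₀ ℕ)) i : ℝ) with hd
  have hsub : ((fun v : Fin n →₀ ℕ => fun i => (v i : ℝ)) ''
      {v : Fin n →₀ ℕ | monomial v (1 : K) ∈ a}) ⊆ (fun z => z + d) ⁻¹' (newton a) := by
    rintro _ ⟨v, hv, rfl⟩
    refine Set.mem_preimage.2 (subset_convexHull ℝ _ ⟨v + Finsupp.single j 1, ?_, ?_⟩)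
    · have heq : monomial (v + Finsupp.single j 1) (1:K)
          = monomial v 1 * monomial (Finsupp.single j 1) 1 := by
        rw [monomial_mul, mul_one]
      rw [Set.mem_setOf_eq, heq]
      exact Ideal.mul_mem_right _ _ hv
    · funext i; simp [d, Finsupp.add_apply]
  have hconv : Convex ℝ ((fun z : Fin n → ℝ => z + d) ⁻¹' (newton a)) := by
    intro x hx y hy s t hs ht hst
    simp only [Set.mem_preimage] at *
    have := (convex_convexHull ℝ _) hx hy hs ht hst
    have heq : s • x + t • y + d = s • (x + d) + t • (y + d) := by
      funext i
      simp only [Pi.add_apply, Pi.smul_apply, smul_eq_mul]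
      linear_combination (-(d i)) * hst
    rwa [heq]
  exact convexHull_min hsub hconv hp

lemma newton_add_single_nat {a : Ideal (MvPolynomial (Fin n) K)} {p : Fin n → ℝ}
    (hp : p ∈ newton a) (j : Fin n) (N : ℕ) :
    (p + (N:ℝ) • fun i => (((Finsupp.single j 1 : Fin n →₀ ℕ)) i : ℝ)) ∈ newton a := by
  induction N with
  | zero => simpa using hp
  | succ N ih =>
      have := newton_add_single ih j
      convert this using 1
      funext i
      push_cast
      simp only [Pi.add_apply, Pi.smul_apply, smul_eq_mul]
      ring

lemma newton_add_single_real {a : Ideal (MvPolynomial (Fin n) K)} {p : Fin n → ℝ}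
    (hp : p ∈ newton a) (j : Fin n) {c : ℝ} (hc : 0 ≤ c) :
    (p + c • fun i => (((Finsupp.single j 1 : Fin n →₀ ℕ)) i : ℝ)) ∈ newton a := by
  rcases eq_or_lt_of_le hc with rfl | hc
  · simpa using hp
  set ej : Fin n → ℝ := fun i => (((Finsupp.single j 1 : Fin n →₀ ℕ)) i : ℝ) with hej
  set N : ℕ := ⌈c⌉₊ with hN
  have hN0 : (0:ℝ) < N := by
    have : 0 < N := Nat.ceil_pos.2 hc
    exact_mod_cast this
  have hcN : c ≤ (N:ℝ) := Nat.le_ceil c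
  have h1 : 0 ≤ 1 - c / N := by
    rw [sub_nonneg, div_le_one hN0]; exact hcN
  have h2 : 0 ≤ c / N := by positivity
  have key := (convex_convexHull ℝ _) hp (newton_add_single_nat hp j N) h1 h2 (by ring)
  have heq : (1 - c / N) • p + (c / N) • (p + (N:ℝ) • ej) = p + c • ej := by
    funext i
    simp only [Pi.add_apply, Pi.smul_apply, smul_eq_mul]
    field_simp
    ring
  rw [heq] at key
  exact key

lemma newton_upward {a : Ideal (MvPolynomial (Fin n) K)} {p q : Fin n → ℝ}
    (hp : p ∈ newton a) (h : ∀ i, p i ≤ q i) : q ∈ newton a := by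
  have H : ∀ T : Finset (Fin n), (fun i => if i ∈ T then q i else p i) ∈ newton a := by
    intro T
    induction T using Finset.induction_on with
    | empty => simpa using hp
    | insert j T hj ih =>
        have key := newton_add_single_real ih j (c := q j - p j) (by linarith [h j])
        convert key using 1
        funext i
        by_cases hij : i = j
        · subst hij
          simp [hj, Finsupp.single_eq_same]
        · simp [Finset.mem_insert, hij, Finsupp.single_apply, Ne.symm hij]
  have := H Finset.univ
  simpa using this

lemma newton_mem_interior (hn : 1 ≤ n) {a : Ideal (MvPolynomial (Fin n) K)} {p q : Fin n → ℝ}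
    (hp : p ∈ newton a) (h : ∀ i, p i < q i) : q ∈ interior (newton a) := by
  haveI : Nonempty (Fin n) := ⟨⟨0, hn⟩⟩
  set r := Finset.univ.inf' Finset.univ_nonempty (fun i => q i - p i) with hrdef
  have hr : 0 < r := by
    rw [hrdef, Finset.lt_inf'_iff]
    intro i _
    linarith [h i]
  refine mem_interior.2 ⟨Metric.ball q r, ?_, Metric.isOpen_ball, Metric.mem_ball_self hr⟩
  intro z hz
  refine newton_upward hp fun i => ?_
  have h1 : dist (z i) (q i) ≤ dist z q := dist_le_pi_dist z q i
  have h2 : dist z q < r := by rwa [Metric.mem_ball] at hz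
  have h3 : r ≤ q i - p i := Finset.inf'_le _ (Finset.mem_univ i)
  have h4 : |z i - q i| < r := by
    rw [← Real.dist_eq]
    exact lt_of_le_of_lt h1 h2
  have := abs_lt.1 h4
  linarith [this.1]

lemma exists_decomp {a a' : Ideal (MvPolynomial (Fin n) K)}
    (ha : IsMonomialIdeal a) (ha' : IsMonomialIdeal a') {v : Fin n →₀ ℕ}
    (hv : monomial v (1:K) ∈ a * a') :
    ∃ v1 v2, v = v1 + v2 ∧ monomial v1 (1:K) ∈ a ∧ monomial v2 (1:K) ∈ a' := by
  rw [ha, ha', Ideal.span_mul_span'] at hv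
  set S := {v : Fin n →₀ ℕ | monomial v (1 : K) ∈ a} with hS
  set S' := {v : Fin n →₀ ℕ | monomial v (1 : K) ∈ a'} with hS'
  have hset : ((fun v : Fin n →₀ ℕ => (monomial v (1:K) : MvPolynomial (Fin n) K)) '' S) *
      ((fun v : Fin n →₀ ℕ => (monomial v (1:K) : MvPolynomial (Fin n) K)) '' S')
      = (fun v : Fin n →₀ ℕ => (monomial v (1:K) : MvPolynomial (Fin n) K)) '' (S + S') := by
    ext x
    simp only [Set.mem_mul, Set.mem_image, Set.mem_add]
    constructor
    · rintro ⟨_, ⟨v1, hv1, rfl⟩, _, ⟨v2, hv2, rfl⟩, rfl⟩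
      exact ⟨v1 + v2, ⟨v1, hv1, v2, hv2, rfl⟩, by rw [monomial_mul, one_mul]⟩
    · rintro ⟨_, ⟨v1, hv1, v2, hv2, rfl⟩, rfl⟩
      exact ⟨_, ⟨v1, hv1, rfl⟩, _, ⟨v2, hv2, rfl⟩, by rw [monomial_mul, one_mul]⟩
  rw [hset] at hv
  obtain ⟨w, ⟨v1, hv1, v2, hv2, rfl⟩, hle⟩ :=
    mem_ideal_span_monomial_image.1 hv v (by simp [support_monomial])
  have hco : ∀ i, v1 i + v2 i ≤ v i := by
    intro i
    have := hle i
    simpa using this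
  refine ⟨v1, v - v1, ?_, hv1, ?_⟩
  · ext i
    have := hco i
    simp only [Finsupp.add_apply, Finsupp.tsub_apply]
    omega
  · have heq : v - v1 = (v - v1 - v2) + v2 := by
      ext i
      have := hco i
      simp only [Finsupp.add_apply, Finsupp.tsub_apply]
      omega
    have : monomial (v - v1) (1:K) = monomial (v - v1 - v2) 1 * monomial v2 1 := by
      rw [monomial_mul, one_mul, ← heq]
    rw [this]
    exact Ideal.mul_mem_left _ _ hv2

lemma newton_mul_subset {a a' : Ideal (MvPolynomial (Fin n) K)}
    (ha : IsMonomialIdeal a) (ha' : IsMonomialIdeal a') :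
    newton (a * a') ⊆ newton a + newton a' := by
  apply convexHull_min
  · rintro _ ⟨v, hv, rfl⟩
    obtain ⟨v1, v2, rfl, h1, h2⟩ := exists_decomp ha ha' hv
    have := Set.add_mem_add (coe_mem_newton h1) (coe_mem_newton h2)
    convert this using 1
    funext i
    simp [Finsupp.add_apply]
  · exact (convex_convexHull ℝ _).add (convex_convexHull ℝ _)

end Aux

/-- Subadditivity for multiplier ideals of monomial ideals:
`I(λ·(a·a')) ⊆ I(λ·a)·I(λ·a')`. -/
theorem multiplierIdeal_mul_le
    {K : Type*} [Field K] {n : ℕ} (hn : 1 ≤ n)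
    (a a' : Ideal (MvPolynomial (Fin n) K))
    (ha : IsMonomialIdeal a) (ha' : IsMonomialIdeal a')
    (lam : ℚ) (hlam : 0 < lam) :
    multiplierIdeal ((lam : ℝ)) (a * a') ≤
      multiplierIdeal ((lam : ℝ)) a * multiplierIdeal ((lam : ℝ)) a' := by
  set L : ℝ := (lam : ℝ) with hLdef
  have hL : 0 < L := by rw [hLdef]; exact_mod_cast hlam
  rw [multiplierIdeal, Ideal.span_le]
  rintro _ ⟨v, hv, rfl⟩
  rw [Set.mem_setOf_eq] at hv
  -- find a point slightly below v + e still in L • newton (a*a')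
  obtain ⟨ε, hε, hball⟩ := Metric.mem_nhds_iff.1 (mem_interior_iff_mem_nhds.1 hv)
  have hy : (fun i => (v i : ℝ) + 1 - ε/2) ∈ L • newton (a * a') := by
    apply hball
    rw [Metric.mem_ball, dist_pi_lt_iff hε]
    intro i
    rw [Real.dist_eq]
    rw [show (v i : ℝ) + 1 - ε/2 - ((v i : ℝ) + 1) = -(ε/2) by ring]
    rw [abs_neg, abs_of_pos (by linarith)]
    linarith
  obtain ⟨z, hz, hzeq⟩ := Set.mem_smul_set.1 hy
  obtain ⟨p, hp, p', hp', hpp⟩ := Set.mem_add.1 (newton_mul_subset ha ha' hz)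
  have hp0 : ∀ i, 0 ≤ p i := newton_nonneg hp
  have hp0' : ∀ i, 0 ≤ p' i := newton_nonneg hp'
  have E1 : ∀ i, L * p i + L * p' i = (v i : ℝ) + 1 - ε/2 := by
    intro i
    have h1 := congrFun hzeq i
    have h2 := congrFun hpp i
    simp only [Pi.smul_apply, smul_eq_mul, Pi.add_apply] at h1 h2
    rw [← h1, ← h2]
    ring
  set nf : Fin n → ℕ := fun i => ⌊L * p i⌋₊ with hnf
  have hfle : ∀ i, (nf i : ℝ) ≤ L * p i := fun i => Nat.floor_le (mul_nonneg hL.le (hp0 i))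
  have hflt : ∀ i, L * p i < nf i + 1 := fun i => Nat.lt_floor_add_one _
  have hnfv : ∀ i, nf i ≤ v i := by
    intro i
    have h1 : L * p i < (v i : ℝ) + 1 := by
      have := E1 i
      have := mul_nonneg hL.le (hp0' i)
      linarith
    have : nf i < v i + 1 := by
      rw [hnf]
      rw [Nat.floor_lt (mul_nonneg hL.le (hp0 i))]
      push_cast
      linarith
    omega
  set u1 : Fin n →₀ ℕ := Finsupp.equivFunOnFinite.symm nf with hu1
  set u2 : Fin n →₀ ℕ := Finsupp.equivFunOnFinite.symm (fun i => v i - nf i) with hu2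
  have hu1a : ∀ i, u1 i = nf i := fun i => rfl
  have hu2a : ∀ i, u2 i = v i - nf i := fun i => rfl
  have h12 : u1 + u2 = v := by
    ext i
    rw [Finsupp.add_apply, hu1a, hu2a]
    have := hnfv i
    omega
  have m1 : monomial u1 (1:K) ∈ multiplierIdeal L a := by
    apply Ideal.subset_span
    refine ⟨u1, ?_, rfl⟩
    rw [Set.mem_setOf_eq, interior_smul₀ (ne_of_gt hL)]
    have hq : (fun i => L⁻¹ * ((nf i : ℝ) + 1)) ∈ interior (newton a) := by
      refine newton_mem_interior hn hp fun i => ?_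
      rw [show p i = L⁻¹ * (L * p i) by field_simp]
      exact mul_lt_mul_of_pos_left (hflt i) (inv_pos.2 hL)
    have := Set.smul_mem_smul_set (a := L) hq
    convert this using 1
    funext i
    rw [hu1a]
    simp only [Pi.smul_apply, smul_eq_mul]
    field_simp
  have m2 : monomial u2 (1:K) ∈ multiplierIdeal L a' := by
    apply Ideal.subset_span
    refine ⟨u2, ?_, rfl⟩
    rw [Set.mem_setOf_eq, interior_smul₀ (ne_of_gt hL)]
    have hq : (fun i => L⁻¹ * ((u2 i : ℝ) + 1)) ∈ interior (newton a') := by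
      refine newton_mem_interior hn hp' fun i => ?_
      have hcast : (u2 i : ℝ) = (v i : ℝ) - nf i := by
        rw [hu2a]
        have := hnfv i
        push_cast [Nat.cast_sub this]
        ring
      have hlt : L * p' i < (u2 i : ℝ) + 1 := by
        rw [hcast]
        have := E1 i
        have := hfle i
        linarith
      rw [show p' i = L⁻¹ * (L * p' i) by field_simp]
      exact mul_lt_mul_of_pos_left hlt (inv_pos.2 hL)
    have := Set.smul_mem_smul_set (a := L) hq
    convert this using 1
    funext i
    simp only [Pi.smul_apply, smul_eq_mul]
    field_simp
  have key := Ideal.mul_mem_mul m1 m2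
  rw [monomial_mul, one_mul, h12] at key
  exact key
end

section
/- Let a_• be a saturated graded sequence of monomial ideals in R = K[X_1,…,X_n], each supported at the origin, and let b_• be the corresponding sequence of asymptotic multiplier ideals. Then X_1···X_n ∈ (a_m : b_m) for every m ≥ 1, and the graded sequence of colon ideals c_m := (a_m : b_m) satisfies e(c_•) = 0. -/
open Filter MvPolynomial
open scoped Pointwise

section Aux

open Finsupp

variable {K : Type*} [Field K] {n : ℕ}

private lemma monomial_prod_one' {ι : Type*} (s : Finset ι) (g : ι → (Fin n →₀ ℕ)) :
    (∏ i ∈ s, (monomial (g i) (1 : K) : MvPolynomial (Fin n) K))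
      = monomial (∑ i ∈ s, g i) (1 : K) := by
  classical
  induction s using Finset.induction with
  | empty => simp
  | insert _ _ h ih =>
    rw [Finset.prod_insert h, Finset.sum_insert h, ih, monomial_mul, one_mul]

private lemma prod_X_eq_monomial'' :
    (∏ i : Fin n, X i : MvPolynomial (Fin n) K)
      = monomial (∑ i : Fin n, Finsupp.single i 1) 1 := by
  rw [← monomial_prod_one']
  simp [X]

private lemma E_apply' (j : Fin n) :
    (∑ i : Fin n, Finsupp.single i 1 : Fin n →₀ ℕ) j = 1 := by
  classical
  rw [Finsupp.finset_sum_apply]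
  simp [Finsupp.single_apply]

private lemma pow_le_seq' (a : ℕ → Ideal (MvPolynomial (Fin n) K))
    (hgraded : ∀ p q : ℕ, a p * a q ≤ a (p + q)) :
    ∀ s p : ℕ, 1 ≤ s → (a p) ^ s ≤ a (s * p) := by
  intro s
  induction s with
  | zero => intro p h; exact absurd h (by omega)
  | succ s ih =>
    intro p _
    rcases Nat.eq_zero_or_pos s with h | h
    · subst h; rw [zero_add, pow_one, one_mul]
    · have hs : 1 ≤ s := h
      calc (a p) ^ (s+1) = (a p)^s * a p := by rw [pow_succ]
        _ ≤ a (s*p) * a p := Ideal.mul_mono_left (ih p hs)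
        _ ≤ a (s*p + p) := hgraded _ _
        _ = a ((s+1)*p) := by ring_nf

private lemma smul_newton_subset' (a : ℕ → Ideal (MvPolynomial (Fin n) K))
    (hgraded : ∀ p q : ℕ, a p * a q ≤ a (p + q)) (s p : ℕ) (hs : 1 ≤ s) :
    (s : ℝ) • newton (a p) ⊆ newton (a (s * p)) := by
  rw [newton, ← convexHull_smul]
  apply convexHull_mono
  rintro x ⟨y, ⟨v, hv, rfl⟩, rfl⟩
  refine ⟨s • v, ?_, ?_⟩
  · have h : (monomial (s • v) (1:K) : MvPolynomial (Fin n) K) = (monomial v 1) ^ s := by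
      rw [monomial_pow, one_pow]
    simp only [Set.mem_setOf_eq, h]
    exact pow_le_seq' a hgraded s p hs (Ideal.pow_mem_pow hv s)
  · funext i
    simp only [Pi.smul_apply, smul_eq_mul, Finsupp.smul_apply]
    push_cast
    ring

private lemma key_mem' (a : ℕ → Ideal (MvPolynomial (Fin n) K))
    (hgraded : ∀ p q : ℕ, a p * a q ≤ a (p + q))
    (hsat : ∀ m r : ℕ, 1 ≤ m → 1 ≤ r → ∀ v : Fin n →₀ ℕ,
      (fun i => ((r : ℝ)) * (v i : ℝ)) ∈ newton (a (m * r)) →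
        monomial v (1 : K) ∈ a m)
    (m p : ℕ) (hm : 1 ≤ m) (hp : 1 ≤ p) (v : Fin n →₀ ℕ)
    (hv : (fun i => (v i : ℝ) + 1) ∈ interior (((m : ℝ) / (p : ℝ)) • newton (a p))) :
    monomial (v + ∑ i : Fin n, Finsupp.single i 1) (1 : K) ∈ a m := by
  have hp0 : (p : ℝ) ≠ 0 := by positivity
  have hmem := interior_subset hv
  rw [Set.mem_smul_set] at hmem
  obtain ⟨y, hy, hxy⟩ := hmem
  have key : (fun i => (p : ℝ) * (((v + ∑ i : Fin n, Finsupp.single i 1) : Fin n →₀ ℕ) i : ℝ))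
      ∈ newton (a (m * p)) := by
    have h1 : (fun i => (p : ℝ) * (((v + ∑ i : Fin n, Finsupp.single i 1) : Fin n →₀ ℕ) i : ℝ))
        = (m : ℝ) • y := by
      funext i
      have h2 := congrFun hxy i
      simp only [Pi.smul_apply, smul_eq_mul] at h2 ⊢
      rw [Finsupp.add_apply, E_apply']
      push_cast
      rw [← h2]
      field_simp
    rw [h1]
    exact smul_newton_subset' a hgraded m p hm (Set.smul_mem_smul_set hy)
  exact hsat m p hm hp _ key

private lemma monomial_mem_pow_max' (w : Fin n →₀ ℕ) (d : ℕ) (hd : d ≤ ∑ i, w i) :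
    (monomial w (1:K) : MvPolynomial (Fin n) K) ∈
      (Ideal.span (Set.range (X : Fin n → MvPolynomial (Fin n) K))) ^ d := by
  classical
  set M := Ideal.span (Set.range (X : Fin n → MvPolynomial (Fin n) K))
  have hw : (monomial w (1:K) : MvPolynomial (Fin n) K) = ∏ i : Fin n, (X i) ^ (w i) := by
    have h : ∀ i : Fin n, (X i : MvPolynomial (Fin n) K) ^ (w i)
        = monomial (Finsupp.single i (w i)) 1 := fun i => X_pow_eq_monomial
    simp_rw [h, monomial_prod_one']
    have hws : (∑ i : Fin n, Finsupp.single i (w i)) = w := by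
      ext j
      rw [Finsupp.finset_sum_apply]
      simp [Finsupp.single_apply]
    rw [hws]
  rw [hw]
  have h1 : (∏ i : Fin n, (X i : MvPolynomial (Fin n) K) ^ (w i)) ∈ ∏ i : Fin n, M ^ (w i) := by
    apply Ideal.prod_mem_prod
    intro i _
    exact Ideal.pow_mem_pow (Ideal.subset_span (Set.mem_range_self i)) _
  have h2 : (∏ i : Fin n, M ^ (w i)) = M ^ (∑ i, w i) := Finset.prod_pow_eq_pow_sum _ _ _
  rw [h2] at h1
  exact Ideal.pow_le_pow_right hd h1

private lemma mem_pow_colon' (hn : 1 ≤ n) (c : Ideal (MvPolynomial (Fin n) K)) (Km k : ℕ)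
    (hE : (monomial (∑ i : Fin n, Finsupp.single i 1) (1:K) : MvPolynomial (Fin n) K) ∈ c)
    (hM : (Ideal.span (Set.range (X : Fin n → MvPolynomial (Fin n) K))) ^ Km ≤ c)
    (u : Fin n →₀ ℕ)
    (hu : ¬ ((∃ i, u i < k) ∧ (∀ j, u j < (1 + Km) * k))) :
    (monomial u (1:K) : MvPolynomial (Fin n) K) ∈ c ^ k := by
  classical
  haveI : Nonempty (Fin n) := ⟨⟨0, hn⟩⟩
  set E : Fin n →₀ ℕ := ∑ i : Fin n, Finsupp.single i 1 with hEdef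
  have hEapp : ∀ j, E j = 1 := fun j => E_apply' j
  set t := Finset.univ.inf' Finset.univ_nonempty (fun i => u i) with ht
  have htle : ∀ i, t ≤ u i := fun i => Finset.inf'_le _ (Finset.mem_univ i)
  obtain ⟨i0, -, hi0⟩ := Finset.exists_mem_eq_inf' (Finset.univ_nonempty) (fun i => u i)
  have hsplit : ∀ s : ℕ, (∀ i, s ≤ u i) →
      (monomial u (1:K) : MvPolynomial (Fin n) K)
        = (monomial E 1) ^ s * monomial (u - s • E) 1 := by
    intro s hs
    rw [monomial_pow, one_pow, monomial_mul, one_mul]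
    have harg : s • E + (u - s • E) = u := by
      ext j
      have h := hs j
      rw [Finsupp.add_apply, Finsupp.smul_apply, Finsupp.tsub_apply, Finsupp.smul_apply, hEapp]
      simp only [smul_eq_mul, mul_one]
      omega
    rw [harg]
  by_cases hcase : k ≤ t
  · rw [hsplit k (fun i => le_trans hcase (htle i))]
    exact Ideal.mul_mem_right _ _ (Ideal.pow_mem_pow hE k)
  · push_neg at hcase
    have h1 : ∃ i, u i < k := ⟨i0, by omega⟩
    have h2 : ∃ j, (1 + Km) * k ≤ u j := by
      by_contra h
      push_neg at h
      exact hu ⟨h1, h⟩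
    obtain ⟨j, hj⟩ := h2
    rw [hsplit t htle]
    have hsum : Km * (k - t) ≤ ∑ i, (u - t • E) i := by
      have hji : (u - t • E) j = u j - t := by
        simp [Finsupp.tsub_apply, hEapp]
      have h3 : (u - t • E) j ≤ ∑ i, (u - t • E) i :=
        Finset.single_le_sum (f := fun i => (u - t • E) i) (fun i _ => Nat.zero_le _)
          (Finset.mem_univ j)
      have hjt : Km * (k - t) ≤ u j - t := by
        have h4 : Km * (k - t) ≤ Km * k := Nat.mul_le_mul_left _ (Nat.sub_le _ _)
        have hexp : (1 + Km) * k = k + Km * k := by ring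
        omega
      omega
    have hw : (monomial (u - t • E) (1:K) : MvPolynomial (Fin n) K) ∈ c ^ (k - t) := by
      have h5 := monomial_mem_pow_max' (K := K) (u - t • E) (Km * (k - t)) hsum
      rw [pow_mul] at h5
      exact (Ideal.pow_right_mono hM (k - t)) h5
    have hEt : ((monomial E (1:K) : MvPolynomial (Fin n) K)) ^ t ∈ c ^ t :=
      Ideal.pow_mem_pow hE t
    have h6 := Ideal.mul_mem_mul hEt hw
    rwa [← pow_add, Nat.add_sub_cancel' (le_of_lt hcase)] at h6

private lemma finrank_quotient_le' (I : Ideal (MvPolynomial (Fin n) K))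
    (S : Finset (Fin n →₀ ℕ))
    (hS : ∀ u : Fin n →₀ ℕ, u ∉ S → (monomial u (1:K) : MvPolynomial (Fin n) K) ∈ I) :
    Module.finrank K (MvPolynomial (Fin n) K ⧸ I) ≤ S.card := by
  classical
  set φ := (Ideal.Quotient.mkₐ K I).toLinearMap with hφ
  have hsurj : Function.Surjective φ := Ideal.Quotient.mkₐ_surjective K I
  set v : S → (MvPolynomial (Fin n) K ⧸ I) := fun u => φ (monomial u.1 1) with hv
  have hspan : Submodule.span K (Set.range v) = ⊤ := by
    have hmono : Submodule.span K
        (Set.range fun u : Fin n →₀ ℕ => (monomial u (1:K) : MvPolynomial (Fin n) K)) = ⊤ := by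
      have h := (MvPolynomial.basisMonomials (Fin n) K).span_eq
      rwa [MvPolynomial.coe_basisMonomials] at h
    have htop : Submodule.span K
        (φ '' (Set.range fun u : Fin n →₀ ℕ => (monomial u (1:K) : MvPolynomial (Fin n) K)))
          = ⊤ := by
      rw [Submodule.span_image, hmono, Submodule.map_top, LinearMap.range_eq_top.mpr hsurj]
    rw [eq_top_iff, ← htop]
    apply Submodule.span_le.mpr
    rintro x ⟨y, ⟨u, rfl⟩, rfl⟩
    by_cases hu : u ∈ S
    · exact Submodule.subset_span ⟨⟨u, hu⟩, rfl⟩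
    · have h0 : φ (monomial u 1) = 0 := by
        show Ideal.Quotient.mkₐ K I (monomial u 1) = 0
        rw [Ideal.Quotient.mkₐ_eq_mk]
        exact (Ideal.Quotient.eq_zero_iff_mem).mpr (hS u hu)
      rw [h0]
      exact Submodule.zero_mem _
  have h := finrank_le_of_span_eq_top hspan
  rwa [Fintype.card_coe] at h

private lemma count_bound' (k D : ℕ) :
    (((Fintype.piFinset fun _ : Fin n => Finset.range D).filter
        (fun f : Fin n → ℕ => ∃ i, f i < k)).card) ≤ n * (k * D ^ (n - 1)) := by
  classical
  set T := ((Fintype.piFinset fun _ : Fin n => Finset.range D).filter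
      (fun f : Fin n → ℕ => ∃ i, f i < k)) with hT
  have hsub : T ⊆ Finset.univ.biUnion (fun i : Fin n =>
      Fintype.piFinset (fun j => Finset.range (if j = i then min k D else D))) := by
    intro f hf
    rw [hT, Finset.mem_filter] at hf
    obtain ⟨hf1, i, hi⟩ := hf
    rw [Fintype.mem_piFinset] at hf1
    apply Finset.mem_biUnion.mpr ⟨i, Finset.mem_univ i, ?_⟩
    rw [Fintype.mem_piFinset]
    intro j
    rw [Finset.mem_range]
    by_cases hji : j = i
    · subst hji
      simp only [if_pos rfl]
      exact lt_min hi (Finset.mem_range.mp (hf1 j))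
    · rw [if_neg hji]
      have h := hf1 j
      rwa [Finset.mem_range] at h
  calc T.card ≤ _ := Finset.card_le_card hsub
    _ ≤ ∑ i : Fin n,
        (Fintype.piFinset (fun j => Finset.range (if j = i then min k D else D))).card :=
        Finset.card_biUnion_le
    _ ≤ ∑ _i : Fin n, k * D ^ (n - 1) := by
        apply Finset.sum_le_sum
        intro i _
        rw [Fintype.card_piFinset]
        simp only [Finset.card_range]
        rw [← Finset.mul_prod_erase Finset.univ _ (Finset.mem_univ i), if_pos rfl]
        have h2 : ∏ j ∈ Finset.univ.erase i, (if j = i then min k D else D)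
            = D ^ (n - 1) := by
          rw [Finset.prod_congr rfl (fun j hj => if_neg (Finset.ne_of_mem_erase hj)),
            Finset.prod_const, Finset.card_erase_of_mem (Finset.mem_univ i), Finset.card_univ,
            Fintype.card_fin]
        rw [h2]
        exact Nat.mul_le_mul_right _ (min_le_left _ _)
    _ = n * (k * D ^ (n - 1)) := by
        rw [Finset.sum_const, Finset.card_univ, Fintype.card_fin, smul_eq_mul]

private lemma dim_bound' (hn : 1 ≤ n) (c : Ideal (MvPolynomial (Fin n) K)) (Km k : ℕ)
    (hE : (monomial (∑ i : Fin n, Finsupp.single i 1) (1:K) : MvPolynomial (Fin n) K) ∈ c)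
    (hM : (Ideal.span (Set.range (X : Fin n → MvPolynomial (Fin n) K))) ^ Km ≤ c) :
    Module.finrank K (MvPolynomial (Fin n) K ⧸ c ^ k)
      ≤ n * (1 + Km) ^ (n - 1) * k ^ n := by
  classical
  set D := (1 + Km) * k with hD
  set T := ((Fintype.piFinset fun _ : Fin n => Finset.range D).filter
      (fun f : Fin n → ℕ => ∃ i, f i < k)) with hT
  set S : Finset (Fin n →₀ ℕ) := T.image (Finsupp.equivFunOnFinite.symm) with hS
  have hcard : S.card ≤ n * (1 + Km) ^ (n - 1) * k ^ n := by
    have h1 : S.card ≤ T.card := Finset.card_image_le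
    have h2 := count_bound' (n := n) k D
    rw [← hT] at h2
    have h3 : k * D ^ (n - 1) = (1 + Km) ^ (n - 1) * k ^ n := by
      rw [hD, mul_pow]
      have h4 : k * k ^ (n - 1) = k ^ n := by
        conv_rhs => rw [show n = (n - 1) + 1 by omega]
        rw [pow_succ]
        ring
      calc k * ((1 + Km) ^ (n-1) * k ^ (n-1)) = (1 + Km) ^ (n-1) * (k * k ^ (n-1)) := by ring
        _ = (1 + Km) ^ (n-1) * k ^ n := by rw [h4]
    calc S.card ≤ T.card := h1
      _ ≤ n * (k * D ^ (n-1)) := h2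
      _ = n * (1 + Km) ^ (n-1) * k ^ n := by rw [h3]; ring
  refine le_trans (finrank_quotient_le' (c ^ k) S ?_) hcard
  intro u hu
  apply mem_pow_colon' hn c Km k hE hM u
  intro ⟨h1, h2⟩
  apply hu
  rw [hS, Finset.mem_image]
  refine ⟨Finsupp.equivFunOnFinite u, ?_, Equiv.symm_apply_apply _ _⟩
  rw [hT, Finset.mem_filter, Fintype.mem_piFinset]
  exact ⟨fun j => Finset.mem_range.mpr (h2 j), h1⟩

private lemma limsup_bounds' {u : ℕ → ℝ} {B : ℝ} (h0 : ∀ᶠ k in atTop, 0 ≤ u k)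
    (hB : ∀ᶠ k in atTop, u k ≤ B) :
    limsup u atTop ≤ B ∧ 0 ≤ limsup u atTop :=
  ⟨limsup_le_of_le (isCoboundedUnder_le_of_eventually_le atTop h0) hB,
   le_limsup_of_frequently_le h0.frequently ⟨B, eventually_map.2 hB⟩⟩

end Aux

/-- For a saturated graded sequence `a_•` of zero-dimensional monomial ideals with
asymptotic multiplier ideals `b_•`, the monomial `X_1⋯X_n` lies in every colon
ideal `(a_m : b_m)`, and the graded sequence `c_m = (a_m : b_m)` has multiplicity
zero. -/
theorem colon_asympMultiplierIdeal_multSeq_zero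
    {K : Type*} [Field K] {n : ℕ} (hn : 1 ≤ n)
    (a : ℕ → Ideal (MvPolynomial (Fin n) K))
    (hgraded : ∀ p q : ℕ, a p * a q ≤ a (p + q))
    (hmon : ∀ m : ℕ, IsMonomialIdeal (a m))
    (hsupp : ∀ m : ℕ, SupportedAtOrigin (a m))
    (hsat : ∀ m r : ℕ, 1 ≤ m → 1 ≤ r → ∀ v : Fin n →₀ ℕ,
      (fun i => ((r : ℝ)) * (v i : ℝ)) ∈ newton (a (m * r)) →
        monomial v (1 : K) ∈ a m)
    (b : ℕ → Ideal (MvPolynomial (Fin n) K))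
    (hb : ∀ m : ℕ, 1 ≤ m → b m = asympMultiplierIdeal a m) :
    (∀ m : ℕ, 1 ≤ m → (∏ i : Fin n, X i : MvPolynomial (Fin n) K) ∈ (a m).colon (b m)) ∧
    polyMultSeq (fun m => (a m).colon (b m)) = 0 := by
  classical
  set R := MvPolynomial (Fin n) K
  set E : Fin n →₀ ℕ := ∑ i : Fin n, Finsupp.single i 1 with hE
  have hprodX : (∏ i : Fin n, X i : MvPolynomial (Fin n) K) = monomial E 1 :=
    prod_X_eq_monomial''
  -- Part 1
  have part1 : ∀ m : ℕ, 1 ≤ m →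
      (∏ i : Fin n, X i : MvPolynomial (Fin n) K) ∈ (a m).colon (b m) := by
    intro m hm
    have hle : b m ≤ Submodule.comap
        (LinearMap.mulLeft (MvPolynomial (Fin n) K) (∏ i : Fin n, X i : MvPolynomial (Fin n) K))
        (a m) := by
      rw [hb m hm, asympMultiplierIdeal, Ideal.span_le]
      rintro x ⟨v, hv, rfl⟩
      obtain ⟨p, hp, hvp⟩ := hv
      simp only [SetLike.mem_coe, Submodule.mem_comap, LinearMap.mulLeft_apply]
      rw [hprodX, monomial_mul, one_mul, add_comm]
      exact key_mem' a hgraded hsat m p hm hp v hvp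
    refine Submodule.mem_colon.mpr (fun f hf => ?_)
    rw [smul_eq_mul]
    exact hle hf
  refine ⟨part1, ?_⟩
  -- Part 2
  set c : ℕ → Ideal (MvPolynomial (Fin n) K) := fun m => (a m).colon (b m) with hc
  have hac : ∀ m, a m ≤ c m := by
    intro m
    refine fun x hx => Submodule.mem_colon.mpr (fun p _ => ?_)
    rw [smul_eq_mul]
    exact Ideal.mul_mem_right p _ hx
  obtain ⟨k1, hk1⟩ := hsupp 1
  set M := Ideal.span (Set.range (X : Fin n → MvPolynomial (Fin n) K)) with hM
  have hMm : ∀ m : ℕ, 1 ≤ m → M ^ (k1 * m) ≤ c m := by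
    intro m hm
    calc M ^ (k1 * m) = (M ^ k1) ^ m := by rw [← pow_mul]
      _ ≤ (a 1) ^ m := Ideal.pow_right_mono hk1 m
      _ ≤ a (m * 1) := pow_le_seq' a hgraded m 1 hm
      _ = a m := by rw [mul_one]
      _ ≤ c m := hac m
  have hEc : ∀ m : ℕ, 1 ≤ m → (monomial E (1:K) : MvPolynomial (Fin n) K) ∈ c m := by
    intro m hm
    have := part1 m hm
    rwa [hprodX] at this
  -- bound on polyMult (c m)
  have hmult : ∀ m : ℕ, 1 ≤ m →
      polyMult (c m) ≤ ((n.factorial * n * (1 + k1 * m) ^ (n - 1) : ℕ) : ℝ) ∧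
        0 ≤ polyMult (c m) := by
    intro m hm
    apply limsup_bounds'
    · filter_upwards [eventually_ge_atTop 1] with k hk
      positivity
    · filter_upwards [eventually_ge_atTop 1] with k hk
      have hdim := dim_bound' hn (c m) (k1 * m) k (hEc m hm) (hMm m hm)
      have hkpos : (0:ℝ) < (k:ℝ) ^ n := by positivity
      rw [div_le_iff₀ hkpos]
      have hnat : n.factorial * Module.finrank K (MvPolynomial (Fin n) K ⧸ (c m) ^ k)
          ≤ n.factorial * n * (1 + k1 * m) ^ (n - 1) * k ^ n := by
        calc n.factorial * Module.finrank K (MvPolynomial (Fin n) K ⧸ (c m) ^ k)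
            ≤ n.factorial * (n * (1 + k1 * m) ^ (n - 1) * k ^ n) :=
              Nat.mul_le_mul_left _ hdim
          _ = n.factorial * n * (1 + k1 * m) ^ (n - 1) * k ^ n := by ring
      exact_mod_cast hnat
  -- squeeze
  rw [polyMultSeq]
  apply Filter.Tendsto.limsup_eq
  have hupper : Tendsto (fun m : ℕ =>
      ((n.factorial * n * (1 + k1) ^ (n - 1) : ℕ) : ℝ) / (m : ℝ)) atTop (nhds 0) :=
    tendsto_const_div_atTop_nhds_zero_nat _
  apply tendsto_of_tendsto_of_tendsto_of_le_of_le' tendsto_const_nhds hupper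
  · filter_upwards [eventually_ge_atTop 1] with m hm
    have h1 := (hmult m hm).2
    have h2 : (0:ℝ) ≤ (m:ℝ) ^ n := by positivity
    exact div_nonneg h1 h2
  · filter_upwards [eventually_ge_atTop 1] with m hm
    have hmpos : (0:ℝ) < (m:ℝ) := by exact_mod_cast hm
    have hmn : (0:ℝ) < (m:ℝ) ^ n := by positivity
    have h1 := (hmult m hm).1
    have hnat2 : n.factorial * n * (1 + k1 * m) ^ (n - 1) * m
        ≤ n.factorial * n * (1 + k1) ^ (n - 1) * m ^ n := by
      have hbnd : 1 + k1 * m ≤ (1 + k1) * m := by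
        have hx : (1 + k1) * m = m + k1 * m := by ring
        omega
      have hp := Nat.pow_le_pow_left hbnd (n - 1)
      rw [mul_pow] at hp
      have hmm : m ^ (n - 1) * m = m ^ n := by
        conv_rhs => rw [show n = (n - 1) + 1 by omega]
        rw [pow_succ]
      calc n.factorial * n * (1 + k1 * m) ^ (n - 1) * m
          ≤ n.factorial * n * ((1 + k1) ^ (n - 1) * m ^ (n - 1)) * m :=
            Nat.mul_le_mul_right _ (Nat.mul_le_mul_left _ hp)
        _ = n.factorial * n * (1 + k1) ^ (n - 1) * (m ^ (n - 1) * m) := by ring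
        _ = n.factorial * n * (1 + k1) ^ (n - 1) * m ^ n := by rw [hmm]
    calc polyMult (c m) / (m:ℝ) ^ n
        ≤ ((n.factorial * n * (1 + k1 * m) ^ (n - 1) : ℕ) : ℝ) / (m : ℝ) ^ n := by
          gcongr
      _ ≤ ((n.factorial * n * (1 + k1) ^ (n - 1) : ℕ) : ℝ) / (m : ℝ) := by
          rw [div_le_div_iff₀ hmn hmpos]
          exact_mod_cast hnat2
end

section
/- Let a ⊆ R = K[X_1,…,X_n] be a proper monomial ideal supported at the origin, and set t := inf{μ > 0 : μ·(1,…,1) ∈ P_a}, so that the log canonical threshold of a is lc(a) = 1/t. Then e(a) ≥ n^n/lc(a)^n, i.e., e(a) ≥ (n·t)^n. -/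
open Filter MvPolynomial
open scoped Pointwise

section AuxCounting
open Finset

lemma pow_sub_pow_le_aux {a b : ℝ} (hb : 0 ≤ b) (hba : b ≤ a) (m : ℕ) :
    a ^ (m + 1) - b ^ (m + 1) ≤ (m + 1) * a ^ m * (a - b) := by
  have ha : 0 ≤ a := hb.trans hba
  have h := geom_sum₂_mul a b (m + 1)
  rw [← h]
  have hsum : (∑ i ∈ range (m + 1), a ^ i * b ^ (m - i)) ≤ (m + 1) * a ^ m := by
    calc (∑ i ∈ range (m + 1), a ^ i * b ^ (m - i))
        ≤ ∑ i ∈ range (m + 1), a ^ m := by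
          apply Finset.sum_le_sum
          intro i hi
          rw [Finset.mem_range] at hi
          calc a ^ i * b ^ (m - i) ≤ a ^ i * a ^ (m - i) := by
                apply mul_le_mul_of_nonneg_left (pow_le_pow_left₀ hb hba _) (pow_nonneg ha _)
            _ = a ^ m := by
                rw [← pow_add]
                congr 1
                omega
      _ = (m + 1) * a ^ m := by
          rw [Finset.sum_const, Finset.card_range, nsmul_eq_mul]
          push_cast
          ring
  have hab : 0 ≤ a - b := sub_nonneg.2 hba
  calc (∑ i ∈ range (m + 1), a ^ i * b ^ (m + 1 - 1 - i)) * (a - b)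
      ≤ ((m + 1) * a ^ m) * (a - b) := by
        apply mul_le_mul_of_nonneg_right _ hab
        simpa using hsum
    _ = (m + 1) * a ^ m * (a - b) := by ring

lemma simplexFinite (m : ℕ) (μ : Fin m → ℝ) (hμ : ∀ i, 0 < μ i) (s : ℝ) :
    {u : Fin m → ℕ | ∑ i, μ i * u i < s}.Finite := by
  apply Set.Finite.subset (Set.Finite.pi (fun i : Fin m => Set.finite_Iio (Nat.ceil (s / μ i))))
  intro u hu
  simp only [Set.mem_setOf_eq] at hu
  intro i _
  simp only [Set.mem_Iio]
  rw [Nat.lt_ceil]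
  rw [lt_div_iff₀ (hμ i), mul_comm]
  calc μ i * (u i : ℝ) ≤ ∑ j, μ j * u j := by
        apply Finset.single_le_sum (fun j _ => ?_) (Finset.mem_univ i)
        exact mul_nonneg (hμ j).le (Nat.cast_nonneg _)
    _ < s := hu

lemma simplex_ncard : ∀ (m : ℕ) (μ : Fin m → ℝ), (∀ i, 0 < μ i) → ∀ s : ℝ, 0 < s →
    s ^ m ≤ (Nat.factorial m) * ((∏ i, μ i) *
      {u : Fin m → ℕ | ∑ i, μ i * u i < s}.ncard) := by
  intro m
  induction m with
  | zero =>
    intro μ hμ s hs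
    have : {u : Fin 0 → ℕ | ∑ i, μ i * u i < s} = Set.univ := by
      ext u; simp [hs]
    rw [this, Set.ncard_univ]
    simp [Nat.card_unique]
  | succ m IH =>
    intro μ hμ s hs
    set c := μ 0 with hc
    have hcpos : 0 < c := hμ 0
    set ν : Fin m → ℝ := fun i => μ i.succ with hν
    have hνpos : ∀ i, 0 < ν i := fun i => hμ i.succ
    set N := Nat.ceil (s / c) with hN
    -- the finsets
    set F := (simplexFinite (m+1) μ hμ s).toFinset with hF
    have hconsinj : ∀ j : ℕ, Function.Injective
        (fun v : Fin m → ℕ => (Fin.cons j v : Fin (m+1) → ℕ)) := by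
      intro j v w h
      funext i
      have := congrArg (fun f => f i.succ) h
      simpa using this
    set G : ℕ → Finset (Fin (m+1) → ℕ) :=
      fun j => ((simplexFinite m ν hνpos (s - c * j)).toFinset).image
        (fun v : Fin m → ℕ => (Fin.cons j v : Fin (m+1) → ℕ)) with hG
    have hGsub : (Finset.range N).biUnion G ⊆ F := by
      intro u hu
      simp only [Finset.mem_biUnion, hG, Finset.mem_image, Finset.mem_range] at hu
      obtain ⟨j, hj, v, hv, rfl⟩ := hu
      rw [Set.Finite.mem_toFinset] at hv ⊢
      simp only [Set.mem_setOf_eq] at hv ⊢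
      rw [Fin.sum_univ_succ]
      simp only [Fin.cons_zero, Fin.cons_succ]
      calc c * (j : ℝ) + ∑ i : Fin m, ν i * v i < c * j + (s - c * j) := by
            exact (add_lt_add_iff_left _).2 hv
        _ = s := by ring
    have hdisj : ∀ j₁ ∈ Finset.range N, ∀ j₂ ∈ Finset.range N, j₁ ≠ j₂ →
        Disjoint (G j₁) (G j₂) := by
      intro j₁ _ j₂ _ hne
      simp only [Finset.disjoint_left, hG, Finset.mem_image]
      rintro u ⟨v, hv, rfl⟩ ⟨w, hw, he⟩
      apply hne
      have := congrArg (fun f => f 0) he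
      simpa using this.symm
    have hcard : ∑ j ∈ Finset.range N, (G j).card ≤ F.card := by
      rw [← Finset.card_biUnion hdisj]
      exact Finset.card_le_card hGsub
    have hGcard : ∀ j, (G j).card
        = {v : Fin m → ℕ | ∑ i, ν i * v i < s - c * j}.ncard := by
      intro j
      rw [hG]
      rw [Finset.card_image_of_injective _ (hconsinj j)]
      rw [Set.ncard_eq_toFinset_card _ (simplexFinite m ν hνpos (s - c * j))]
    -- telescoping lower bound
    set A : ℕ → ℝ := fun j => max (s - c * j) 0 with hA
    have hAnn : ∀ j, 0 ≤ A j := fun j => le_max_right _ _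
    have hAanti : ∀ j, A (j + 1) ≤ A j := by
      intro j
      apply max_le_max_right
      have : (0:ℝ) ≤ c := hcpos.le
      push_cast
      nlinarith
    have hAstep : ∀ j, A j - A (j + 1) ≤ c := by
      intro j
      have h1 : s - c * ↑j - c ≤ A (j + 1) := by
        have he : s - c * ↑j - c = s - c * ↑(j + 1) := by push_cast; ring
        rw [he, hA]
        exact le_max_left _ _
      rcases le_or_gt (s - c * ↑j) 0 with h | h
      · have hj0 : A j = 0 := max_eq_right h
        have := hAnn (j + 1)
        linarith
      · have hj0 : A j = s - c * ↑j := max_eq_left h.le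
        linarith
    have hterm : ∀ j ∈ Finset.range N,
        (A j ^ (m + 1) - A (j + 1) ^ (m + 1)) / ((m + 1) * c) ≤ (s - c * j) ^ m := by
      intro j hj
      rw [Finset.mem_range] at hj
      have hjlt : (j : ℝ) < s / c := by
        rw [← Nat.lt_ceil]; exact hj
      have hpos : 0 < s - c * j := by
        rw [lt_div_iff₀ hcpos] at hjlt
        linarith [hjlt]
      have hAj : A j = s - c * j := max_eq_left hpos.le
      rw [div_le_iff₀ (by positivity)]
      calc A j ^ (m + 1) - A (j + 1) ^ (m + 1)
          ≤ (m + 1) * A j ^ m * (A j - A (j + 1)) :=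
            pow_sub_pow_le_aux (hAnn _) (hAanti _) m
        _ ≤ (m + 1) * A j ^ m * c := by
            apply mul_le_mul_of_nonneg_left (hAstep j)
            positivity
        _ = (s - c * j) ^ m * ((m + 1) * c) := by rw [hAj]; ring
    have htele : s ^ (m + 1) / ((m + 1) * c) ≤ ∑ j ∈ Finset.range N, (s - c * j) ^ m := by
      have hsum := Finset.sum_le_sum hterm
      rw [← Finset.sum_div] at hsum
      have htel : ∑ j ∈ Finset.range N, (A j ^ (m+1) - A (j+1) ^ (m+1))
          = A 0 ^ (m+1) - A N ^ (m+1) := by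
        exact Finset.sum_range_sub' (fun j => A j ^ (m+1)) N
      have hA0 : A 0 = s := by simp [hA, hs.le]
      have hAN : A N = 0 := by
        rw [hA]
        simp only []
        apply max_eq_right
        have : s / c ≤ (N : ℝ) := Nat.le_ceil _
        rw [div_le_iff₀ hcpos] at this
        nlinarith
      rw [htel, hA0, hAN] at hsum
      calc s ^ (m+1) / ((m+1)*c) = (s ^ (m+1) - 0 ^ (m+1)) / ((m+1)*c) := by
            rw [zero_pow (by omega)]; ring
        _ ≤ _ := hsum
    -- combine with IH
    have hIH : ∀ j ∈ Finset.range N, (s - c * j) ^ m ≤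
        (Nat.factorial m) * ((∏ i, ν i) * (G j).card) := by
      intro j hj
      rw [Finset.mem_range] at hj
      have hjlt : (j : ℝ) < s / c := by rw [← Nat.lt_ceil]; exact hj
      have hpos : 0 < s - c * j := by
        rw [lt_div_iff₀ hcpos] at hjlt; linarith
      rw [hGcard j]
      exact IH ν hνpos _ hpos
    have hprod : (∏ i : Fin (m+1), μ i) = c * ∏ i : Fin m, ν i := by
      rw [Fin.prod_univ_succ]
    have hncard : {u : Fin (m+1) → ℕ | ∑ i, μ i * u i < s}.ncard = F.card := by
      rw [hF, Set.ncard_eq_toFinset_card _ (simplexFinite (m+1) μ hμ s)]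
    have hprodν : 0 ≤ ∏ i : Fin m, ν i := Finset.prod_nonneg (fun i _ => (hνpos i).le)
    calc s ^ (m + 1)
        = (s ^ (m+1) / ((m+1)*c)) * ((m+1)*c) := by field_simp
      _ ≤ (∑ j ∈ Finset.range N, (s - c * j) ^ m) * ((m+1)*c) := by
          apply mul_le_mul_of_nonneg_right htele (by positivity)
      _ ≤ (∑ j ∈ Finset.range N, (Nat.factorial m) * ((∏ i, ν i) * (G j).card)) * ((m+1)*c) := by
          apply mul_le_mul_of_nonneg_right (Finset.sum_le_sum hIH) (by positivity)
      _ = (Nat.factorial (m+1)) * ((c * ∏ i, ν i) * (∑ j ∈ Finset.range N, ((G j).card : ℝ))) := by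
          simp only [Nat.factorial_succ, Finset.sum_mul, Finset.mul_sum]
          apply Finset.sum_congr rfl
          intro j _
          push_cast
          ring
      _ ≤ (Nat.factorial (m+1)) * ((c * ∏ i, ν i) *
            ({u : Fin (m+1) → ℕ | ∑ i, μ i * u i < s}.ncard : ℝ)) := by
          apply mul_le_mul_of_nonneg_left _ (by positivity)
          apply mul_le_mul_of_nonneg_left _ (by positivity)
          rw [hncard]
          calc (∑ j ∈ Finset.range N, ((G j).card : ℝ))
              = ((∑ j ∈ Finset.range N, (G j).card : ℕ) : ℝ) := by push_cast; rfl
            _ ≤ (F.card : ℝ) := by exact_mod_cast hcard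
      _ = _ := by rw [hprod]

end AuxCounting

section AuxPoly
variable {K : Type*} [Field K] {n : ℕ}

/-- Monomials of degree at least `D` lie in the `D`-th power of the irrelevant ideal. -/
lemma monomial_mem_pow_span_X (D : ℕ) :
    ∀ u : Fin n →₀ ℕ, D ≤ ∑ i, u i →
      monomial u (1 : K) ∈ (Ideal.span (Set.range (X : Fin n → MvPolynomial (Fin n) K))) ^ D := by
  induction D with
  | zero => intro u _; simp
  | succ D IH =>
    intro u hu
    have hpos : 0 < ∑ i, u i := by omega
    have : ∃ i, 0 < u i := by
      by_contra h
      push_neg at h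
      simp only [Nat.le_zero] at h
      have : ∑ i, u i = 0 := Finset.sum_eq_zero fun i _ => h i
      omega
    obtain ⟨i, hi⟩ := this
    set u' := u - Finsupp.single i 1 with hu'
    have hle : Finsupp.single i 1 ≤ u := by
      rw [Finsupp.single_le_iff]
      omega
    have hadd : u' + Finsupp.single i 1 = u := tsub_add_cancel_of_le hle
    have hsum : D ≤ ∑ j, u' j := by
      have h1 : ∑ j, u' j + ∑ j, (Finsupp.single i 1 : Fin n →₀ ℕ) j = ∑ j, u j := by
        rw [← Finset.sum_add_distrib]
        apply Finset.sum_congr rfl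
        intro j _
        have := congrArg (fun f : Fin n →₀ ℕ => f j) hadd
        simpa using this
      have h2 : ∑ j, (Finsupp.single i 1 : Fin n →₀ ℕ) j = 1 := by
        rw [Finset.sum_eq_single i]
        · simp
        · intro j _ hj; simp [Finsupp.single_apply, (Ne.symm hj)]
        · intro h; exact absurd (Finset.mem_univ i) h
      omega
    have hmul : monomial u (1 : K) = monomial u' (1 : K) * X i := by
      rw [X, monomial_mul, hadd, one_mul]
    rw [hmul, pow_succ]
    exact Ideal.mul_mem_mul (IH u' hsum) (Ideal.subset_span ⟨i, rfl⟩)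

/-- Every element of a monomial ideal has all its exponents divisible by an exponent in the
generating set. -/
lemma exists_le_of_mem_monomialIdeal {a : Ideal (MvPolynomial (Fin n) K)}
    (hmon : IsMonomialIdeal a) {f : MvPolynomial (Fin n) K} (hf : f ∈ a) :
    ∀ u ∈ f.support, ∃ s : Fin n →₀ ℕ, monomial s (1 : K) ∈ a ∧ s ≤ u := by
  rw [hmon] at hf
  intro u hu
  obtain ⟨s, hs, hsu⟩ := mem_ideal_span_monomial_image.1 hf u hu
  exact ⟨s, hs, hsu⟩

/-- If a linear functional with nonnegative coefficients is `≥ 1` on the exponents of the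
monomials of `a`, then it is `≥ k` on all exponents appearing in elements of `a ^ k`. -/
lemma pow_support_bound {a : Ideal (MvPolynomial (Fin n) K)} (hmon : IsMonomialIdeal a)
    (μ : Fin n → ℝ) (hμ0 : ∀ i, 0 ≤ μ i)
    (hT : ∀ v : Fin n →₀ ℕ, monomial v (1 : K) ∈ a → 1 ≤ ∑ i, μ i * v i) :
    ∀ k : ℕ, ∀ f ∈ a ^ k, ∀ u ∈ f.support, (k : ℝ) ≤ ∑ i, μ i * u i := by
  classical
  have hmono : ∀ v u : Fin n →₀ ℕ, v ≤ u → ∑ i, μ i * v i ≤ ∑ i, μ i * u i := by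
    intro v u hvu
    apply Finset.sum_le_sum
    intro i _
    have : v i ≤ u i := hvu i
    have : (v i : ℝ) ≤ (u i : ℝ) := by exact_mod_cast this
    exact mul_le_mul_of_nonneg_left this (hμ0 i)
  have hbase : ∀ f ∈ a, ∀ u ∈ f.support, 1 ≤ ∑ i, μ i * u i := by
    intro f hf u hu
    obtain ⟨s, hs, hsu⟩ := exists_le_of_mem_monomialIdeal hmon hf u hu
    exact le_trans (hT s hs) (hmono s u hsu)
  intro k
  induction k with
  | zero =>
    intro f _ u _
    simp only [Nat.cast_zero]
    apply Finset.sum_nonneg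
    intro i _
    exact mul_nonneg (hμ0 i) (Nat.cast_nonneg _)
  | succ k IH =>
    intro f hf
    rw [pow_succ] at hf
    refine Submodule.mul_induction_on hf ?_ ?_
    · intro g hg h hh u hu
      have hsupp := MvPolynomial.support_mul g h hu
      rw [Finset.mem_add] at hsupp
      obtain ⟨v, hv, w, hw, rfl⟩ := hsupp
      have h1 : (k : ℝ) ≤ ∑ i, μ i * v i := IH g hg v hv
      have h2 : (1 : ℝ) ≤ ∑ i, μ i * w i := hbase h hh w hw
      have hadd : ∑ i, μ i * ((v + w) i : ℝ) = (∑ i, μ i * v i) + ∑ i, μ i * w i := by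
        rw [← Finset.sum_add_distrib]
        apply Finset.sum_congr rfl
        intro i _
        simp [Finsupp.add_apply]
        ring
      rw [hadd]
      push_cast
      linarith
    · intro g h hg hh u hu
      have := MvPolynomial.support_add hu
      rw [Finset.mem_union] at this
      rcases this with h' | h'
      · exact hg u h'
      · exact hh u h'

lemma mk_monomial_smul (b : Ideal (MvPolynomial (Fin n) K)) (f : MvPolynomial (Fin n) K) :
    (Ideal.Quotient.mk b f : MvPolynomial (Fin n) K ⧸ b)
      = ∑ v ∈ f.support, coeff v f • Ideal.Quotient.mk b (monomial v (1 : K)) := by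
  have h : f = ∑ v ∈ f.support, coeff v f • monomial v (1 : K) := by
    conv_lhs => rw [as_sum f]
    apply Finset.sum_congr rfl
    intro v _
    rw [smul_monomial, smul_eq_mul, mul_one]
  calc (Ideal.Quotient.mk b f : MvPolynomial (Fin n) K ⧸ b)
      = (Ideal.Quotient.mkₐ K b).toLinearMap (∑ v ∈ f.support, coeff v f • monomial v (1 : K)) := by
        rw [← h]; rfl
    _ = ∑ v ∈ f.support, coeff v f • Ideal.Quotient.mk b (monomial v (1 : K)) := by
        rw [map_sum]
        apply Finset.sum_congr rfl
        intro v _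
        rw [map_smul]
        rfl

lemma span_range_quotient_eq_top (b : Ideal (MvPolynomial (Fin n) K)) (D : ℕ)
    (hb : (Ideal.span (Set.range (X : Fin n → MvPolynomial (Fin n) K))) ^ D ≤ b)
    (hmono : ∀ u : Fin n →₀ ℕ, D ≤ ∑ i, u i →
      monomial u (1 : K) ∈ (Ideal.span (Set.range (X : Fin n → MvPolynomial (Fin n) K))) ^ D) :
    Submodule.span K (Set.range (fun u : Fin n → Fin D =>
      Ideal.Quotient.mk b (monomial (Finsupp.equivFunOnFinite.symm fun i => (u i : ℕ)) (1 : K))))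
      = ⊤ := by
  classical
  rw [eq_top_iff]
  rintro x -
  obtain ⟨f, rfl⟩ := Ideal.Quotient.mk_surjective x
  rw [mk_monomial_smul]
  apply Submodule.sum_mem
  intro v _
  apply Submodule.smul_mem
  rcases lt_or_ge (∑ i, v i) D with h | h
  · have hvi : ∀ i, v i < D := by
      intro i
      calc v i ≤ ∑ j, v j := Finset.single_le_sum (fun j _ => Nat.zero_le _) (Finset.mem_univ i)
        _ < D := h
    apply Submodule.subset_span
    refine ⟨fun i => ⟨v i, hvi i⟩, ?_⟩
    have hv : (Finsupp.equivFunOnFinite.symm fun i => v i) = v := Finsupp.equivFunOnFinite_symm_coe v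
    simp only []
    rw [show (fun i => ((⟨v i, hvi i⟩ : Fin D) : ℕ)) = fun i => v i from rfl, hv]
  · have : monomial v (1 : K) ∈ b := hb (hmono v h)
    rw [Ideal.Quotient.eq_zero_iff_mem.2 this]
    exact Submodule.zero_mem _

lemma ncard_le_finrank (b : Ideal (MvPolynomial (Fin n) K)) [Module.Finite K (MvPolynomial (Fin n) K ⧸ b)]
    (S : Set (Fin n →₀ ℕ)) (hS : S.Finite)
    (hdisj : ∀ f ∈ b, (∀ u ∈ f.support, u ∈ S) → f = 0) :
    S.ncard ≤ Module.finrank K (MvPolynomial (Fin n) K ⧸ b) := by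
  classical
  have : Fintype S := hS.fintype
  have hli : LinearIndependent K (fun u : S =>
      Ideal.Quotient.mk b (monomial (u : Fin n →₀ ℕ) (1 : K))) := by
    rw [linearIndependent_iff']
    intro s g hsum i hi
    by_contra hgi
    set q : MvPolynomial (Fin n) K := ∑ j ∈ s, g j • monomial (j : Fin n →₀ ℕ) (1 : K) with hq
    have hcoeff : ∀ w : S, w ∈ s → coeff (w : Fin n →₀ ℕ) q = g w := by
      intro w hw
      rw [hq, coeff_sum]
      rw [Finset.sum_eq_single w]
      · rw [coeff_smul, coeff_monomial, if_pos rfl, smul_eq_mul, mul_one]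
      · intro j _ hj
        rw [coeff_smul, coeff_monomial, if_neg, smul_eq_mul, mul_zero]
        exact fun hc => hj (Subtype.ext hc)
      · intro hc; exact absurd hw hc
    have hmem : q ∈ b := by
      have : (Ideal.Quotient.mkₐ K b).toLinearMap q = 0 := by
        rw [hq, map_sum]
        rw [← hsum]
        apply Finset.sum_congr rfl
        intro j _
        rw [map_smul]
        rfl
      rw [← Ideal.Quotient.eq_zero_iff_mem]
      exact this
    have hquppS : ∀ u ∈ q.support, u ∈ S := by
      intro u hu
      have hc : coeff u q ≠ 0 := mem_support_iff.1 hu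
      by_contra huS
      apply hc
      rw [hq, coeff_sum]
      apply Finset.sum_eq_zero
      intro j _
      rw [coeff_smul, coeff_monomial, if_neg, smul_eq_mul, mul_zero]
      exact fun hc' => huS (hc' ▸ (j : S).2)
    have hq0 : q = 0 := hdisj q hmem hquppS
    apply hgi
    have := hcoeff i hi
    rw [hq0] at this
    simpa using this.symm
  have hcard := hli.fintype_card_le_finrank
  calc S.ncard = Nat.card S := (Nat.card_coe_set_eq S).symm
    _ = Fintype.card S := Nat.card_eq_fintype_card
    _ ≤ Module.finrank K (MvPolynomial (Fin n) K ⧸ b) := hcard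

noncomputable def toR : (Fin n →₀ ℕ) → (Fin n → ℝ) := fun v => fun i => (v i : ℝ)

lemma absorb {a : Ideal (MvPolynomial (Fin n) K)} {v : Fin n →₀ ℕ}
    (hv : monomial v (1 : K) ∈ a) (w : Fin n →₀ ℕ) : monomial (w + v) (1 : K) ∈ a := by
  have : monomial (w + v) (1 : K) = monomial w (1 : K) * monomial v (1 : K) := by
    rw [monomial_mul, one_mul]
  rw [this]
  exact Ideal.mul_mem_left _ _ hv

/-- The Newton polyhedron absorbs translation by lattice vectors. -/
lemma newton_add_toR_mem {a : Ideal (MvPolynomial (Fin n) K)} {x : Fin n → ℝ}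
    (hx : x ∈ newton a) (w : Fin n →₀ ℕ) : x + toR w ∈ newton a := by
  set T := {v : Fin n →₀ ℕ | monomial v (1 : K) ∈ a} with hT
  set A : Set (Fin n → ℝ) := toR '' T with hA
  have hnewton : newton a = convexHull ℝ A := rfl
  have hsub : toR w +ᵥ A ⊆ A := by
    rintro y ⟨z, ⟨v, hv, rfl⟩, rfl⟩
    exact ⟨w + v, absorb hv w, by funext i; simp [toR]⟩
  have h1 : toR w +ᵥ convexHull ℝ A = convexHull ℝ (toR w +ᵥ A) := (convexHull_vadd _ _).symm
  have h2 : x + toR w ∈ toR w +ᵥ convexHull ℝ A := ⟨x, hx, by simp [vadd_eq_add, add_comm]⟩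
  rw [h1] at h2
  rw [hnewton]
  exact convexHull_mono hsub h2

/-- The Newton polyhedron absorbs translation by a nonnegative real vector. -/
lemma newton_add_nonneg_mem {a : Ideal (MvPolynomial (Fin n) K)} {x : Fin n → ℝ}
    (hx : x ∈ newton a) {c : Fin n → ℝ} (hc : ∀ i, 0 ≤ c i) : x + c ∈ newton a := by
  have hstep : ∀ (i : Fin n) (r : ℝ), 0 ≤ r → ∀ y ∈ newton a,
      y + r • (Pi.single i 1 : Fin n → ℝ) ∈ newton a := by
    intro i r hr y hy
    rcases eq_or_lt_of_le hr with h | h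
    · simpa [← h] using hy
    · set m : ℕ := Nat.ceil r with hm
      have hrm : r ≤ (m : ℝ) := Nat.le_ceil r
      have hmpos : 0 < (m : ℝ) := lt_of_lt_of_le h hrm
      have hy2 : y + toR (Finsupp.single i m) ∈ newton a := newton_add_toR_mem hy _
      have hrep : toR (Finsupp.single i m) = (m : ℝ) • (Pi.single i 1 : Fin n → ℝ) := by
        funext j
        by_cases hij : j = i
        · subst hij; simp [toR]
        · simp [toR, Finsupp.single_apply, Pi.single_apply, hij, Ne.symm hij]
      have hcvx : Convex ℝ (newton a) := convex_convexHull ℝ _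
      have key := hcvx hy hy2 (a := 1 - r / m) (b := r / m)
        (by
          have : r / m ≤ 1 := by
            rw [div_le_one hmpos]; exact hrm
          linarith)
        (by positivity)
        (by ring)
      have : (1 - r / m) • y + (r / m) • (y + toR (Finsupp.single i m))
          = y + r • (Pi.single i 1 : Fin n → ℝ) := by
        rw [hrep]
        have hm0 : (m : ℝ) ≠ 0 := ne_of_gt hmpos
        rw [smul_add, smul_smul]
        rw [div_mul_cancel₀ r hm0]
        module
      rw [this] at key
      exact key
  -- fold over coordinates
  have hfold : ∀ s : Finset (Fin n), x + (∑ i ∈ s, c i • (Pi.single i 1 : Fin n → ℝ)) ∈ newton a := by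
    intro s
    induction s using Finset.induction with
    | empty => simpa using hx
    | insert _ _ hns ih =>
      rename_i j s'
      rw [Finset.sum_insert hns]
      have := hstep j (c j) (hc j) _ ih
      convert this using 1
      ring
  have := hfold Finset.univ
  have hsum : (∑ i, c i • (Pi.single i 1 : Fin n → ℝ)) = c := by
    funext j
    rw [Finset.sum_apply]
    rw [Finset.sum_eq_single j]
    · simp
    · intro i _ hij
      simp [Pi.single_apply, hij, Ne.symm hij]
    · intro h; exact absurd (Finset.mem_univ j) h
  rwa [hsum] at this

lemma exists_separating_functional (hn : 1 ≤ n) {a : Ideal (MvPolynomial (Fin n) K)}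
    (hmon : IsMonomialIdeal a) (k0 : ℕ) (hk0 : 1 ≤ k0)
    (hk : (Ideal.span (Set.range (X : Fin n → MvPolynomial (Fin n) K))) ^ k0 ≤ a)
    (p : Fin n → ℝ) (hp0 : ∀ i, 0 ≤ p i) (hp : p ∉ newton a) :
    ∃ μ : Fin n → ℝ, (∀ i, 0 < μ i) ∧
      (∀ v : Fin n →₀ ℕ, monomial v (1 : K) ∈ a → 1 ≤ ∑ i, μ i * v i) ∧
      (∑ i, μ i * p i < 1) := by
  classical
  set T := {v : Fin n →₀ ℕ | monomial v (1 : K) ∈ a} with hT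
  set A : Set (Fin n → ℝ) := toR '' T with hA
  -- single i k0 ∈ T
  have hsingle : ∀ i : Fin n, Finsupp.single i k0 ∈ T := by
    intro i
    have : (X i : MvPolynomial (Fin n) K) ^ k0 ∈
        (Ideal.span (Set.range (X : Fin n → MvPolynomial (Fin n) K))) ^ k0 :=
      Ideal.pow_mem_pow (Ideal.subset_span (Set.mem_range_self i)) k0
    have hx : (X i : MvPolynomial (Fin n) K) ^ k0 = monomial (Finsupp.single i k0) 1 :=
      X_pow_eq_monomial
    rw [hT, Set.mem_setOf_eq, ← hx]
    exact hk this
  -- finite dominating set G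
  obtain ⟨F, hF⟩ := (IsNoetherian.noetherian a : a.FG)
  have hmem : ∀ f ∈ F, ∃ t : Finset (MvPolynomial (Fin n) K),
      ↑t ⊆ (fun v : Fin n →₀ ℕ => (monomial v (1 : K))) '' T ∧ f ∈ Ideal.span (t : Set _) := by
    intro f hf
    have hfa : f ∈ a := hF ▸ Ideal.subset_span hf
    rw [hmon] at hfa
    exact Submodule.mem_span_finite_of_mem_span hfa
  choose t ht1 ht2 using hmem
  set U : Finset (MvPolynomial (Fin n) K) := F.attach.biUnion (fun f => t f f.2) with hU
  have hUsub : (U : Set (MvPolynomial (Fin n) K)) ⊆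
      (fun v : Fin n →₀ ℕ => (monomial v (1 : K))) '' T := by
    intro x hx
    simp only [hU, Finset.coe_biUnion, Set.mem_iUnion, Finset.mem_coe] at hx
    obtain ⟨f, hf, hx⟩ := hx
    exact ht1 f f.2 hx
  have hspanU : a = Ideal.span (U : Set (MvPolynomial (Fin n) K)) := by
    apply le_antisymm
    · rw [← hF, Submodule.span_le]
      intro g hg
      rw [Finset.mem_coe] at hg
      have h2 := ht2 g hg
      refine Ideal.span_mono ?_ h2
      intro x hx
      simp only [hU, Finset.coe_biUnion, Set.mem_iUnion, Finset.mem_coe]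
      exact ⟨⟨g, hg⟩, F.mem_attach _, hx⟩
    · rw [Ideal.span_le]
      intro x hx
      obtain ⟨v, hv, rfl⟩ := hUsub hx
      exact hv
  set G : Set (Fin n →₀ ℕ) :=
    ((fun v : Fin n →₀ ℕ => (monomial v (1 : K))) ⁻¹' ↑U) ∩ T with hG
  have hmoninj : Function.Injective (fun v : Fin n →₀ ℕ => (monomial v (1 : K))) :=
    monomial_left_injective one_ne_zero
  have hGfin : G.Finite :=
    Set.Finite.subset (U.finite_toSet.preimage hmoninj.injOn) Set.inter_subset_left
  have hGT : G ⊆ T := Set.inter_subset_right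
  have hGU : (fun v : Fin n →₀ ℕ => (monomial v (1 : K))) '' G = ↑U := by
    apply Set.Subset.antisymm
    · rintro x ⟨v, ⟨hv1, _⟩, rfl⟩; exact hv1
    · intro x hx
      obtain ⟨v, hv, rfl⟩ := hUsub hx
      exact ⟨v, ⟨hx, hv⟩, rfl⟩
  have hdom : ∀ v ∈ T, ∃ g ∈ G, g ≤ v := by
    intro v hv
    have : monomial v (1 : K) ∈ Ideal.span
        ((fun v : Fin n →₀ ℕ => (monomial v (1 : K))) '' G) := by
      rw [hGU, ← hspanU]; exact hv
    have h2 := mem_ideal_span_monomial_image.1 this v (by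
      rw [mem_support_iff, coeff_monomial, if_pos rfl]; exact one_ne_zero)
    exact h2
  -- the closed convex set Q
  set O : Set (Fin n → ℝ) := {y | ∀ i, 0 ≤ y i} with hO
  set Q : Set (Fin n → ℝ) := convexHull ℝ (toR '' G) + O with hQ
  have hOeq : O = Set.Ici (0 : Fin n → ℝ) := by
    ext y
    simp [hO, Set.mem_Ici, Pi.le_def]
  have hOclosed : IsClosed O := by rw [hOeq]; exact isClosed_Ici
  have hOconvex : Convex ℝ O := by rw [hOeq]; exact convex_Ici _
  have hQclosed : IsClosed Q :=
    IsClosed.add_left_of_isCompact hOclosed ((hGfin.image toR).isCompact_convexHull ℝ)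
  have hQconvex : Convex ℝ Q := (convex_convexHull ℝ _).add hOconvex
  have hAQ : A ⊆ Q := by
    rintro x ⟨v, hv, rfl⟩
    obtain ⟨g, hg, hgv⟩ := hdom v hv
    refine ⟨toR g, subset_convexHull ℝ _ ⟨g, hg, rfl⟩, toR v - toR g, ?_, by ring⟩
    intro i
    simp only [toR, Pi.sub_apply, sub_nonneg]
    exact_mod_cast hgv i
  have hQnewton : Q ⊆ newton a := by
    rintro x ⟨y, hy, c, hc, rfl⟩
    have hy' : y ∈ newton a := by
      have : convexHull ℝ (toR '' G) ⊆ convexHull ℝ A :=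
        convexHull_mono (Set.image_mono hGT)
      exact this hy
    exact newton_add_nonneg_mem hy' hc
  have hpQ : p ∉ Q := fun h => hp (hQnewton h)
  -- separation
  obtain ⟨f, u, hfu, hub⟩ := geometric_hahn_banach_point_closed hQconvex hQclosed hpQ
  set lam : Fin n → ℝ := fun i => f (Pi.single i 1) with hlam
  have hrep : ∀ x : Fin n → ℝ, f x = ∑ i, x i * lam i := by
    intro x
    have hx : x = ∑ i, x i • (Pi.single i 1 : Fin n → ℝ) := by
      funext j
      rw [Finset.sum_apply, Finset.sum_eq_single j]
      · simp
      · intro i _ hij; simp [Pi.single_apply, hij, Ne.symm hij]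
      · intro h; exact absurd (Finset.mem_univ j) h
    conv_lhs => rw [hx]
    rw [map_sum]
    apply Finset.sum_congr rfl
    intro i _
    rw [map_smul]
    rfl
  -- a base point in Q
  set i0 : Fin n := ⟨0, hn⟩ with hi0
  set q0 : Fin n → ℝ := toR (Finsupp.single i0 k0) with hq0
  have hq0Q : q0 ∈ Q := hAQ ⟨_, hsingle i0, rfl⟩
  have hq0u : u < f q0 := hub _ hq0Q
  have hlampos : ∀ i, 0 ≤ lam i := by
    intro i
    by_contra hneg
    push_neg at hneg
    set r : ℝ := (f q0 - u + 1) / (-lam i) with hr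
    have hrpos : 0 < r := by
      apply div_pos
      · linarith
      · linarith
    have hmem : q0 + r • (Pi.single i 1 : Fin n → ℝ) ∈ Q := by
      obtain ⟨y, hy, c, hc, hyc⟩ := hq0Q
      refine ⟨y, hy, c + r • (Pi.single i 1 : Fin n → ℝ), ?_, by rw [← hyc]; ring⟩
      intro j
      have h0 := hc j
      have h1 : (0:ℝ) ≤ (r • (Pi.single i 1 : Fin n → ℝ)) j := by
        rw [Pi.smul_apply, smul_eq_mul]
        by_cases hij : j = i
        · subst hij; rw [Pi.single_eq_same, mul_one]; exact hrpos.le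
        · rw [Pi.single_eq_of_ne hij, mul_zero]
      rw [Pi.add_apply]
      exact add_nonneg h0 h1
    have := hub _ hmem
    have hval : f (q0 + r • (Pi.single i 1 : Fin n → ℝ)) = f q0 + r * lam i := by
      rw [map_add, map_smul]
      rfl
    rw [hval] at this
    have hlne : lam i ≠ 0 := ne_of_lt hneg
    have h2 : lam i / -lam i = -1 := by
      rw [div_neg, div_self hlne]
    have hrl : r * lam i = -(f q0 - u + 1) := by
      calc r * lam i = (f q0 - u + 1) * (lam i / -lam i) := by rw [hr]; ring
        _ = -(f q0 - u + 1) := by rw [h2]; ring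
    rw [hrl] at this
    linarith
  -- u is positive
  have hfp : f p = ∑ i, p i * lam i := hrep p
  have hfp0 : 0 ≤ f p := by
    rw [hfp]
    apply Finset.sum_nonneg
    intro i _
    exact mul_nonneg (hp0 i) (hlampos i)
  have hupos : 0 < u := lt_of_le_of_lt hfp0 hfu
  refine ⟨fun i => lam i / u, ?_, ?_, ?_⟩
  · intro i
    have h1 : u < f (toR (Finsupp.single i k0)) := hub _ (hAQ ⟨_, hsingle i, rfl⟩)
    rw [hrep] at h1
    have h2 : ∑ j, (toR (Finsupp.single i k0)) j * lam j = (k0 : ℝ) * lam i := by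
      rw [Finset.sum_eq_single i]
      · simp [toR]
      · intro j _ hij
        simp [toR, Finsupp.single_apply, Ne.symm hij]
      · intro h; exact absurd (Finset.mem_univ i) h
    rw [h2] at h1
    have hlpos : 0 < lam i := by
      rcases lt_or_eq_of_le (hlampos i) with h | h
      · exact h
      · exfalso; rw [← h] at h1; simp at h1; linarith
    positivity
  · intro v hv
    have h1 : u < f (toR v) := hub _ (hAQ ⟨v, hv, rfl⟩)
    rw [hrep] at h1
    have heq : ∑ i, (lam i / u) * (v i : ℝ) = (∑ i, (toR v) i * lam i) / u := by
      rw [Finset.sum_div]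
      apply Finset.sum_congr rfl
      intro i _
      simp only [toR]
      ring
    show (1:ℝ) ≤ ∑ i, (lam i / u) * (v i : ℝ)
    rw [heq, le_div_iff₀ hupos, one_mul]
    exact h1.le
  · have : ∑ i, (lam i / u) * p i = f p / u := by
      rw [hfp, Finset.sum_div]
      apply Finset.sum_congr rfl
      intro i _
      ring
    rw [this, div_lt_one hupos]
    exact hfu

end AuxPoly

/-- For a proper monomial ideal `a` supported at the origin, with
`t = inf{μ > 0 : μ·(1,…,1) ∈ P_a} = 1/lc(a)`, one has
`e(a) ≥ n^n/lc(a)^n = (n·t)^n`. -/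
theorem polyMult_ge_pow_lc
    {K : Type*} [Field K] {n : ℕ} (hn : 1 ≤ n)
    (a : Ideal (MvPolynomial (Fin n) K)) (hne : a ≠ ⊤)
    (hmon : IsMonomialIdeal a)
    (hsupp : SupportedAtOrigin a) :
    ((n : ℝ) * sInf {μ : ℝ | 0 < μ ∧ (fun _ : Fin n => μ) ∈ newton a}) ^ n
      ≤ polyMult a := by
  classical
  obtain ⟨k0, hk0le⟩ := hsupp
  have hk0 : 1 ≤ k0 := by
    rcases Nat.eq_zero_or_pos k0 with rfl | h
    · exfalso
      apply hne
      rw [pow_zero, Ideal.one_eq_top] at hk0le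
      exact top_le_iff.mp hk0le
    · exact h
  have hn0 : (n : ℝ) ≠ 0 := by positivity
  have hnpos : (0:ℝ) < n := by positivity
  set S := {μ : ℝ | 0 < μ ∧ (fun _ : Fin n => μ) ∈ newton a} with hS
  set t := sInf S with ht
  have hbdd : BddBelow S := ⟨0, fun μ hμ => hμ.1.le⟩
  have hsingleT : ∀ i : Fin n, monomial (Finsupp.single i k0) (1:K) ∈ a := by
    intro i
    have h1 : (X i : MvPolynomial (Fin n) K) ^ k0 ∈
        (Ideal.span (Set.range (X : Fin n → MvPolynomial (Fin n) K))) ^ k0 :=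
      Ideal.pow_mem_pow (Ideal.subset_span (Set.mem_range_self i)) k0
    rw [← X_pow_eq_monomial]
    exact hk0le h1
  -- S is nonempty
  have hSne : S.Nonempty := by
    refine ⟨(k0 : ℝ) / n, ?_, ?_⟩
    · positivity
    · have hmem : Finset.univ.centerMass (fun _ : Fin n => (1:ℝ))
          (fun i => toR (Finsupp.single i k0)) ∈ convexHull ℝ
          ((fun v : Fin n →₀ ℕ => fun j => ((v j : ℕ) : ℝ)) ''
            {v : Fin n →₀ ℕ | monomial v (1 : K) ∈ a}) := by
        apply Finset.centerMass_mem_convexHull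
        · exact fun i _ => zero_le_one
        · rw [Finset.sum_const, Finset.card_univ, Fintype.card_fin, nsmul_eq_mul, mul_one]
          exact hnpos
        · exact fun i _ => ⟨Finsupp.single i k0, hsingleT i, rfl⟩
      have heq : (Finset.univ : Finset (Fin n)).centerMass (fun _ => (1:ℝ))
          (fun i => toR (Finsupp.single i k0)) = fun _ : Fin n => (k0 : ℝ) / n := by
        rw [Finset.centerMass]
        funext j
        rw [Finset.sum_const, Finset.card_univ, Fintype.card_fin, nsmul_eq_mul, mul_one]
        rw [Pi.smul_apply, Finset.sum_apply]
        have : ∑ i : Fin n, ((1:ℝ) • toR (Finsupp.single i k0)) j = (k0 : ℝ) := by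
          rw [Finset.sum_eq_single j]
          · simp [toR]
          · intro i _ hij
            simp [toR, Finsupp.single_apply, hij]
          · intro h; exact absurd (Finset.mem_univ j) h
        rw [this, smul_eq_mul]
        ring
      rw [heq] at hmem
      exact hmem
  -- the Newton polyhedron lies in the halfspace ∑ x ≥ 1
  have hhalf : newton a ⊆ {x : Fin n → ℝ | 1 ≤ ∑ i, x i} := by
    apply convexHull_min
    · rintro x ⟨v, hv, rfl⟩
      have hv0 : v ≠ 0 := by
        rintro rfl
        apply hne
        rw [Ideal.eq_top_iff_one]
        have h1 : monomial (0 : Fin n →₀ ℕ) (1:K) ∈ a := hv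
        rwa [monomial_zero', C_1] at h1
      have : ∃ i, v i ≠ 0 := by
        by_contra h
        push_neg at h
        exact hv0 (Finsupp.ext fun i => h i)
      obtain ⟨i, hi⟩ := this
      have h1 : 1 ≤ ∑ i, v i :=
        le_trans (Nat.one_le_iff_ne_zero.2 hi)
          (Finset.single_le_sum (fun j _ => Nat.zero_le _) (Finset.mem_univ i))
      have : ((1:ℕ) : ℝ) ≤ ((∑ i, v i : ℕ) : ℝ) := Nat.cast_le.2 h1
      push_cast at this
      exact this
    · exact convex_halfSpace_ge (IsLinearMap.mk (fun x y => Finset.sum_add_distrib)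
        (fun c x => by simp [Finset.mul_sum])) 1
  have htpos : 0 < t := by
    have h1 : (1:ℝ)/n ≤ t := by
      apply le_csInf hSne
      intro μ hμ
      have h2 := hhalf hμ.2
      simp only [Set.mem_setOf_eq, Finset.sum_const, Finset.card_univ, Fintype.card_fin,
        nsmul_eq_mul] at h2
      rw [div_le_iff₀ hnpos]
      linarith
    have : (0:ℝ) < 1/n := by positivity
    linarith
  -- uniform finiteness and upper bound for the quotients
  have hfin : ∀ k : ℕ, 1 ≤ k →
      ∃ _ : Module.Finite K (MvPolynomial (Fin n) K ⧸ a ^ k),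
        Module.finrank K (MvPolynomial (Fin n) K ⧸ a ^ k) ≤ (k0 * k) ^ n := by
    intro k hk
    have hMD : (Ideal.span (Set.range (X : Fin n → MvPolynomial (Fin n) K))) ^ (k0 * k)
        ≤ a ^ k := by
      rw [pow_mul]
      exact Ideal.pow_right_mono hk0le k
    have hspan := span_range_quotient_eq_top (a ^ k) (k0 * k) hMD
      (monomial_mem_pow_span_X (k0 * k))
    have hmodfin : Module.Finite K (MvPolynomial (Fin n) K ⧸ a ^ k) := by
      refine ⟨⟨Finset.univ.image (fun u : Fin n → Fin (k0 * k) =>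
        Ideal.Quotient.mk (a ^ k)
          (monomial (Finsupp.equivFunOnFinite.symm fun i => (u i : ℕ)) (1 : K))), ?_⟩⟩
      rw [Finset.coe_image, Finset.coe_univ, Set.image_univ]
      exact hspan
    refine ⟨hmodfin, ?_⟩
    calc Module.finrank K (MvPolynomial (Fin n) K ⧸ a ^ k)
        ≤ Fintype.card (Fin n → Fin (k0 * k)) := finrank_le_of_span_eq_top hspan
      _ = (k0 * k) ^ n := by simp [Fintype.card_fun]
  -- boundedness of the limsup sequence
  have hbound : Filter.IsBoundedUnder (· ≤ ·) atTop (fun k : ℕ =>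
      (Nat.factorial n * Module.finrank K (MvPolynomial (Fin n) K ⧸ a ^ k) : ℝ) / (k : ℝ) ^ n) := by
    apply Filter.isBoundedUnder_of
    refine ⟨(Nat.factorial n : ℝ) * (k0 : ℝ) ^ n, fun k => ?_⟩
    rcases Nat.eq_zero_or_pos k with rfl | hk
    · rw [Nat.cast_zero, zero_pow (by omega : n ≠ 0), div_zero]
      positivity
    · obtain ⟨_, hrank⟩ := hfin k hk
      have hkpos : (0:ℝ) < (k:ℝ) ^ n := by positivity
      rw [div_le_iff₀ hkpos]
      calc (Nat.factorial n * Module.finrank K (MvPolynomial (Fin n) K ⧸ a ^ k) : ℝ)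
          ≤ (Nat.factorial n : ℝ) * ((((k0 * k) ^ n : ℕ)) : ℝ) := by
            have h1 : (Module.finrank K (MvPolynomial (Fin n) K ⧸ a ^ k) : ℝ)
                ≤ ((((k0 * k) ^ n : ℕ)) : ℝ) := Nat.cast_le.2 hrank
            have h2 : (0:ℝ) ≤ (Nat.factorial n : ℝ) := by positivity
            exact mul_le_mul_of_nonneg_left h1 h2
        _ = (Nat.factorial n : ℝ) * (k0 : ℝ) ^ n * (k : ℝ) ^ n := by
            push_cast
            ring
  -- the main estimate for each s < t
  have hmain : ∀ s : ℝ, 0 < s → s < t → ((n:ℝ) * s) ^ n ≤ polyMult a := by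
    intro s hs0 hst
    have hpnot : (fun _ : Fin n => s) ∉ newton a := by
      intro hmem
      have hsS : s ∈ S := ⟨hs0, hmem⟩
      have := csInf_le hbdd hsS
      rw [← ht] at this
      linarith
    obtain ⟨μ, hμpos, hμT, hμp⟩ := exists_separating_functional hn hmon k0 hk0 hk0le
      (fun _ => s) (fun _ => hs0.le) hpnot
    have hprodpos : (0:ℝ) < ∏ i, μ i := Finset.prod_pos fun i _ => hμpos i
    have hsum : ∑ i, μ i * s < 1 := hμp
    have hsumnn : (0:ℝ) ≤ ∑ i, μ i := Finset.sum_nonneg fun i _ => (hμpos i).le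
    -- AM-GM
    have hamgm : (∏ i, μ i) ≤ ((∑ i, μ i) / n) ^ n := by
      have h := Real.geom_mean_le_arith_mean_weighted Finset.univ (fun _ => 1/(n:ℝ)) μ
        (fun i _ => by positivity)
        (by
          rw [Finset.sum_const, Finset.card_univ, Fintype.card_fin, nsmul_eq_mul]
          field_simp)
        (fun i _ => (hμpos i).le)
      have h2 : (∏ i, μ i ^ ((1:ℝ)/n)) ^ n ≤ (∑ i, 1/(n:ℝ) * μ i) ^ n := by
        apply pow_le_pow_left₀ _ h
        apply Finset.prod_nonneg
        intro i _
        exact Real.rpow_nonneg (hμpos i).le _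
      have h3 : (∏ i, μ i ^ ((1:ℝ)/n)) ^ n = ∏ i, μ i := by
        rw [← Finset.prod_pow]
        apply Finset.prod_congr rfl
        intro i _
        rw [← Real.rpow_natCast (μ i ^ ((1:ℝ)/n)) n, ← Real.rpow_mul (hμpos i).le]
        rw [one_div, inv_mul_cancel₀ hn0, Real.rpow_one]
      have h4 : ∑ i, 1/(n:ℝ) * μ i = (∑ i, μ i) / n := by
        rw [Finset.sum_div]
        apply Finset.sum_congr rfl
        intro i _
        ring
      rw [h3, h4] at h2
      exact h2
    have hkey : ((n:ℝ) * s) ^ n ≤ 1 / ∏ i, μ i := by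
      rw [le_div_iff₀ hprodpos]
      calc ((n:ℝ) * s) ^ n * ∏ i, μ i
          ≤ ((n:ℝ) * s) ^ n * (((∑ i, μ i) / n) ^ n) := by
            apply mul_le_mul_of_nonneg_left hamgm (by positivity)
        _ = (s * ∑ i, μ i) ^ n := by
            rw [← mul_pow]
            congr 1
            field_simp
        _ ≤ 1 ^ n := by
            apply pow_le_pow_left₀ (mul_nonneg hs0.le hsumnn)
            have h5 : (∑ i, μ i) * s < 1 := by
              rw [Finset.sum_mul]
              exact hsum
            calc s * ∑ i, μ i = (∑ i, μ i) * s := mul_comm _ _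
              _ ≤ 1 := h5.le
        _ = 1 := one_pow n
    -- per-k dimension estimate
    have hdim : ∀ k : ℕ, 1 ≤ k → 1 / ∏ i, μ i ≤
        (Nat.factorial n * Module.finrank K (MvPolynomial (Fin n) K ⧸ a ^ k) : ℝ) / (k : ℝ) ^ n := by
      intro k hk
      obtain ⟨hmodfin, _⟩ := hfin k hk
      set Sk : Set (Fin n →₀ ℕ) := {u | ∑ i, μ i * u i < (k:ℝ)} with hSk
      set Fk : Set (Fin n → ℕ) := {u | ∑ i, μ i * u i < (k:ℝ)} with hFk
      have hFkfin : Fk.Finite := simplexFinite n μ hμpos k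
      have himg : (fun v : Fin n →₀ ℕ => (v : Fin n → ℕ)) '' Sk = Fk := by
        apply Set.Subset.antisymm
        · rintro x ⟨v, hv, rfl⟩
          exact hv
        · intro u hu
          exact ⟨Finsupp.equivFunOnFinite.symm u, by
            exact hu, by
            simp [Finsupp.equivFunOnFinite]⟩
      have hcoeinj : Function.Injective (fun v : Fin n →₀ ℕ => (v : Fin n → ℕ)) :=
        DFunLike.coe_injective
      have hSkfin : Sk.Finite := by
        have heq : Sk = (fun v : Fin n →₀ ℕ => (v : Fin n → ℕ)) ⁻¹' Fk := rfl
        rw [heq]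
        exact Set.Finite.preimage hcoeinj.injOn hFkfin
      have hSkcard : Sk.ncard = Fk.ncard := by
        rw [← himg, Set.ncard_image_of_injective _ hcoeinj]
      have hkpow : (0:ℝ) < (k:ℝ) := by exact_mod_cast hk
      have hle1 : ((k:ℝ)) ^ n ≤ (Nat.factorial n) * ((∏ i, μ i) * Fk.ncard) :=
        simplex_ncard n μ hμpos k hkpow
      have hdisj : ∀ f ∈ a ^ k, (∀ u ∈ f.support, u ∈ Sk) → f = 0 := by
        intro f hf hsupp
        by_contra hf0
        obtain ⟨u, hu⟩ := support_nonempty.2 hf0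
        have h1 := pow_support_bound hmon μ (fun i => (hμpos i).le) hμT k f hf u hu
        have h2 := hsupp u hu
        rw [hSk, Set.mem_setOf_eq] at h2
        linarith
      haveI := hmodfin
      have hle2 : Sk.ncard ≤ Module.finrank K (MvPolynomial (Fin n) K ⧸ a ^ k) :=
        ncard_le_finrank (a ^ k) Sk hSkfin hdisj
      have hkn : (0:ℝ) < (k:ℝ) ^ n := by positivity
      rw [div_le_div_iff₀ hprodpos hkn]
      have hfact : (0:ℝ) < (Nat.factorial n : ℝ) := by
        exact_mod_cast Nat.factorial_pos n
      have hstep : ((Sk.ncard : ℕ) : ℝ)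
          ≤ ((Module.finrank K (MvPolynomial (Fin n) K ⧸ a ^ k) : ℕ) : ℝ) :=
        Nat.cast_le.2 hle2
      have hc1 : ((k:ℝ)) ^ n ≤ (Nat.factorial n : ℝ) * ((∏ i, μ i) * ((Sk.ncard : ℕ) : ℝ)) := by
        rw [hSkcard]
        exact hle1
      have hc2 : (Nat.factorial n : ℝ) * ((∏ i, μ i) * ((Sk.ncard : ℕ) : ℝ))
          ≤ (Nat.factorial n : ℝ) * ((∏ i, μ i) *
            ((Module.finrank K (MvPolynomial (Fin n) K ⧸ a ^ k) : ℕ) : ℝ)) := by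
        apply mul_le_mul_of_nonneg_left _ hfact.le
        exact mul_le_mul_of_nonneg_left hstep hprodpos.le
      calc 1 * (k:ℝ) ^ n = (k:ℝ) ^ n := one_mul _
        _ ≤ (Nat.factorial n : ℝ) * ((∏ i, μ i) *
              ((Module.finrank K (MvPolynomial (Fin n) K ⧸ a ^ k) : ℕ) : ℝ)) :=
            le_trans hc1 hc2
        _ = (Nat.factorial n : ℝ) *
              ((Module.finrank K (MvPolynomial (Fin n) K ⧸ a ^ k) : ℕ) : ℝ) * ∏ i, μ i := by
            ring
    -- conclude via limsup
    have hfreq : ∃ᶠ k : ℕ in atTop, 1 / ∏ i, μ i ≤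
        (Nat.factorial n * Module.finrank K (MvPolynomial (Fin n) K ⧸ a ^ k) : ℝ) / (k : ℝ) ^ n :=
      (Filter.eventually_atTop.2 ⟨1, hdim⟩).frequently
    have hlimsup := Filter.le_limsup_of_frequently_le hfreq hbound
    calc ((n:ℝ) * s) ^ n ≤ 1 / ∏ i, μ i := hkey
      _ ≤ _ := hlimsup
  -- pass to the limit s → t⁻
  have hlim : Filter.Tendsto (fun s : ℝ => ((n:ℝ) * s) ^ n) (nhdsWithin t (Set.Iio t))
      (nhds (((n:ℝ) * t) ^ n)) := by
    apply Filter.Tendsto.mono_left _ nhdsWithin_le_nhds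
    exact Continuous.tendsto (by continuity) t
  have hev : ∀ᶠ s in nhdsWithin t (Set.Iio t), ((n:ℝ) * s) ^ n ≤ polyMult a := by
    filter_upwards [Ioo_mem_nhdsLT_of_mem (Set.mem_Ioc.2 ⟨htpos, le_refl t⟩)] with s hs
    exact hmain s hs.1 hs.2
  exact le_of_tendsto hlim hev
end
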